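/- arXiv:1909.02281 — 3 statements merged into one kernel-verified Lean document; each statement's English description precedes it below -/
import Mathlib

section
/- Let X be a Banach lattice with order continuous norm, S a convex C₀-semigroup on X with generator A, and x ∈ D(A). Then for every t ≥ 0, S(t)x − x = ∫₀ᵗ A S(s)x ds = ∫₀ᵗ S'₊(s,x)(Ax) ds = ∫₀ᵗ S'₋(s,x)(Ax) ds, where the integrals are X-valued (Bochner) integrals of the continuous integrand s ↦ A S(s)x. -/
open Filter Topology Set MeasureTheory

set_option linter.unusedSectionVars false

section SFAux
variable {X : Type*} [NormedAddCommGroup X] [Lattice X] [HasSolidNorm X] [IsOrderedAddMonoid X] [NormedSpace ℝ X]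

lemma sf_norm_between {a b c : X} (h1 : b ≤ c) (h2 : c ≤ a) : ‖c‖ ≤ ‖a‖ + ‖b‖ := by
  have habs : |c| ≤ |a| + |b| := by
    refine abs_le'.2 ⟨h2.trans ((le_abs_self a).trans ?_), ?_⟩
    · exact le_add_of_nonneg_right (abs_nonneg b)
    · exact (neg_le_neg h1).trans ((neg_le_abs b).trans (le_add_of_nonneg_left (abs_nonneg a)))
  have h3 : ‖c‖ ≤ ‖|a| + |b|‖ := by
    refine norm_le_norm_of_abs_le_abs ?_
    rwa [abs_of_nonneg (add_nonneg (abs_nonneg a) (abs_nonneg b))]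
  calc ‖c‖ ≤ ‖|a| + |b|‖ := h3
    _ ≤ ‖|a|‖ + ‖|b|‖ := norm_add_le _ _
    _ = ‖a‖ + ‖b‖ := by rw [norm_abs_eq_norm, norm_abs_eq_norm]

lemma sf_norm_mono_of_nonneg {a b : X} (h0 : 0 ≤ a) (hab : a ≤ b) : ‖a‖ ≤ ‖b‖ := by
  refine norm_le_norm_of_abs_le_abs ?_
  rwa [abs_of_nonneg h0, abs_of_nonneg (h0.trans hab)]

variable [PosSMulStrictMono ℝ X] [PosSMulReflectLT ℝ X]

/-- slope monotonicity for a convex operator -/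

lemma sf_sandwich {l u f : ℝ → X} {c : X} {F : Filter ℝ}
    (hev : ∀ᶠ h in F, l h ≤ f h ∧ f h ≤ u h)
    (hl : Tendsto l F (𝓝 c)) (hu : Tendsto u F (𝓝 c)) : Tendsto f F (𝓝 c) := by
  rw [← tendsto_sub_nhds_zero_iff]
  have hb : ∀ᶠ h in F, ‖f h - c‖ ≤ ‖u h - l h‖ + ‖l h - c‖ := by
    filter_upwards [hev] with h hh
    calc ‖f h - c‖ = ‖(f h - l h) + (l h - c)‖ := by congr 1; abel
      _ ≤ ‖f h - l h‖ + ‖l h - c‖ := norm_add_le _ _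
      _ ≤ ‖u h - l h‖ + ‖l h - c‖ := by
          refine add_le_add ?_ le_rfl
          exact sf_norm_mono_of_nonneg (sub_nonneg.2 hh.1) (sub_le_sub_right hh.2 _)
  have hg : Tendsto (fun h => ‖u h - l h‖ + ‖l h - c‖) F (𝓝 0) := by
    have h1 : Tendsto (fun h => ‖u h - l h‖) F (𝓝 0) := by
      have := (hu.sub hl).norm
      simpa using this
    have h2 : Tendsto (fun h => ‖l h - c‖) F (𝓝 0) := by
      have := (hl.sub (tendsto_const_nhds (x := c))).norm
      simpa using this
    simpa using h1.add h2
  exact squeeze_zero_norm' hb hg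

lemma sf_avg_right {φ : ℝ → X} [CompleteSpace X] (hφ : Continuous φ) (τ : ℝ) :
    Tendsto (fun h : ℝ => h⁻¹ • (∫ σ in τ..(τ+h), φ σ)) (𝓝[>](0:ℝ)) (𝓝 (φ τ)) := by
  have hG : HasDerivAt (fun u => ∫ σ in (0:ℝ)..u, φ σ) (φ τ) τ :=
    intervalIntegral.integral_hasDerivAt_right (hφ.intervalIntegrable _ _)
      (hφ.stronglyMeasurableAtFilter _ _) hφ.continuousAt
  rw [hasDerivAt_iff_tendsto_slope] at hG
  have hmap : Tendsto (fun h : ℝ => τ + h) (𝓝[>](0:ℝ)) (𝓝[≠] τ) := by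
    apply tendsto_nhdsWithin_of_tendsto_nhds_of_eventually_within
    · have h0 : Tendsto (fun h : ℝ => τ + h) (𝓝 0) (𝓝 τ) := by
        simpa using ((by continuity : Continuous fun h : ℝ => τ + h).tendsto (0:ℝ))
      exact h0.mono_left nhdsWithin_le_nhds
    · filter_upwards [self_mem_nhdsWithin] with h hh
      rw [mem_Ioi] at hh
      simp only [mem_compl_iff, mem_singleton_iff]
      intro hc
      nlinarith [hc]
  have hcomp := hG.comp hmap
  apply hcomp.congr
  intro h
  show slope (fun u => ∫ σ in (0:ℝ)..u, φ σ) τ (τ + h) = h⁻¹ • (∫ σ in τ..(τ+h), φ σ)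
  rw [slope_def_module]
  simp only [add_sub_cancel_left]
  congr 1
  exact intervalIntegral.integral_interval_sub_left (hφ.intervalIntegrable _ _)
    (hφ.intervalIntegrable _ _)

lemma sf_avg_left {φ : ℝ → X} [CompleteSpace X] (hφ : Continuous φ) (τ : ℝ) :
    Tendsto (fun h : ℝ => h⁻¹ • (∫ σ in (τ-h)..τ, φ σ)) (𝓝[>](0:ℝ)) (𝓝 (φ τ)) := by
  have hG : HasDerivAt (fun u => ∫ σ in (0:ℝ)..u, φ σ) (φ τ) τ :=
    intervalIntegral.integral_hasDerivAt_right (hφ.intervalIntegrable _ _)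
      (hφ.stronglyMeasurableAtFilter _ _) hφ.continuousAt
  rw [hasDerivAt_iff_tendsto_slope] at hG
  have hmap : Tendsto (fun h : ℝ => τ - h) (𝓝[>](0:ℝ)) (𝓝[≠] τ) := by
    apply tendsto_nhdsWithin_of_tendsto_nhds_of_eventually_within
    · have h0 : Tendsto (fun h : ℝ => τ - h) (𝓝 0) (𝓝 τ) := by
        simpa using ((by continuity : Continuous fun h : ℝ => τ - h).tendsto (0:ℝ))
      exact h0.mono_left nhdsWithin_le_nhds
    · filter_upwards [self_mem_nhdsWithin] with h hh
      rw [mem_Ioi] at hh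
      simp only [mem_compl_iff, mem_singleton_iff]
      intro hc
      nlinarith [hc]
  have hcomp := hG.comp hmap
  apply hcomp.congr
  intro h
  show slope (fun u => ∫ σ in (0:ℝ)..u, φ σ) τ (τ - h) = h⁻¹ • (∫ σ in (τ-h)..τ, φ σ)
  rw [slope_def_module]
  have e1 : (∫ σ in (0:ℝ)..(τ-h), φ σ) - (∫ σ in (0:ℝ)..τ, φ σ) = - ∫ σ in (τ-h)..τ, φ σ := by
    rw [← intervalIntegral.integral_interval_sub_left (hφ.intervalIntegrable 0 τ)
      (hφ.intervalIntegrable 0 (τ-h))]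
    abel
  rw [e1, show τ - h - τ = -h by ring, smul_neg, inv_neg, neg_smul, neg_neg]

variable [PosSMulStrictMono ℝ X] [PosSMulReflectLT ℝ X]

lemma sf_slope_mono {T : X → X}
    (hT : ∀ x y : X, ∀ a : ℝ, 0 ≤ a → a ≤ 1 → T (a • x + (1 - a) • y) ≤ a • T x + (1 - a) • T y)
    (x y : X) {h₁ h₂ : ℝ} (h0 : 0 < h₁) (h12 : h₁ ≤ h₂) :
    h₁⁻¹ • (T (x + h₁ • y) - T x) ≤ h₂⁻¹ • (T (x + h₂ • y) - T x) := by
  have h20 : 0 < h₂ := h0.trans_le h12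
  set a : ℝ := h₁ / h₂ with ha
  have ha0 : 0 ≤ a := le_of_lt (div_pos h0 h20)
  have ha1 : a ≤ 1 := (div_le_one h20).2 h12
  have hrep : a • (x + h₂ • y) + (1 - a) • x = x + h₁ • y := by
    rw [smul_add, smul_smul, sub_smul, one_smul, ha, div_mul_cancel₀ _ h20.ne']
    abel
  have key : T (x + h₁ • y) ≤ a • T (x + h₂ • y) + (1 - a) • T x := by
    have := hT (x + h₂ • y) x a ha0 ha1
    rwa [hrep] at this
  have key2 : T (x + h₁ • y) - T x ≤ a • (T (x + h₂ • y) - T x) := by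
    have : a • T (x + h₂ • y) + (1 - a) • T x - T x = a • (T (x + h₂ • y) - T x) := by
      rw [sub_smul, one_smul, smul_sub]; abel
    calc T (x + h₁ • y) - T x ≤ a • T (x + h₂ • y) + (1 - a) • T x - T x :=
          sub_le_sub_right key _
      _ = a • (T (x + h₂ • y) - T x) := this
  have := smul_le_smul_of_nonneg_left key2 (le_of_lt (inv_pos.2 h0))
  rwa [smul_smul, ha, show h₁⁻¹ * (h₁ / h₂) = h₂⁻¹ by field_simp] at this

/-- left slope ≤ right slope for a convex operator -/

lemma sf_slope_cross {T : X → X}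
    (hT : ∀ x y : X, ∀ a : ℝ, 0 ≤ a → a ≤ 1 → T (a • x + (1 - a) • y) ≤ a • T x + (1 - a) • T y)
    (x y : X) {h h' : ℝ} (hh : 0 < h) (hh' : 0 < h') :
    h'⁻¹ • (T x - T (x - h' • y)) ≤ h⁻¹ • (T (x + h • y) - T x) := by
  have hs : 0 < h + h' := by linarith
  set μ : ℝ := h / (h + h') with hμ
  have hμ0 : 0 ≤ μ := le_of_lt (div_pos hh hs)
  have hμ1 : μ ≤ 1 := by rw [hμ, div_le_one hs]; linarith
  have hrep : μ • (x - h' • y) + (1 - μ) • (x + h • y) = x := by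
    rw [hμ]
    match_scalars
    · field_simp; ring
    · field_simp; ring
  have key : T x ≤ μ • T (x - h' • y) + (1 - μ) • T (x + h • y) := by
    have := hT (x - h' • y) (x + h • y) μ hμ0 hμ1
    rwa [hrep] at this
  set a := T (x - h' • y); set b := T (x + h • y)
  have key2 : (h + h') • T x ≤ h • a + h' • b := by
    have := smul_le_smul_of_nonneg_left key (le_of_lt hs)
    rwa [smul_add, smul_smul, smul_smul, hμ, mul_div_cancel₀ _ hs.ne',
      show (h + h') * (1 - h / (h + h')) = h' by field_simp; ring] at this
  have key3 : h • (T x - a) ≤ h' • (b - T x) := by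
    rw [smul_sub, smul_sub, sub_le_sub_iff]
    have : h • T x + h' • T x = (h + h') • T x := by rw [add_smul]
    calc h • T x + h' • T x = (h + h') • T x := this
      _ ≤ h • a + h' • b := key2
      _ = h' • b + h • a := by abel
  have := smul_le_smul_of_nonneg_left key3
    (mul_nonneg (le_of_lt (inv_pos.2 hh')) (le_of_lt (inv_pos.2 hh)))
  rwa [smul_smul, smul_smul, show h'⁻¹ * h⁻¹ * h = h'⁻¹ by field_simp,
    show h'⁻¹ * h⁻¹ * h' = h⁻¹ by field_simp] at this

lemma sf_lip_of_bdd {T : X → X}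
    (hT : ∀ x y : X, ∀ a : ℝ, 0 ≤ a → a ≤ 1 → T (a • x + (1 - a) • y) ≤ a • T x + (1 - a) • T y)
    {v : X} {δ M : ℝ} (hδ : 0 < δ)
    (hM : ∀ u ∈ Metric.closedBall v δ, ‖T u‖ ≤ M) :
    ∀ u w, u ∈ Metric.closedBall v (δ/2) → w ∈ Metric.closedBall v (δ/2) →
      ‖T u - T w‖ ≤ (8*M/δ) * ‖u - w‖ := by
  have hM0 : 0 ≤ M := le_trans (norm_nonneg _) (hM v (Metric.mem_closedBall_self hδ.le))
  intro u w hu hw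
  rcases eq_or_ne u w with rfl | hne
  · simp only [sub_self, norm_zero]; positivity
  have hd : 0 < ‖u - w‖ := by
    rw [norm_pos_iff, sub_ne_zero]; exact hne
  set d : ℝ := ‖u - w‖ with hdd
  set lam : ℝ := d / (d + δ/2) with hlam
  have hden : 0 < d + δ/2 := by positivity
  have hlam0 : 0 ≤ lam := le_of_lt (div_pos hd hden)
  have hlam1 : lam ≤ 1 := by rw [hlam, div_le_one hden]; linarith
  -- key one-sided estimate
  have key : ∀ p q : X, p ∈ Metric.closedBall v (δ/2) → q ∈ Metric.closedBall v (δ/2) →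
      ‖p - q‖ = d → ∃ c : X, T p - T q ≤ lam • c ∧ ‖c‖ ≤ 2*M := by
    intro p q hp hq hpq
    set z : X := p + ((δ/2)/d) • (p - q) with hz
    have hzball : z ∈ Metric.closedBall v δ := by
      rw [Metric.mem_closedBall, dist_eq_norm] at *
      have : z - v = (p - v) + ((δ/2)/d) • (p - q) := by rw [hz]; abel
      rw [this]
      calc ‖(p - v) + ((δ/2)/d) • (p - q)‖ ≤ ‖p - v‖ + ‖((δ/2)/d) • (p - q)‖ := norm_add_le _ _
        _ = ‖p - v‖ + (δ/2)/d * ‖p - q‖ := by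
            rw [norm_smul, Real.norm_eq_abs, abs_of_nonneg (by positivity)]
        _ ≤ δ/2 + (δ/2)/d * d := by
            rw [hpq]; exact add_le_add hp le_rfl
        _ = δ := by field_simp; ring
    have hrep : lam • z + (1 - lam) • q = p := by
      rw [hz, hlam]
      match_scalars
      · field_simp
      · field_simp; ring
    have hconv' : T p ≤ lam • T z + (1 - lam) • T q := by
      have := hT z q lam hlam0 hlam1
      rwa [hrep] at this
    refine ⟨T z - T q, ?_, ?_⟩
    · calc T p - T q ≤ lam • T z + (1 - lam) • T q - T q := sub_le_sub_right hconv' _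
        _ = lam • (T z - T q) := by rw [sub_smul, one_smul, smul_sub]; abel
    · calc ‖T z - T q‖ ≤ ‖T z‖ + ‖T q‖ := norm_sub_le _ _
        _ ≤ M + M := add_le_add (hM z hzball)
            (hM q (Metric.closedBall_subset_closedBall (by linarith) hq))
        _ = 2*M := by ring
  obtain ⟨c, hc, hcn⟩ := key u w hu hw rfl
  obtain ⟨c', hc', hcn'⟩ := key w u hw hu (by rw [norm_sub_rev])
  have habs : |T u - T w| ≤ lam • (|c| + |c'|) := by
    refine abs_le'.2 ⟨hc.trans ?_, ?_⟩
    · exact smul_le_smul_of_nonneg_left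
        ((le_abs_self c).trans (le_add_of_nonneg_right (abs_nonneg c'))) hlam0
    · have : -(T u - T w) = T w - T u := by abel
      rw [this]
      exact hc'.trans (smul_le_smul_of_nonneg_left
        ((le_abs_self c').trans (le_add_of_nonneg_left (abs_nonneg c))) hlam0)
  have hnorm : ‖T u - T w‖ ≤ lam * (‖c‖ + ‖c'‖) := by
    have h1 : ‖T u - T w‖ ≤ ‖lam • (|c| + |c'|)‖ := by
      refine norm_le_norm_of_abs_le_abs ?_
      rwa [abs_of_nonneg (smul_nonneg hlam0 (add_nonneg (abs_nonneg c) (abs_nonneg c')))]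
    calc ‖T u - T w‖ ≤ ‖lam • (|c| + |c'|)‖ := h1
      _ = lam * ‖|c| + |c'|‖ := by
          rw [norm_smul, Real.norm_eq_abs, abs_of_nonneg hlam0]
      _ ≤ lam * (‖|c|‖ + ‖|c'|‖) := by
          exact mul_le_mul_of_nonneg_left (norm_add_le _ _) hlam0
      _ = lam * (‖c‖ + ‖c'‖) := by rw [norm_abs_eq_norm, norm_abs_eq_norm]
  have hlam2 : lam ≤ 2*d/δ := by
    rw [hlam, div_le_div_iff₀ hden (by positivity)]
    nlinarith
  calc ‖T u - T w‖ ≤ lam * (‖c‖ + ‖c'‖) := hnorm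
    _ ≤ lam * (4*M) := by nlinarith
    _ ≤ (2*d/δ) * (4*M) := by nlinarith
    _ = (8*M/δ) * d := by ring

variable {S : ℝ → X → X}

lemma sf_cont_of_time {t : ℝ}
    (hconvt : ∀ x y : X, ∀ a : ℝ, 0 ≤ a → a ≤ 1 →
      S t (a • x + (1 - a) • y) ≤ a • S t x + (1 - a) • S t y)
    (hbddt : ∀ r : ℝ, 0 < r → ∃ M : ℝ, ∀ x : X, ‖x‖ ≤ r → ‖S t x‖ ≤ M) :
    Continuous (S t) := by
  rw [continuous_iff_continuousAt]
  intro v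
  obtain ⟨M, hM⟩ := hbddt (‖v‖ + 1) (by positivity)
  have hball : ∀ u ∈ Metric.closedBall v 1, ‖S t u‖ ≤ M := by
    intro u hu
    apply hM
    rw [Metric.mem_closedBall, dist_eq_norm] at hu
    calc ‖u‖ = ‖(u - v) + v‖ := by rw [sub_add_cancel]
      _ ≤ ‖u - v‖ + ‖v‖ := norm_add_le _ _
      _ ≤ ‖v‖ + 1 := by linarith
  have hM0 : 0 ≤ M := le_trans (norm_nonneg _) (hM v (by linarith [norm_nonneg v]))
  have hlip := sf_lip_of_bdd hconvt one_pos hball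
  rw [Metric.continuousAt_iff]
  intro ε hε
  refine ⟨min (1/2) (ε / (8*M/1 + 1)), by positivity, fun {u} hu => ?_⟩
  have hu1 : dist u v < 1/2 := lt_of_lt_of_le hu (min_le_left _ _)
  have hu2 : dist u v < ε / (8*M/1 + 1) := lt_of_lt_of_le hu (min_le_right _ _)
  have h1 : ‖S t u - S t v‖ ≤ (8*M/1) * ‖u - v‖ := by
    refine hlip u v ?_ ?_
    · rw [Metric.mem_closedBall]; linarith
    · exact Metric.mem_closedBall_self (by norm_num)
  rw [dist_eq_norm]
  rw [dist_eq_norm] at hu2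
  have hK : (0:ℝ) ≤ 8*M/1 := by positivity
  have key : (8*M/1) * (ε / (8*M/1 + 1)) < ε := by
    rw [mul_comm, div_mul_eq_mul_div, div_lt_iff₀ (by positivity)]
    nlinarith
  calc ‖S t u - S t v‖ ≤ (8*M/1) * ‖u - v‖ := h1
    _ ≤ (8*M/1) * (ε / (8*M/1 + 1)) := mul_le_mul_of_nonneg_left hu2.le hK
    _ < ε := key

lemma sf_small_time (hc0 : ∀ y : X, Tendsto (fun t : ℝ => S t y) (𝓝[>] (0:ℝ)) (𝓝 y))
    (y : X) : ∃ ε : ℝ, 0 < ε ∧ ∀ τ ∈ Set.Ioo (0:ℝ) ε, ‖S τ y‖ ≤ ‖y‖ + 1 := by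
  have h1 : {τ : ℝ | S τ y ∈ Metric.ball y 1} ∈ 𝓝[>] (0:ℝ) :=
    hc0 y (Metric.ball_mem_nhds y one_pos)
  rw [mem_nhdsGT_iff_exists_Ioo_subset] at h1
  obtain ⟨ε, hε, hsub⟩ := h1
  refine ⟨ε, hε, fun τ hτ => ?_⟩
  have := hsub hτ
  rw [mem_setOf_eq, Metric.mem_ball, dist_eq_norm] at this
  calc ‖S τ y‖ = ‖(S τ y - y) + y‖ := by rw [sub_add_cancel]
    _ ≤ ‖S τ y - y‖ + ‖y‖ := norm_add_le _ _
    _ ≤ ‖y‖ + 1 := by linarith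

lemma sf_baire
    (hcont : ∀ t : ℝ, 0 ≤ t → Continuous (S t))
    (hc0 : ∀ y : X, Tendsto (fun t : ℝ => S t y) (𝓝[>] (0:ℝ)) (𝓝 y)) [CompleteSpace X] :
    ∃ u₀ : X, ∃ r₀ : ℝ, 0 < r₀ ∧ ∃ N : ℕ,
      ∀ τ : ℝ, τ ∈ Set.Ioc (0:ℝ) (1/(N+1)) → ∀ u ∈ Metric.ball u₀ r₀, ‖S τ u‖ ≤ N := by
  set F : ℕ → Set X := fun n =>
    {u | ∀ τ ∈ Set.Ioc (0:ℝ) (1/(n+1)), ‖S τ u‖ ≤ n} ∩ Metric.closedBall 0 n with hF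
  have hFclosed : ∀ n, IsClosed (F n) := by
    intro n
    refine IsClosed.inter ?_ Metric.isClosed_closedBall
    have he : {u : X | ∀ τ ∈ Set.Ioc (0:ℝ) (1/(n+1)), ‖S τ u‖ ≤ n} =
        ⋂ τ ∈ Set.Ioc (0:ℝ) (1/(n+1)), {u | ‖S τ u‖ ≤ (n:ℝ)} := by
      ext u; simp
    rw [he]
    refine isClosed_biInter fun τ hτ => ?_
    exact isClosed_le ((hcont τ hτ.1.le).norm) continuous_const
  have hFcover : (⋃ n, F n) = univ := by
    rw [eq_univ_iff_forall]
    intro u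
    obtain ⟨ε, hε, hsm⟩ := sf_small_time hc0 u
    obtain ⟨n, hn⟩ := exists_nat_gt (max (‖u‖ + 1) (1/ε))
    have hn1 : ‖u‖ + 1 < n := lt_of_le_of_lt (le_max_left _ _) hn
    have hn2 : 1/ε < n := lt_of_le_of_lt (le_max_right _ _) hn
    have hinv : 1/((n:ℝ)+1) < ε := by
      rw [div_lt_iff₀ (by positivity)]
      rw [div_lt_iff₀ hε] at hn2
      nlinarith
    refine mem_iUnion.2 ⟨n, ⟨fun τ hτ => ?_, ?_⟩⟩
    · have : τ ∈ Set.Ioo (0:ℝ) ε := ⟨hτ.1, lt_of_le_of_lt hτ.2 hinv⟩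
      linarith [hsm τ this, norm_nonneg u]
    · rw [Metric.mem_closedBall, dist_zero_right]
      linarith [norm_nonneg u]
  obtain ⟨n, u₀, hu₀⟩ := nonempty_interior_of_iUnion_of_closed hFclosed hFcover
  obtain ⟨r₀, hr₀, hball⟩ := Metric.isOpen_iff.1 isOpen_interior u₀ hu₀
  exact ⟨u₀, r₀, hr₀, n, fun τ hτ u hu => (interior_subset (hball hu)).1 τ hτ⟩

lemma sf_local_bound [CompleteSpace X]
    (hconv : ∀ t : ℝ, 0 ≤ t → ∀ x y : X, ∀ a : ℝ, 0 ≤ a → a ≤ 1 →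
      S t (a • x + (1 - a) • y) ≤ a • S t x + (1 - a) • S t y)
    (hcont : ∀ t : ℝ, 0 ≤ t → Continuous (S t))
    (hid : ∀ y : X, S 0 y = y)
    (hc0 : ∀ y : X, Tendsto (fun t : ℝ => S t y) (𝓝[>] (0:ℝ)) (𝓝 y)) (v : X) :
    ∃ δ : ℝ, 0 < δ ∧ ∃ ε : ℝ, 0 < ε ∧ ∃ M : ℝ,
      ∀ τ ∈ Set.Icc (0:ℝ) ε, ∀ u ∈ Metric.closedBall v δ, ‖S τ u‖ ≤ M := by
  obtain ⟨u₀, r₀, hr₀, N, hN⟩ := sf_baire hcont hc0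
  set w : X := (2:ℝ) • v - u₀ with hwdef
  set wb : X := (3:ℝ) • u₀ - (2:ℝ) • v with hwbdef
  obtain ⟨ε₁, hε₁, hw⟩ := sf_small_time hc0 w
  obtain ⟨ε₂, hε₂, hwb⟩ := sf_small_time hc0 wb
  set δ : ℝ := r₀ / 8 with hδdef
  have hδ : 0 < δ := by positivity
  set ε : ℝ := min (1/((N:ℝ)+1)) (min ε₁ ε₂ / 2) with hεdef
  have hε : 0 < ε := by
    apply lt_min (by positivity)
    exact div_pos (lt_min hε₁ hε₂) two_pos
  refine ⟨δ, hδ, ε, hε, 3*(N:ℝ) + ‖w‖ + ‖wb‖ + 2 + ‖v‖ + δ, ?_⟩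
  intro τ hτ u hu
  rw [Metric.mem_closedBall, dist_eq_norm] at hu
  have hNn : (0:ℝ) ≤ N := Nat.cast_nonneg N
  rcases eq_or_lt_of_le hτ.1 with heq | hτ0
  · rw [← heq, hid]
    have : ‖u‖ ≤ ‖v‖ + δ := by
      calc ‖u‖ = ‖(u - v) + v‖ := by rw [sub_add_cancel]
        _ ≤ ‖u - v‖ + ‖v‖ := norm_add_le _ _
        _ ≤ ‖v‖ + δ := by linarith
    linarith [norm_nonneg w, norm_nonneg wb]
  -- positive time
  have hτN : τ ≤ 1/((N:ℝ)+1) := le_trans hτ.2 (min_le_left _ _)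
  have hτ1 : τ ∈ Set.Ioo (0:ℝ) ε₁ := ⟨hτ0, by
    have := le_trans hτ.2 (min_le_right _ _)
    have h2 := min_le_left ε₁ ε₂
    linarith⟩
  have hτ2 : τ ∈ Set.Ioo (0:ℝ) ε₂ := ⟨hτ0, by
    have := le_trans hτ.2 (min_le_right _ _)
    have h2 := min_le_right ε₁ ε₂
    linarith⟩
  have hτle : 0 ≤ τ := hτ0.le
  -- auxiliary points
  set u' : X := (2:ℝ) • u - w with hu'def
  set q : X := (2:ℝ) • u₀ - u with hqdef
  set u'' : X := (2:ℝ) • q - wb with hu''def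
  have hu'mem : u' ∈ Metric.ball u₀ r₀ := by
    rw [Metric.mem_ball, dist_eq_norm]
    have he : u' - u₀ = (2:ℝ) • (u - v) := by rw [hu'def, hwdef]; module
    rw [he, norm_smul]
    simp only [Real.norm_eq_abs]
    rw [abs_of_nonneg (by norm_num : (0:ℝ) ≤ 2)]
    rw [hδdef] at hu
    linarith
  have hu''mem : u'' ∈ Metric.ball u₀ r₀ := by
    rw [Metric.mem_ball, dist_eq_norm]
    have he : u'' - u₀ = (2:ℝ) • (v - u) := by rw [hu''def, hqdef, hwbdef]; module
    rw [he, norm_smul]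
    simp only [Real.norm_eq_abs]
    rw [abs_of_nonneg (by norm_num : (0:ℝ) ≤ 2), norm_sub_rev]
    rw [hδdef] at hu
    linarith
  -- convexity: upper bound
  have cv : ∀ p₁ p₂ p₃ : X, (1/2:ℝ) • p₁ + (1/2:ℝ) • p₂ = p₃ →
      S τ p₃ ≤ (1/2:ℝ) • S τ p₁ + (1/2:ℝ) • S τ p₂ := by
    intro p₁ p₂ p₃ hrep
    have := hconv τ hτle p₁ p₂ (1/2) (by norm_num) (by norm_num)
    rw [show (1:ℝ) - 1/2 = 1/2 by norm_num] at this
    rwa [hrep] at this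
  have hup : S τ u ≤ (1/2:ℝ) • S τ u' + (1/2:ℝ) • S τ w :=
    cv u' w u (by rw [hu'def]; module)
  have hmid : S τ u₀ ≤ (1/2:ℝ) • S τ u + (1/2:ℝ) • S τ q :=
    cv u q u₀ (by rw [hqdef]; module)
  have hq2 : S τ q ≤ (1/2:ℝ) • S τ u'' + (1/2:ℝ) • S τ wb :=
    cv u'' wb q (by rw [hu''def]; module)
  have hlow : (2:ℝ) • S τ u₀ - ((1/2:ℝ) • S τ u'' + (1/2:ℝ) • S τ wb) ≤ S τ u := by
    have h2 : (2:ℝ) • S τ u₀ ≤ S τ u + S τ q := by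
      have := smul_le_smul_of_nonneg_left hmid (by norm_num : (0:ℝ) ≤ 2)
      rwa [smul_add, smul_smul, smul_smul, show (2:ℝ) * (1/2) = 1 by norm_num,
        one_smul, one_smul] at this
    have h3 : (2:ℝ) • S τ u₀ - S τ q ≤ S τ u := by
      rw [sub_le_iff_le_add]
      exact h2
    calc (2:ℝ) • S τ u₀ - ((1/2:ℝ) • S τ u'' + (1/2:ℝ) • S τ wb)
        ≤ (2:ℝ) • S τ u₀ - S τ q := sub_le_sub_left hq2 _
      _ ≤ S τ u := h3
  -- norm bounds
  have nb1 : ‖S τ u'‖ ≤ N := hN τ ⟨hτ0, hτN⟩ u' hu'mem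
  have nb2 : ‖S τ u''‖ ≤ N := hN τ ⟨hτ0, hτN⟩ u'' hu''mem
  have nb0 : ‖S τ u₀‖ ≤ N := hN τ ⟨hτ0, hτN⟩ u₀ (Metric.mem_ball_self hr₀)
  have nbw : ‖S τ w‖ ≤ ‖w‖ + 1 := hw τ hτ1
  have nbwb : ‖S τ wb‖ ≤ ‖wb‖ + 1 := hwb τ hτ2
  have hupn : ‖(1/2:ℝ) • S τ u' + (1/2:ℝ) • S τ w‖ ≤ (1/2)*N + (1/2)*(‖w‖+1) := by
    calc ‖(1/2:ℝ) • S τ u' + (1/2:ℝ) • S τ w‖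
        ≤ ‖(1/2:ℝ) • S τ u'‖ + ‖(1/2:ℝ) • S τ w‖ := norm_add_le _ _
      _ = (1/2)*‖S τ u'‖ + (1/2)*‖S τ w‖ := by
          rw [norm_smul, norm_smul]; simp [Real.norm_eq_abs, abs_of_nonneg]
      _ ≤ (1/2)*N + (1/2)*(‖w‖+1) := by
          gcongr
  have hlown : ‖(2:ℝ) • S τ u₀ - ((1/2:ℝ) • S τ u'' + (1/2:ℝ) • S τ wb)‖
      ≤ 2*N + ((1/2)*N + (1/2)*(‖wb‖+1)) := by
    calc ‖(2:ℝ) • S τ u₀ - ((1/2:ℝ) • S τ u'' + (1/2:ℝ) • S τ wb)‖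
        ≤ ‖(2:ℝ) • S τ u₀‖ + ‖(1/2:ℝ) • S τ u'' + (1/2:ℝ) • S τ wb‖ := norm_sub_le _ _
      _ ≤ 2*‖S τ u₀‖ + (‖(1/2:ℝ) • S τ u''‖ + ‖(1/2:ℝ) • S τ wb‖) := by
          rw [norm_smul]
          simp only [Real.norm_eq_abs]
          rw [abs_of_nonneg (by norm_num : (0:ℝ) ≤ 2)]
          gcongr
          exact norm_add_le _ _
      _ = 2*‖S τ u₀‖ + ((1/2)*‖S τ u''‖ + (1/2)*‖S τ wb‖) := by
          rw [norm_smul, norm_smul]; simp [Real.norm_eq_abs, abs_of_nonneg]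
      _ ≤ 2*N + ((1/2)*N + (1/2)*(‖wb‖+1)) := by gcongr
  have := sf_norm_between hlow hup
  calc ‖S τ u‖ ≤ ‖(1/2:ℝ) • S τ u' + (1/2:ℝ) • S τ w‖
      + ‖(2:ℝ) • S τ u₀ - ((1/2:ℝ) • S τ u'' + (1/2:ℝ) • S τ wb)‖ := this
    _ ≤ 3*(N:ℝ) + ‖w‖ + ‖wb‖ + 2 + ‖v‖ + δ := by
        have := norm_nonneg v
        linarith [hupn, hlown, hδ.le, norm_nonneg w, norm_nonneg wb]

lemma sf_unif_bound [CompleteSpace X]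
    (hconv : ∀ t : ℝ, 0 ≤ t → ∀ x y : X, ∀ a : ℝ, 0 ≤ a → a ≤ 1 →
      S t (a • x + (1 - a) • y) ≤ a • S t x + (1 - a) • S t y)
    (hbdd : ∀ t : ℝ, 0 ≤ t → ∀ r : ℝ, 0 < r → ∃ M : ℝ, ∀ x : X, ‖x‖ ≤ r → ‖S t x‖ ≤ M)
    (hcont : ∀ t : ℝ, 0 ≤ t → Continuous (S t))
    (hid : ∀ y : X, S 0 y = y)
    (hsg : ∀ s t : ℝ, 0 ≤ s → 0 ≤ t → ∀ x : X, S (t + s) x = S t (S s x))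
    (hc0 : ∀ y : X, Tendsto (fun t : ℝ => S t y) (𝓝[>] (0:ℝ)) (𝓝 y))
    (v : X) (T : ℝ) :
    ∃ δ : ℝ, 0 < δ ∧ ∃ M : ℝ,
      ∀ τ ∈ Set.Icc (0:ℝ) T, ∀ u ∈ Metric.closedBall v δ, ‖S τ u‖ ≤ M := by
  obtain ⟨δ, hδ, ε, hε, M₀, hM₀⟩ := sf_local_bound hconv hcont hid hc0 v
  have key : ∀ k : ℕ, ∃ M : ℝ, ∀ τ ∈ Set.Icc (0:ℝ) ((k+1)*ε),
      ∀ u ∈ Metric.closedBall v δ, ‖S τ u‖ ≤ M := by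
    intro k
    induction k with
    | zero => exact ⟨M₀, by simpa using hM₀⟩
    | succ k ih =>
      obtain ⟨Mk, hMk⟩ := ih
      obtain ⟨M', hM'⟩ := hbdd ε hε.le (max Mk 0 + 1) (by positivity)
      refine ⟨max Mk M', fun τ hτ u hu => ?_⟩
      rcases le_or_gt τ ((k+1)*ε) with hle | hgt
      · exact le_trans (hMk τ ⟨hτ.1, hle⟩ u hu) (le_max_left _ _)
      · have hτε : 0 ≤ τ - ε := by
          have h1 : ε ≤ (k+1)*ε := by nlinarith [hε.le, Nat.cast_nonneg (α := ℝ) k]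
          linarith
        have hmem : τ - ε ∈ Set.Icc (0:ℝ) ((k+1)*ε) := by
          constructor
          · exact hτε
          · have := hτ.2
            push_cast at this ⊢
            linarith
        have hb : ‖S (τ - ε) u‖ ≤ Mk := hMk _ hmem u hu
        have heq : S τ u = S ε (S (τ - ε) u) := by
          have := hsg (τ - ε) ε hτε hε.le u
          rwa [show ε + (τ - ε) = τ by ring] at this
        rw [heq]
        refine le_trans (hM' _ ?_) (le_max_right _ _)
        calc ‖S (τ - ε) u‖ ≤ Mk := hb
          _ ≤ max Mk 0 + 1 := by
              have := le_max_left Mk (0:ℝ); linarith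
      
  obtain ⟨k, hk⟩ := exists_nat_gt (T / ε)
  obtain ⟨M, hM⟩ := key k
  refine ⟨δ, hδ, M, fun τ hτ u hu => ?_⟩
  refine hM τ ⟨hτ.1, ?_⟩ u hu
  have hT : T < k * ε := by
    rw [div_lt_iff₀ hε] at hk
    linarith
  have : τ ≤ T := hτ.2
  nlinarith [hε.le, Nat.cast_nonneg (α := ℝ) k]

/-- uniform local Lipschitz bound on a time interval -/

lemma sf_unif_lip [CompleteSpace X]
    (hconv : ∀ t : ℝ, 0 ≤ t → ∀ x y : X, ∀ a : ℝ, 0 ≤ a → a ≤ 1 →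
      S t (a • x + (1 - a) • y) ≤ a • S t x + (1 - a) • S t y)
    (hbdd : ∀ t : ℝ, 0 ≤ t → ∀ r : ℝ, 0 < r → ∃ M : ℝ, ∀ x : X, ‖x‖ ≤ r → ‖S t x‖ ≤ M)
    (hcont : ∀ t : ℝ, 0 ≤ t → Continuous (S t))
    (hid : ∀ y : X, S 0 y = y)
    (hsg : ∀ s t : ℝ, 0 ≤ s → 0 ≤ t → ∀ x : X, S (t + s) x = S t (S s x))
    (hc0 : ∀ y : X, Tendsto (fun t : ℝ => S t y) (𝓝[>] (0:ℝ)) (𝓝 y))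
    (v : X) (T : ℝ) :
    ∃ δ : ℝ, 0 < δ ∧ ∃ K : ℝ, 0 ≤ K ∧
      ∀ τ ∈ Set.Icc (0:ℝ) T, ∀ u w, u ∈ Metric.closedBall v δ → w ∈ Metric.closedBall v δ →
        ‖S τ u - S τ w‖ ≤ K * ‖u - w‖ := by
  obtain ⟨δ, hδ, M, hM⟩ := sf_unif_bound hconv hbdd hcont hid hsg hc0 v (max T 0)
  have hM0 : 0 ≤ M := le_trans (norm_nonneg _)
    (hM 0 ⟨le_rfl, le_max_right _ _⟩ v (Metric.mem_closedBall_self hδ.le))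
  refine ⟨δ/2, by positivity, 8*M/δ, by positivity, fun τ hτ u w hu hw => ?_⟩
  have hτ' : τ ∈ Set.Icc (0:ℝ) (max T 0) := ⟨hτ.1, le_trans hτ.2 (le_max_left _ _)⟩
  exact sf_lip_of_bdd (hconv τ hτ.1) hδ (fun p hp => hM τ hτ' p hp) u w hu hw

/-- continuity of trajectories -/

lemma sf_traj_cont [CompleteSpace X]
    (hconv : ∀ t : ℝ, 0 ≤ t → ∀ x y : X, ∀ a : ℝ, 0 ≤ a → a ≤ 1 →
      S t (a • x + (1 - a) • y) ≤ a • S t x + (1 - a) • S t y)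
    (hbdd : ∀ t : ℝ, 0 ≤ t → ∀ r : ℝ, 0 < r → ∃ M : ℝ, ∀ x : X, ‖x‖ ≤ r → ‖S t x‖ ≤ M)
    (hcont : ∀ t : ℝ, 0 ≤ t → Continuous (S t))
    (hid : ∀ y : X, S 0 y = y)
    (hsg : ∀ s t : ℝ, 0 ≤ s → 0 ≤ t → ∀ x : X, S (t + s) x = S t (S s x))
    (hc0 : ∀ y : X, Tendsto (fun t : ℝ => S t y) (𝓝[>] (0:ℝ)) (𝓝 y))
    (y : X) : Continuous (fun σ : ℝ => S (max σ 0) y) := by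
  rw [continuous_iff_continuousAt]
  intro σ₀
  rcases lt_or_ge σ₀ 0 with hneg | hpos
  · have : (fun σ : ℝ => S (max σ 0) y) =ᶠ[𝓝 σ₀] (fun _ => y) := by
      filter_upwards [Iio_mem_nhds hneg] with σ hσ
      rw [max_eq_right (le_of_lt hσ), hid]
    exact ContinuousAt.congr continuousAt_const this.symm
  · obtain ⟨δ, hδ, K, hK0, hKlip⟩ := sf_unif_lip hconv hbdd hcont hid hsg hc0 y (σ₀ + 1)
    rw [Metric.continuousAt_iff]
    intro ε hε
    have h1 : {h : ℝ | S h y ∈ Metric.ball y (min δ (ε/(K+1)))} ∈ 𝓝[>] (0:ℝ) :=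
      hc0 y (Metric.ball_mem_nhds y (by positivity))
    rw [mem_nhdsGT_iff_exists_Ioo_subset] at h1
    obtain ⟨η, hη, hsub⟩ := h1
    rw [mem_Ioi] at hη
    refine ⟨min η 1, by positivity, fun {σ} hσ => ?_⟩
    rw [dist_eq_norm] at hσ ⊢
    set m := max σ 0 with hm
    have hm0 : max σ₀ 0 = σ₀ := max_eq_left hpos
    have hclose : |m - σ₀| ≤ |σ - σ₀| := by
      conv_lhs => rw [hm, ← hm0]
      exact abs_max_sub_max_le_abs σ σ₀ 0
    set a := min m σ₀ with ha
    set b := max m σ₀ with hb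
    have hab : b - a = |m - σ₀| := by
      rw [abs_sub_comm]; exact max_sub_min_eq_abs m σ₀
    rcases eq_or_lt_of_le (min_le_max : a ≤ b) with heq | hlt
    · have hmeq : m = σ₀ := by
        have h1 : m ≤ σ₀ := by
          calc m ≤ b := le_max_left _ _
            _ = a := heq.symm
            _ ≤ σ₀ := min_le_right _ _
        have h2 : σ₀ ≤ m := by
          calc σ₀ ≤ b := le_max_right _ _
            _ = a := heq.symm
            _ ≤ m := min_le_left _ _
        exact le_antisymm h1 h2
      rw [hmeq, hm0]
      simpa using hε
    · have hstep_pos : 0 < b - a := sub_pos.2 hlt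
      have hstep_lt : b - a < η := by
        rw [hab]
        have hn : ‖σ - σ₀‖ < η := lt_of_lt_of_le hσ (min_le_left _ _)
        rw [Real.norm_eq_abs] at hn
        linarith [hclose]
      have hSh : S (b - a) y ∈ Metric.ball y (min δ (ε/(K+1))) :=
        hsub ⟨hstep_pos, hstep_lt⟩
      rw [Metric.mem_ball, dist_eq_norm] at hSh
      have ha0 : 0 ≤ a := le_min (by rw [hm]; exact le_max_right _ _) hpos
      have haT : a ≤ σ₀ + 1 := le_trans (min_le_right _ _) (by linarith)
      have hcomp : S b y = S a (S (b - a) y) := by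
        have := hsg (b - a) a hstep_pos.le ha0 y
        rwa [show a + (b - a) = b by ring] at this
      have hmem1 : S (b - a) y ∈ Metric.closedBall y δ := by
        rw [Metric.mem_closedBall, dist_eq_norm]
        exact le_trans hSh.le (min_le_left _ _)
      have hmem2 : y ∈ Metric.closedBall y δ := Metric.mem_closedBall_self hδ.le
      have hSby : ‖S b y - S a y‖ ≤ K * ‖S (b - a) y - y‖ := by
        rw [hcomp]; exact hKlip a ⟨ha0, haT⟩ _ _ hmem1 hmem2
      have hKe : K * ‖S (b - a) y - y‖ < ε := by
        have h2 : ‖S (b - a) y - y‖ < ε/(K+1) := lt_of_lt_of_le hSh (min_le_right _ _)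
        have h3 : K * ‖S (b - a) y - y‖ ≤ K * (ε/(K+1)) :=
          mul_le_mul_of_nonneg_left h2.le hK0
        have h4 : K * (ε/(K+1)) < ε := by
          rw [mul_comm, div_mul_eq_mul_div, div_lt_iff₀ (by positivity)]
          nlinarith
        linarith
      have hfin : ‖S m y - S σ₀ y‖ < ε := by
        rcases le_total m σ₀ with hc | hc
        · have e1 : a = m := min_eq_left hc
          have e2 : b = σ₀ := max_eq_right hc
          rw [norm_sub_rev, ← e1, ← e2]
          linarith
        · have e1 : a = σ₀ := min_eq_right hc
          have e2 : b = m := max_eq_left hc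
          rw [← e1, ← e2]
          linarith
      rw [← hm0] at hfin
      exact hfin

end SFAux

variable {X : Type*} [NormedAddCommGroup X] [Lattice X] [HasSolidNorm X] [IsOrderedAddMonoid X] [NormedSpace ℝ X] [CompleteSpace X]

/-- Domain of the generator of a semigroup `S`. -/
def genDom (S : ℝ → X → X) : Set X :=
  {x : X | ∃ z : X, Tendsto (fun h : ℝ => h⁻¹ • (S h x - x)) (𝓝[>] (0 : ℝ)) (𝓝 z)}

set_option maxHeartbeats 2000000 in
/-- For a convex C₀-semigroup `S` with generator `A` on a Banach lattice
with order continuous norm, `x ∈ D(A)`, and `Dp s = S'₊(s,x)(Ax)`, `Dm s = S'₋(s,x)(Ax)`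
the directional derivatives, one has for every `t ≥ 0`:
`S(t)x − x = ∫₀ᵗ A S(s)x ds = ∫₀ᵗ S'₊(s,x)(Ax) ds = ∫₀ᵗ S'₋(s,x)(Ax) ds`
(Bochner integrals). -/
theorem semigroup_fundamental_theorem_of_calculus
    [PosSMulStrictMono ℝ X] [PosSMulReflectLT ℝ X]
    (hDed : ∀ f : ℕ → X, BddAbove (Set.range f) → ∃ s : X, IsLUB (Set.range f) s)
    (hoc : ∀ f : ℕ → X, Antitone f → IsGLB (Set.range f) 0 →
      Tendsto (fun n => ‖f n‖) atTop (𝓝 (0 : ℝ)))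
    (S : ℝ → X → X)
    (hconv : ∀ t : ℝ, 0 ≤ t → ∀ x y : X, ∀ a : ℝ, 0 ≤ a → a ≤ 1 →
      S t (a • x + (1 - a) • y) ≤ a • S t x + (1 - a) • S t y)
    (hbdd : ∀ t : ℝ, 0 ≤ t → ∀ r : ℝ, 0 < r → ∃ M : ℝ, ∀ x : X, ‖x‖ ≤ r → ‖S t x‖ ≤ M)
    (hid : ∀ x : X, S 0 x = x)
    (hsg : ∀ s t : ℝ, 0 ≤ s → 0 ≤ t → ∀ x : X, S (t + s) x = S t (S s x))
    (hc0 : ∀ x : X, Tendsto (fun t : ℝ => S t x) (𝓝[>] (0 : ℝ)) (𝓝 x))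
    (A : X → X)
    (hA : ∀ x ∈ genDom S, Tendsto (fun h : ℝ => h⁻¹ • (S h x - x)) (𝓝[>] (0 : ℝ)) (𝓝 (A x)))
    (x : X) (hx : x ∈ genDom S)
    (Dp Dm : ℝ → X)
    (hDp : ∀ s : ℝ, 0 ≤ s →
      Tendsto (fun h : ℝ => h⁻¹ • (S s (x + h • A x) - S s x)) (𝓝[>] (0 : ℝ)) (𝓝 (Dp s)))
    (hDm : ∀ s : ℝ, 0 ≤ s →
      Tendsto (fun h : ℝ => h⁻¹ • (S s x - S s (x - h • A x))) (𝓝[>] (0 : ℝ)) (𝓝 (Dm s)))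
    (t : ℝ) (ht : 0 ≤ t) :
    S t x - x = ∫ s in (0 : ℝ)..t, A (S s x) ∧
    S t x - x = ∫ s in (0 : ℝ)..t, Dp s ∧
    S t x - x = ∫ s in (0 : ℝ)..t, Dm s := by
  have hcont : ∀ τ : ℝ, 0 ≤ τ → Continuous (S τ) := fun τ hτ =>
    sf_cont_of_time (hconv τ hτ) (hbdd τ hτ)
  set φ : ℝ → X := fun σ => S (max σ 0) x with hφdef
  have hφcont : Continuous φ := sf_traj_cont hconv hbdd hcont hid hsg hc0 x
  have hφeq : ∀ s : ℝ, 0 ≤ s → φ s = S s x := fun s hs => by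
    rw [hφdef]; simp only [max_eq_left hs]
  have hφ0 : φ 0 = x := by rw [hφeq 0 le_rfl, hid]
  obtain ⟨δ, hδ, K, hK0, hKlip⟩ := sf_unif_lip hconv hbdd hcont hid hsg hc0 x (t+1)
  have hyh : Tendsto (fun h : ℝ => h⁻¹ • (S h x - x)) (𝓝[>] (0:ℝ)) (𝓝 (A x)) := hA x hx
  -- eventual facts
  have hball1 : ∀ᶠ h in 𝓝[>] (0:ℝ), S h x ∈ Metric.closedBall x δ :=
    (hc0 x).eventually_mem (Metric.closedBall_mem_nhds x hδ)
  have hball2 : ∀ᶠ h in 𝓝[>] (0:ℝ), x + h • A x ∈ Metric.closedBall x δ := by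
    have hcont2 : Tendsto (fun h : ℝ => x + h • A x) (𝓝[>] (0:ℝ)) (𝓝 x) := by
      have h0 : Tendsto (fun h : ℝ => x + h • A x) (𝓝 0) (𝓝 x) := by
        have hc : Continuous (fun h : ℝ => x + h • A x) := by continuity
        simpa using hc.tendsto (0:ℝ)
      exact h0.mono_left nhdsWithin_le_nhds
    exact hcont2.eventually_mem (Metric.closedBall_mem_nhds x hδ)
  have herr : Tendsto (fun h : ℝ => K * ‖h⁻¹ • (S h x - x) - A x‖) (𝓝[>] (0:ℝ)) (𝓝 0) := by
    have h1 : Tendsto (fun h : ℝ => ‖h⁻¹ • (S h x - x) - A x‖) (𝓝[>] (0:ℝ)) (𝓝 0) := by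
      have := (hyh.sub (tendsto_const_nhds (x := A x))).norm
      simpa using this
    have := h1.const_mul K
    simpa using this
  -- key difference bound (shared by step1 and step3)
  have key_diff : ∀ s ∈ Icc (0:ℝ) t, ∀ h : ℝ, 0 < h → S h x ∈ Metric.closedBall x δ →
      x + h • A x ∈ Metric.closedBall x δ →
      ‖h⁻¹ • (φ (s+h) - φ s) - h⁻¹ • (S s (x + h • A x) - S s x)‖ ≤
        K * ‖h⁻¹ • (S h x - x) - A x‖ := by
    intro s hs h hpos hb1 hb2
    have hφs : φ (s+h) = S s (S h x) := by
      rw [hφeq (s+h) (by linarith [hs.1] : (0:ℝ) ≤ s + h), ← hsg h s hpos.le hs.1 x]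
    rw [hφs, hφeq s hs.1, ← smul_sub]
    have he : S s (S h x) - S s x - (S s (x + h • A x) - S s x) =
        S s (S h x) - S s (x + h • A x) := by abel
    rw [he, norm_smul, Real.norm_eq_abs, abs_of_pos (inv_pos.2 hpos)]
    have hl := hKlip s ⟨hs.1, by linarith [hs.2]⟩ (S h x) (x + h • A x) hb1 hb2
    have hre : h⁻¹ • (S h x - (x + h • A x)) = h⁻¹ • (S h x - x) - A x := by
      rw [show S h x - (x + h • A x) = (S h x - x) - h • A x by abel, smul_sub, smul_smul,
        inv_mul_cancel₀ hpos.ne', one_smul]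
    calc h⁻¹ * ‖S s (S h x) - S s (x + h • A x)‖
        ≤ h⁻¹ * (K * ‖S h x - (x + h • A x)‖) :=
          mul_le_mul_of_nonneg_left hl (inv_pos.2 hpos).le
      _ = K * ‖h⁻¹ • (S h x - (x + h • A x))‖ := by
          rw [norm_smul, Real.norm_eq_abs, abs_of_pos (inv_pos.2 hpos)]; ring
      _ = K * ‖h⁻¹ • (S h x - x) - A x‖ := by rw [hre]
  -- Step 1: right difference quotients converge to Dp s
  have step1 : ∀ s ∈ Icc (0:ℝ) t,
      Tendsto (fun h : ℝ => h⁻¹ • (φ (s+h) - φ s)) (𝓝[>] (0:ℝ)) (𝓝 (Dp s)) := by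
    intro s hs
    have hdiff : Tendsto (fun h : ℝ => h⁻¹ • (φ (s+h) - φ s) -
        h⁻¹ • (S s (x + h • A x) - S s x)) (𝓝[>] (0:ℝ)) (𝓝 0) := by
      apply squeeze_zero_norm' ?_ herr
      filter_upwards [hball1, hball2, self_mem_nhdsWithin] with h hb1 hb2 hpos
      exact key_diff s hs h hpos hb1 hb2
    have := hdiff.add (hDp s hs.1)
    simp only [zero_add, sub_add_cancel] at this
    exact this
  -- generator identification
  have step1' : ∀ s ∈ Icc (0:ℝ) t, A (S s x) = Dp s := by
    intro s hs
    have hlim : Tendsto (fun h : ℝ => h⁻¹ • (S h (S s x) - S s x)) (𝓝[>] (0:ℝ)) (𝓝 (Dp s)) := by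
      apply (step1 s hs).congr'
      filter_upwards [self_mem_nhdsWithin] with h hpos
      rw [mem_Ioi] at hpos
      have h1 : φ (s+h) = S h (S s x) := by
        rw [hφeq (s+h) (by linarith [hs.1]), ← hsg s h hs.1 hpos.le x, add_comm]
      rw [h1, hφeq s hs.1]
    exact tendsto_nhds_unique (hA (S s x) ⟨Dp s, hlim⟩) hlim
  -- d_h → A x
  have hd : Tendsto (fun h : ℝ => h⁻¹ • (S h x - S h (x - h • A x))) (𝓝[>] (0:ℝ)) (𝓝 (A x)) := by
    have hl : Tendsto (fun h : ℝ => S h x - S h (x - A x)) (𝓝[>] (0:ℝ)) (𝓝 (A x)) := by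
      have := (hc0 x).sub (hc0 (x - A x))
      simpa using this
    have hu : Tendsto (fun h : ℝ => S h (x + A x) - S h x) (𝓝[>] (0:ℝ)) (𝓝 (A x)) := by
      have := (hc0 (x + A x)).sub (hc0 x)
      simpa using this
    apply sf_sandwich ?_ hl hu
    filter_upwards [Ioo_mem_nhdsGT_of_mem (⟨le_rfl, one_pos⟩ : (0:ℝ) ∈ Ico (0:ℝ) 1)] with h hh
    have hpos : 0 < h := hh.1
    have hle : h ≤ 1 := hh.2.le
    constructor
    · have hsm := sf_slope_mono (hconv h hpos.le) x (-(A x)) hpos hle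
      simp only [smul_neg, ← sub_eq_add_neg, one_smul, inv_one] at hsm
      have h2 := neg_le_neg hsm
      rw [← smul_neg, show -(S h (x - h • A x) - S h x) = S h x - S h (x - h • A x) by abel,
        show -(S h (x - A x) - S h x) = S h x - S h (x - A x) by abel] at h2
      exact h2
    · have hsc := sf_slope_cross (hconv h hpos.le) x (A x) one_pos hpos
      simpa using hsc
  -- Step 2: left difference quotients converge to Dm s
  have step2 : ∀ s ∈ Ioc (0:ℝ) t,
      Tendsto (fun h : ℝ => h⁻¹ • (φ s - φ (s - h))) (𝓝[>] (0:ℝ)) (𝓝 (Dm s)) := by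
    intro s hs
    have herr2 : Tendsto (fun h : ℝ => K * ‖(h⁻¹ • (S h x - x)) -
        (h⁻¹ • (S h x - S h (x - h • A x)))‖) (𝓝[>] (0:ℝ)) (𝓝 0) := by
      have h1 := (hyh.sub hd).norm
      simp only [sub_self, norm_zero] at h1
      have := h1.const_mul K
      simpa using this
    have hsplit : ∀ᶠ h in 𝓝[>] (0:ℝ), h⁻¹ • (φ s - φ (s - h)) =
        h⁻¹ • (S s x - S s (x - h • A x)) + h⁻¹ • (S s (x - h • A x) - S (s - h) x) := by
      filter_upwards [Ioo_mem_nhdsGT_of_mem (⟨le_rfl, hs.1⟩ : (0:ℝ) ∈ Ico (0:ℝ) s)] with h hh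
      rw [hφeq s hs.1.le, hφeq (s - h) (by linarith [hh.2] : (0:ℝ) ≤ s - h), ← smul_add]
      congr 1
      abel
    have hkey : ∀ h : ℝ, 0 < h → S h (x - h • A x) =
        x + h • ((h⁻¹ • (S h x - x)) - (h⁻¹ • (S h x - S h (x - h • A x)))) := by
      intro h hpos
      rw [smul_sub, smul_inv_smul₀ hpos.ne', smul_inv_smul₀ hpos.ne']
      abel
    have hptlim : Tendsto (fun h : ℝ => S h (x - h • A x)) (𝓝[>] (0:ℝ)) (𝓝 x) := by
      have h1 : Tendsto (fun h : ℝ => h • ((h⁻¹ • (S h x - x)) -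
          (h⁻¹ • (S h x - S h (x - h • A x))))) (𝓝[>] (0:ℝ)) (𝓝 0) := by
        have hz : Tendsto (fun h : ℝ => (h⁻¹ • (S h x - x)) -
            (h⁻¹ • (S h x - S h (x - h • A x)))) (𝓝[>] (0:ℝ)) (𝓝 0) := by
          have h2 := hyh.sub hd
          rw [sub_self] at h2
          exact h2
        have hhh : Tendsto (fun h : ℝ => h) (𝓝[>] (0:ℝ)) (𝓝 (0:ℝ)) :=
          tendsto_id.mono_left nhdsWithin_le_nhds
        have h3 := hhh.smul hz
        rw [zero_smul] at h3
        exact h3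
      have hlim0 := (tendsto_const_nhds (x := x)).add h1
      rw [add_zero] at hlim0
      apply hlim0.congr'
      filter_upwards [self_mem_nhdsWithin] with h hpos
      exact (hkey h (mem_Ioi.1 hpos)).symm
    have hmemev : ∀ᶠ h in 𝓝[>] (0:ℝ), S h (x - h • A x) ∈ Metric.closedBall x δ :=
      hptlim.eventually_mem (Metric.closedBall_mem_nhds x hδ)
    have hterm2 : Tendsto (fun h : ℝ => h⁻¹ • (S s (x - h • A x) - S (s - h) x))
        (𝓝[>] (0:ℝ)) (𝓝 0) := by
      apply squeeze_zero_norm' ?_ herr2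
      filter_upwards [hmemev, Ioo_mem_nhdsGT_of_mem (⟨le_rfl, hs.1⟩ : (0:ℝ) ∈ Ico (0:ℝ) s)]
        with h hmem hh
      have hpos : 0 < h := hh.1
      have hcomp : S s (x - h • A x) = S (s - h) (S h (x - h • A x)) := by
        have := hsg h (s - h) hpos.le (by linarith [hh.2]) (x - h • A x)
        rwa [show s - h + h = s by ring] at this
      rw [hcomp]
      have hlips := hKlip (s - h) ⟨by linarith [hh.2], by linarith [hs.2, hh.1]⟩
        (S h (x - h • A x)) x hmem (Metric.mem_closedBall_self hδ.le)
      rw [norm_smul, Real.norm_eq_abs, abs_of_pos (inv_pos.2 hpos)]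
      calc h⁻¹ * ‖S (s-h) (S h (x - h • A x)) - S (s-h) x‖
          ≤ h⁻¹ * (K * ‖S h (x - h • A x) - x‖) :=
            mul_le_mul_of_nonneg_left hlips (inv_pos.2 hpos).le
        _ = K * ‖h⁻¹ • (S h (x - h • A x) - x)‖ := by
            rw [norm_smul, Real.norm_eq_abs, abs_of_pos (inv_pos.2 hpos)]; ring
        _ = K * ‖(h⁻¹ • (S h x - x)) - (h⁻¹ • (S h x - S h (x - h • A x)))‖ := by
            congr 1
            rw [← smul_sub]
            congr 1
            abel
    have hcomb := (hDm s hs.1.le).add hterm2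
    rw [add_zero] at hcomb
    apply hcomb.congr'
    filter_upwards [hsplit] with h hh
    exact hh.symm
  -- Step 3: uniform bounds
  obtain ⟨C, hC0, h₀, hh₀, hbound, hboundL⟩ :
      ∃ C : ℝ, 0 ≤ C ∧ ∃ h₀ : ℝ, 0 < h₀ ∧
        (∀ h ∈ Ioc (0:ℝ) h₀, ∀ s ∈ Icc (0:ℝ) t, ‖h⁻¹ • (φ (s+h) - φ s)‖ ≤ C) ∧
        (∀ h ∈ Ioc (0:ℝ) h₀, ∀ s ∈ Icc (0:ℝ) t, ‖h⁻¹ • (φ s - φ (s - h))‖ ≤ C) := by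
    have hUcont : Continuous (fun s : ℝ => S (max s 0) (x + A x) - S (max s 0) x) :=
      (sf_traj_cont hconv hbdd hcont hid hsg hc0 (x + A x)).sub
        (sf_traj_cont hconv hbdd hcont hid hsg hc0 x)
    have hLcont : Continuous (fun s : ℝ => S (max s 0) x - S (max s 0) (x - A x)) :=
      (sf_traj_cont hconv hbdd hcont hid hsg hc0 x).sub
        (sf_traj_cont hconv hbdd hcont hid hsg hc0 (x - A x))
    obtain ⟨C₁, hC₁⟩ := (isCompact_Icc : IsCompact (Icc (0:ℝ) t)).exists_bound_of_continuousOn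
      hUcont.continuousOn
    obtain ⟨C₂, hC₂⟩ := (isCompact_Icc : IsCompact (Icc (0:ℝ) t)).exists_bound_of_continuousOn
      hLcont.continuousOn
    have hC₁0 : 0 ≤ C₁ := le_trans (norm_nonneg _) (hC₁ 0 ⟨le_rfl, ht⟩)
    have hC₂0 : 0 ≤ C₂ := le_trans (norm_nonneg _) (hC₂ 0 ⟨le_rfl, ht⟩)
    have hev1 : ∀ᶠ h in 𝓝[>] (0:ℝ), ‖h⁻¹ • (S h x - x) - A x‖ ≤ 1 := by
      have h1 : Tendsto (fun h : ℝ => ‖h⁻¹ • (S h x - x) - A x‖) (𝓝[>] (0:ℝ)) (𝓝 0) := by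
        have h2 := (hyh.sub (tendsto_const_nhds (x := A x))).norm
        rw [sub_self, norm_zero] at h2
        exact h2
      filter_upwards [h1.eventually_le_const (by norm_num : (0:ℝ) < 1)] with h hh
      exact hh
    have hev : ∀ᶠ h in 𝓝[>] (0:ℝ), (h ≤ 1 ∧ S h x ∈ Metric.closedBall x δ ∧
        x + h • A x ∈ Metric.closedBall x δ ∧ ‖h⁻¹ • (S h x - x) - A x‖ ≤ 1) := by
      filter_upwards [hball1, hball2, hev1,
        Ioo_mem_nhdsGT_of_mem (⟨le_rfl, one_pos⟩ : (0:ℝ) ∈ Ico (0:ℝ) 1)] with h h1 h2 h3 h4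
      exact ⟨h4.2.le, h1, h2, h3⟩
    obtain ⟨η, hη, hsub⟩ := mem_nhdsGT_iff_exists_Ioo_subset.1 hev
    rw [mem_Ioi] at hη
    have hright : ∀ h ∈ Ioc (0:ℝ) (η/2), ∀ s ∈ Icc (0:ℝ) t,
        ‖h⁻¹ • (φ (s+h) - φ s)‖ ≤ C₁ + C₂ + K := by
      intro h hh s hs
      obtain ⟨hle1, hb1, hb2, herr1⟩ := hsub (⟨hh.1, by linarith [hh.2]⟩ : h ∈ Ioo 0 η)
      have hUs : S (max s 0) (x + A x) - S (max s 0) x =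
          S s (x + A x) - S s x := by rw [max_eq_left hs.1]
      have hLs : S (max s 0) x - S (max s 0) (x - A x) =
          S s x - S s (x - A x) := by rw [max_eq_left hs.1]
      have hup : h⁻¹ • (S s (x + h • A x) - S s x) ≤ S s (x + A x) - S s x := by
        have := sf_slope_mono (hconv s hs.1) x (A x) hh.1 hle1
        simpa using this
      have hlow : S s x - S s (x - A x) ≤ h⁻¹ • (S s (x + h • A x) - S s x) := by
        have := sf_slope_cross (hconv s hs.1) x (A x) hh.1 one_pos
        simpa using this
      have hqn : ‖h⁻¹ • (S s (x + h • A x) - S s x)‖ ≤ C₁ + C₂ := by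
        have hb := sf_norm_between hlow hup
        have h1 := hC₁ s hs
        have h2 := hC₂ s hs
        rw [hUs] at h1
        rw [hLs] at h2
        linarith
      have hkd := key_diff s hs h hh.1 hb1 hb2
      calc ‖h⁻¹ • (φ (s+h) - φ s)‖
          = ‖(h⁻¹ • (φ (s+h) - φ s) - h⁻¹ • (S s (x + h • A x) - S s x)) +
            h⁻¹ • (S s (x + h • A x) - S s x)‖ := by congr 1; abel
        _ ≤ ‖h⁻¹ • (φ (s+h) - φ s) - h⁻¹ • (S s (x + h • A x) - S s x)‖ +
            ‖h⁻¹ • (S s (x + h • A x) - S s x)‖ := norm_add_le _ _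
        _ ≤ K * ‖h⁻¹ • (S h x - x) - A x‖ + (C₁ + C₂) := add_le_add hkd hqn
        _ ≤ K * 1 + (C₁ + C₂) := by
            have := mul_le_mul_of_nonneg_left herr1 hK0
            linarith
        _ = C₁ + C₂ + K := by ring
    refine ⟨C₁ + C₂ + K, by linarith, η/2, by positivity, hright, ?_⟩
    intro h hh s hs
    rcases lt_or_ge h s with hlt | hge
    · have hb := hright h hh (s - h) ⟨by linarith, by linarith [hs.2, hh.1]⟩
      rw [show s - h + h = s by ring] at hb
      exact hb
    · have hφsh : φ (s - h) = x := by
        show S (max (s - h) 0) x = x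
        rw [max_eq_right (by linarith : s - h ≤ 0), hid]
      rw [hφsh]
      rcases eq_or_lt_of_le hs.1 with heq | hspos
      · rw [← heq, hφ0]
        simp only [sub_self, smul_zero, norm_zero]
        linarith
      · have hq0 := hright s ⟨hspos, le_trans hge hh.2⟩ 0 ⟨le_rfl, ht⟩
        rw [zero_add, hφ0] at hq0
        have hnorm : ‖h⁻¹ • (φ s - x)‖ = (h⁻¹ * s) * ‖s⁻¹ • (φ s - x)‖ := by
          rw [norm_smul, norm_smul, Real.norm_eq_abs, Real.norm_eq_abs,
            abs_of_pos (inv_pos.2 hh.1), abs_of_pos (inv_pos.2 hspos)]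
          field_simp
        rw [hnorm]
        have hfrac : h⁻¹ * s ≤ 1 := by
          rw [← div_eq_inv_mul]
          exact div_le_one_of_le₀ hge hh.1.le
        have hfrac0 : 0 ≤ h⁻¹ * s := mul_nonneg (inv_pos.2 hh.1).le hspos.le
        have hm := mul_le_mul hfrac hq0 (norm_nonneg _) zero_le_one
        rw [one_mul] at hm
        exact hm
  -- Step 4: integral identities
  have hφint : ∀ a b : ℝ, IntervalIntegrable φ volume a b := fun a b =>
    hφcont.intervalIntegrable a b
  have hIdR : ∀ h : ℝ, 0 < h → (∫ s in (0:ℝ)..t, h⁻¹ • (φ (s+h) - φ s)) =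
      h⁻¹ • (∫ σ in t..(t+h), φ σ) - h⁻¹ • (∫ σ in (0:ℝ)..(0+h), φ σ) := by
    intro h hpos
    rw [intervalIntegral.integral_smul, ← smul_sub]
    congr 1
    have hφh : IntervalIntegrable (fun s => φ (s + h)) volume 0 t :=
      (hφcont.comp (continuous_id.add continuous_const)).intervalIntegrable 0 t
    rw [intervalIntegral.integral_sub hφh (hφint 0 t)]
    have e1 : (∫ s in (0:ℝ)..t, φ (s + h)) = ∫ σ in (0+h)..(t+h), φ σ :=
      intervalIntegral.integral_comp_add_right φ h
    have h2 : (∫ σ in (0+h:ℝ)..t, φ σ) + (∫ σ in t..(t+h), φ σ) = ∫ σ in (0+h:ℝ)..(t+h), φ σ :=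
      intervalIntegral.integral_add_adjacent_intervals (hφint _ _) (hφint _ _)
    have h3 : (∫ σ in (0:ℝ)..(0+h), φ σ) + (∫ σ in (0+h:ℝ)..t, φ σ) = ∫ σ in (0:ℝ)..t, φ σ :=
      intervalIntegral.integral_add_adjacent_intervals (hφint _ _) (hφint _ _)
    rw [e1, ← h2, ← h3]
    abel
  have hIdL : ∀ h : ℝ, 0 < h → (∫ s in (0:ℝ)..t, h⁻¹ • (φ s - φ (s - h))) =
      h⁻¹ • (∫ σ in (t-h)..t, φ σ) - x := by
    intro h hpos
    have hconst : (∫ σ in (0-h:ℝ)..(0:ℝ), φ σ) = h • x := by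
      have he : EqOn φ (fun _ => x) (uIcc (0-h:ℝ) 0) := by
        intro σ hσ
        rw [uIcc_of_le (by linarith : (0-h:ℝ) ≤ 0)] at hσ
        show S (max σ 0) x = x
        rw [max_eq_right hσ.2, hid]
      rw [intervalIntegral.integral_congr he, intervalIntegral.integral_const]
      norm_num
    rw [intervalIntegral.integral_smul]
    have hφh : IntervalIntegrable (fun s => φ (s - h)) volume 0 t :=
      (hφcont.comp (continuous_id.sub continuous_const)).intervalIntegrable 0 t
    rw [intervalIntegral.integral_sub (hφint 0 t) hφh]
    have e1 : (∫ s in (0:ℝ)..t, φ (s - h)) = ∫ σ in (0-h)..(t-h), φ σ :=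
      intervalIntegral.integral_comp_sub_right φ h
    have h2 : (∫ σ in (0-h:ℝ)..(t-h), φ σ) + (∫ σ in (t-h)..t, φ σ) = ∫ σ in (0-h:ℝ)..t, φ σ :=
      intervalIntegral.integral_add_adjacent_intervals (hφint _ _) (hφint _ _)
    have h3 : (∫ σ in (0-h:ℝ)..(0:ℝ), φ σ) + (∫ σ in (0:ℝ)..t, φ σ) = ∫ σ in (0-h:ℝ)..t, φ σ :=
      intervalIntegral.integral_add_adjacent_intervals (hφint _ _) (hφint _ _)
    have key : (∫ σ in (0:ℝ)..t, φ σ) - (∫ σ in (0-h:ℝ)..(t-h), φ σ) =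
        (∫ σ in (t-h)..t, φ σ) - (∫ σ in (0-h:ℝ)..(0:ℝ), φ σ) := by
      have h4 := h2.trans h3.symm
      -- h4 : ∫_{-h}^{t-h} + ∫_{t-h}^t = ∫_{-h}^0 + ∫_0^t
      calc (∫ σ in (0:ℝ)..t, φ σ) - (∫ σ in (0-h:ℝ)..(t-h), φ σ)
          = ((∫ σ in (0-h:ℝ)..(0:ℝ), φ σ) + (∫ σ in (0:ℝ)..t, φ σ))
            - (∫ σ in (0-h:ℝ)..(t-h), φ σ) - (∫ σ in (0-h:ℝ)..(0:ℝ), φ σ) := by abel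
        _ = ((∫ σ in (0-h:ℝ)..(t-h), φ σ) + (∫ σ in (t-h)..t, φ σ))
            - (∫ σ in (0-h:ℝ)..(t-h), φ σ) - (∫ σ in (0-h:ℝ)..(0:ℝ), φ σ) := by rw [h4]
        _ = (∫ σ in (t-h)..t, φ σ) - (∫ σ in (0-h:ℝ)..(0:ℝ), φ σ) := by abel
    rw [e1, key, hconst, smul_sub, smul_smul, inv_mul_cancel₀ hpos.ne', one_smul]
  -- limits of the integral expressions
  have hlimR : Tendsto (fun h : ℝ => ∫ s in (0:ℝ)..t, h⁻¹ • (φ (s+h) - φ s)) (𝓝[>] (0:ℝ))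
      (𝓝 (S t x - x)) := by
    have h1 := (sf_avg_right hφcont t).sub (sf_avg_right hφcont 0)
    rw [hφ0] at h1
    have h2 : φ t = S t x := hφeq t ht
    rw [h2] at h1
    apply h1.congr'
    filter_upwards [self_mem_nhdsWithin] with h hpos
    exact (hIdR h hpos).symm
  have hlimL : Tendsto (fun h : ℝ => ∫ s in (0:ℝ)..t, h⁻¹ • (φ s - φ (s - h))) (𝓝[>] (0:ℝ))
      (𝓝 (S t x - x)) := by
    have h1 := (sf_avg_left hφcont t).sub (tendsto_const_nhds (x := x))
    have h2 : φ t = S t x := hφeq t ht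
    rw [h2] at h1
    apply h1.congr'
    filter_upwards [self_mem_nhdsWithin] with h hpos
    exact (hIdL h hpos).symm
  -- Step 5: dominated convergence
  have hseq : Tendsto (fun n : ℕ => (1:ℝ)/(n+1)) atTop (𝓝[>] (0:ℝ)) := by
    apply tendsto_nhdsWithin_of_tendsto_nhds_of_eventually_within
    · exact tendsto_one_div_add_atTop_nhds_zero_nat
    · exact Eventually.of_forall (fun n => mem_Ioi.2 (by positivity))
  have hDCTr : Tendsto (fun h : ℝ => ∫ s in (0:ℝ)..t, h⁻¹ • (φ (s+h) - φ s)) (𝓝[>] (0:ℝ))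
      (𝓝 (∫ s in (0:ℝ)..t, Dp s)) := by
    apply intervalIntegral.tendsto_integral_filter_of_dominated_convergence (fun _ => C)
    · apply Eventually.of_forall
      intro h
      apply Continuous.aestronglyMeasurable
      exact continuous_const.smul ((hφcont.comp (continuous_id.add continuous_const)).sub hφcont)
    · filter_upwards [Ioc_mem_nhdsGT_of_mem (⟨le_rfl, hh₀⟩ : (0:ℝ) ∈ Ico (0:ℝ) h₀)] with h hh
      apply ae_of_all
      intro s hs
      rw [uIoc_of_le ht] at hs
      exact hbound h hh s ⟨hs.1.le, hs.2⟩
    · exact intervalIntegrable_const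
    · apply ae_of_all
      intro s hs
      rw [uIoc_of_le ht] at hs
      exact step1 s ⟨hs.1.le, hs.2⟩
  have hDCTl : Tendsto (fun h : ℝ => ∫ s in (0:ℝ)..t, h⁻¹ • (φ s - φ (s - h))) (𝓝[>] (0:ℝ))
      (𝓝 (∫ s in (0:ℝ)..t, Dm s)) := by
    apply intervalIntegral.tendsto_integral_filter_of_dominated_convergence (fun _ => C)
    · apply Eventually.of_forall
      intro h
      apply Continuous.aestronglyMeasurable
      exact continuous_const.smul (hφcont.sub (hφcont.comp (continuous_id.sub continuous_const)))
    · filter_upwards [Ioc_mem_nhdsGT_of_mem (⟨le_rfl, hh₀⟩ : (0:ℝ) ∈ Ico (0:ℝ) h₀)] with h hh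
      apply ae_of_all
      intro s hs
      rw [uIoc_of_le ht] at hs
      exact hboundL h hh s ⟨hs.1.le, hs.2⟩
    · exact intervalIntegrable_const
    · apply ae_of_all
      intro s hs
      rw [uIoc_of_le ht] at hs
      exact step2 s hs
  have eqp : S t x - x = ∫ s in (0:ℝ)..t, Dp s := tendsto_nhds_unique hlimR hDCTr
  have eqm : S t x - x = ∫ s in (0:ℝ)..t, Dm s := tendsto_nhds_unique hlimL hDCTl
  refine ⟨?_, eqp, eqm⟩
  rw [eqp]
  apply intervalIntegral.integral_congr
  intro s hs
  rw [uIcc_of_le ht] at hs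
  exact (step1' s hs).symm
end

section
/- Let X be a Banach lattice with order continuous norm and S a convex C₀-semigroup on X with generator A. Then A is closed: for every sequence (x_n)_{n∈ℕ} in D(A) with x_n → x ∈ X and A x_n → y ∈ X in norm, one has x ∈ D(A) and Ax = y. -/
set_option maxHeartbeats 2000000


open Filter Topology Set

variable {X : Type*} [NormedAddCommGroup X] [Lattice X] [IsOrderedAddMonoid X] [HasSolidNorm X] [NormedSpace ℝ X] [CompleteSpace X]

set_option linter.unusedSectionVars false
set_option linter.unusedVariables false

section Aux
variable [PosSMulStrictMono ℝ X] [PosSMulReflectLT ℝ X]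


lemma norm_le_of_sandwich {a b c : X} (hac : a ≤ c) (hcb : c ≤ b) : ‖c‖ ≤ ‖a‖ + ‖b‖ := by
  have h1 : |c| ≤ |a| + |b| := by
    rw [abs_le']
    constructor
    · exact hcb.trans ((le_abs_self b).trans (le_add_of_nonneg_left (abs_nonneg a)))
    · exact (neg_le_neg hac).trans ((neg_le_abs a).trans (le_add_of_nonneg_right (abs_nonneg b)))
  calc ‖c‖ = ‖|c|‖ := (norm_abs_eq_norm c).symm
    _ ≤ ‖|a| + |b|‖ := norm_le_norm_of_abs_le_abs
        (by rwa [abs_abs, abs_of_nonneg (add_nonneg (abs_nonneg a) (abs_nonneg b))])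
    _ ≤ ‖|a|‖ + ‖|b|‖ := norm_add_le _ _
    _ = ‖a‖ + ‖b‖ := by rw [norm_abs_eq_norm, norm_abs_eq_norm]

lemma tendsto_aux {f : ℝ → X} {l : X} (h : Tendsto f (𝓝[>] (0:ℝ)) (𝓝 l)) :
    ∀ ε > 0, ∃ δ > 0, ∀ t : ℝ, 0 < t → t < δ → ‖f t - l‖ < ε := by
  intro ε hε
  obtain ⟨δ, hδ, H⟩ := Metric.tendsto_nhdsWithin_nhds.mp h ε hε
  refine ⟨δ, hδ, fun t ht htδ => ?_⟩
  have := H (mem_Ioi.mpr ht) (by simpa [Real.dist_eq, abs_of_pos ht] using htδ)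
  simpa [dist_eq_norm] using this


lemma convex_onesided (S1 : X → X)
    (hcv : ∀ (u v : X) (a : ℝ), 0 ≤ a → a ≤ 1 →
      S1 (a • u + (1 - a) • v) ≤ a • S1 u + (1 - a) • S1 v)
    (R : ℝ) (hR : 0 < R) (u v : X) (hne : v ≠ u) :
    S1 v - S1 u ≤ (‖v - u‖ / (‖v - u‖ + R)) •
      (S1 (v + (R / ‖v - u‖) • (v - u)) - S1 u) := by
  set d : X := v - u with hd
  have hnd : 0 < ‖d‖ := by
    rw [hd, norm_pos_iff]
    exact sub_ne_zero_of_ne hne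
  set a : ℝ := ‖d‖ / (‖d‖ + R) with ha
  have ha0 : 0 ≤ a := by positivity
  have ha1 : a ≤ 1 := by
    rw [ha, div_le_one (by positivity)]; linarith
  have key : a • (v + (R / ‖d‖) • d) + (1 - a) • u = v := by
    have hu : u = v - d := by rw [hd]; abel
    rw [hu]
    have expand : a • (v + (R / ‖d‖) • d) + (1 - a) • (v - d)
        = v + (a * (R / ‖d‖) - (1 - a)) • d := by module
    have hcoef : a * (R / ‖d‖) - (1 - a) = 0 := by
      rw [ha]; field_simp; ring
    rw [expand, hcoef, zero_smul, add_zero]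
  have h := hcv (v + (R / ‖d‖) • d) u a ha0 ha1
  rw [key] at h
  have h2 : S1 v - S1 u ≤ (a • S1 (v + (R / ‖d‖) • d) + (1 - a) • S1 u) - S1 u :=
    sub_le_sub_right h _
  have h3 : (a • S1 (v + (R / ‖d‖) • d) + (1 - a) • S1 u) - S1 u
      = a • (S1 (v + (R / ‖d‖) • d) - S1 u) := by module
  rw [h3] at h2
  exact h2

lemma lip_of_bound (S1 : X → X)
    (hcv : ∀ (u v : X) (a : ℝ), 0 ≤ a → a ≤ 1 →
      S1 (a • u + (1 - a) • v) ≤ a • S1 u + (1 - a) • S1 v)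
    (c : X) (R C : ℝ) (hR : 0 < R)
    (hC : ∀ u : X, ‖u - c‖ ≤ 2 * R → ‖S1 u‖ ≤ C) :
    ∀ u v : X, ‖u - c‖ ≤ R → ‖v - c‖ ≤ R → ‖S1 u - S1 v‖ ≤ (4 * C / R) * ‖u - v‖ := by
  have hC0 : 0 ≤ C := le_trans (norm_nonneg _) (hC c (by rw [sub_self, norm_zero]; positivity))
  intro u v hu hv
  rcases eq_or_ne v u with rfl | hne
  · simp only [sub_self, norm_zero, mul_zero]; positivity
  · have hnd : 0 < ‖v - u‖ := by rw [norm_pos_iff]; exact sub_ne_zero_of_ne hne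
    have hnd' : ‖u - v‖ = ‖v - u‖ := norm_sub_rev u v
    set a : ℝ := ‖v - u‖ / (‖v - u‖ + R) with ha
    have ha0 : 0 ≤ a := by positivity
    -- upper bound
    have hup := convex_onesided S1 hcv R hR u v hne
    -- lower bound (roles swapped)
    have hlo := convex_onesided S1 hcv R hR v u (fun h => hne h.symm)
    rw [hnd'] at hlo
    -- memberships of auxiliary points
    have hwv : ‖(v + (R / ‖v - u‖) • (v - u)) - c‖ ≤ 2 * R := by
      have : ‖(R / ‖v - u‖) • (v - u)‖ = R := by
        rw [norm_smul, Real.norm_eq_abs, abs_of_pos (by positivity)]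
        field_simp
      calc ‖(v + (R / ‖v - u‖) • (v - u)) - c‖
          ≤ ‖v - c‖ + ‖(R / ‖v - u‖) • (v - u)‖ := by
            rw [add_sub_right_comm]; exact norm_add_le _ _
        _ ≤ R + R := by rw [this]; linarith
        _ = 2 * R := by ring
    have hwu : ‖(u + (R / ‖v - u‖) • (u - v)) - c‖ ≤ 2 * R := by
      have : ‖(R / ‖v - u‖) • (u - v)‖ = R := by
        rw [norm_smul, Real.norm_eq_abs, abs_of_pos (by positivity), hnd']
        field_simp
      calc ‖(u + (R / ‖v - u‖) • (u - v)) - c‖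
          ≤ ‖u - c‖ + ‖(R / ‖v - u‖) • (u - v)‖ := by
            rw [add_sub_right_comm]; exact norm_add_le _ _
        _ ≤ R + R := by rw [this]; linarith
        _ = 2 * R := by ring
    have hbv : ‖S1 (v + (R / ‖v - u‖) • (v - u))‖ ≤ C := hC _ hwv
    have hbu : ‖S1 (u + (R / ‖v - u‖) • (u - v))‖ ≤ C := hC _ hwu
    have hb1 : ‖a • (S1 (v + (R / ‖v - u‖) • (v - u)) - S1 u)‖ ≤ a * (2 * C) := by
      rw [norm_smul, Real.norm_eq_abs, abs_of_nonneg ha0]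
      have : ‖S1 (v + (R / ‖v - u‖) • (v - u)) - S1 u‖ ≤ 2 * C := by
        calc ‖S1 (v + (R / ‖v - u‖) • (v - u)) - S1 u‖
            ≤ ‖S1 (v + (R / ‖v - u‖) • (v - u))‖ + ‖S1 u‖ := norm_sub_le _ _
          _ ≤ C + C := add_le_add hbv (hC u (by linarith))
          _ = 2 * C := by ring
      exact mul_le_mul_of_nonneg_left this ha0
    have hb2 : ‖a • (S1 (u + (R / ‖v - u‖) • (u - v)) - S1 v)‖ ≤ a * (2 * C) := by
      rw [norm_smul, Real.norm_eq_abs, abs_of_nonneg ha0]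
      have : ‖S1 (u + (R / ‖v - u‖) • (u - v)) - S1 v‖ ≤ 2 * C := by
        calc ‖S1 (u + (R / ‖v - u‖) • (u - v)) - S1 v‖
            ≤ ‖S1 (u + (R / ‖v - u‖) • (u - v))‖ + ‖S1 v‖ := norm_sub_le _ _
          _ ≤ C + C := add_le_add hbu (hC v (by linarith))
          _ = 2 * C := by ring
      exact mul_le_mul_of_nonneg_left this ha0
    -- sandwich : - (a • (S1 wu - S1 v)) ≤ S1 v - S1 u ≤ a • (S1 wv - S1 u)
    have hlow : -(a • (S1 (u + (R / ‖v - u‖) • (u - v)) - S1 v)) ≤ S1 v - S1 u := by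
      have := neg_le_neg hlo
      simpa using this
    have hsand := norm_le_of_sandwich hlow hup
    rw [norm_neg] at hsand
    have haR : a ≤ ‖v - u‖ / R := by
      rw [ha]
      apply div_le_div_of_nonneg_left (norm_nonneg _) hR
      linarith
    calc ‖S1 u - S1 v‖ = ‖S1 v - S1 u‖ := norm_sub_rev _ _
      _ ≤ a * (2 * C) + a * (2 * C) := le_trans hsand (add_le_add hb2 hb1)
      _ = (4 * C) * a := by ring
      _ ≤ (4 * C) * (‖v - u‖ / R) := mul_le_mul_of_nonneg_left haR (by positivity)
      _ = (4 * C / R) * ‖u - v‖ := by rw [hnd']; ring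

lemma cont_of_conv (S1 : X → X)
    (hcv : ∀ (u v : X) (a : ℝ), 0 ≤ a → a ≤ 1 →
      S1 (a • u + (1 - a) • v) ≤ a • S1 u + (1 - a) • S1 v)
    (hb : ∀ r : ℝ, 0 < r → ∃ M : ℝ, ∀ u : X, ‖u‖ ≤ r → ‖S1 u‖ ≤ M) :
    Continuous S1 := by
  rw [continuous_iff_continuousAt]
  intro p
  obtain ⟨M, hM⟩ := hb (‖p‖ + 2) (by positivity)
  have hC : ∀ u : X, ‖u - p‖ ≤ 2 * 1 → ‖S1 u‖ ≤ M := by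
    intro u hu
    apply hM
    calc ‖u‖ ≤ ‖u - p‖ + ‖p‖ := by
          simpa using norm_add_le (u - p) p
      _ ≤ ‖p‖ + 2 := by linarith
  have hM0 : 0 ≤ M := le_trans (norm_nonneg _) (hM p (by linarith))
  have hlip := lip_of_bound S1 hcv p 1 M one_pos hC
  rw [Metric.continuousAt_iff]
  intro ε hε
  refine ⟨min 1 (ε / (4 * M + 1)), by positivity, fun {u} hu => ?_⟩
  rw [dist_eq_norm] at hu ⊢
  have hu1 : ‖u - p‖ ≤ 1 := le_of_lt (lt_of_lt_of_le hu (min_le_left _ _))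
  have hu2 : ‖u - p‖ < ε / (4 * M + 1) := lt_of_lt_of_le hu (min_le_right _ _)
  have := hlip u p hu1 (by simp)
  calc ‖S1 u - S1 p‖ ≤ (4 * M / 1) * ‖u - p‖ := this
    _ = 4 * M * ‖u - p‖ := by ring
    _ < ε := by
        rcases eq_or_lt_of_le hM0 with h0 | h0
        · rw [← h0]; simpa using hε
        · calc 4 * M * ‖u - p‖ < 4 * M * (ε / (4 * M + 1)) := by
                apply mul_lt_mul_of_pos_left hu2 (by positivity)
            _ < ε := by
                rw [mul_div_assoc']
                rw [div_lt_iff₀ (by positivity)]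
                nlinarith

lemma mvi (φ : ℝ → X) (b K : ℝ) (hb : 0 < b) (hK : 0 ≤ K)
    (hcont : ContinuousOn φ (Icc 0 b))
    (hdini : ∀ s, 0 ≤ s → s < b → ∀ ε > 0, ∃ τ, 0 < τ ∧ s + τ ≤ b ∧
      ‖φ (s + τ) - φ s‖ ≤ (K + ε) * τ) :
    ‖φ b - φ 0‖ ≤ K * b := by
  have main : ∀ ε > 0, ‖φ b - φ 0‖ ≤ (K + ε) * b := by
    intro ε hε
    set E := {s ∈ Icc (0:ℝ) b | ‖φ s - φ 0‖ ≤ (K + ε) * s} with hEdef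
    have hEc : IsClosed E := by
      have heq : E = Icc (0:ℝ) b ∩
          (fun s => ‖φ s - φ 0‖ - (K + ε) * s) ⁻¹' (Iic 0) := by
        ext s
        simp only [hEdef, mem_sep_iff, mem_inter_iff, mem_preimage, mem_Iic]
        constructor
        · rintro ⟨h1, h2⟩; exact ⟨h1, by linarith⟩
        · rintro ⟨h1, h2⟩; exact ⟨h1, by linarith⟩
      rw [heq]
      exact ContinuousOn.preimage_isClosed_of_isClosed
        (((hcont.sub continuousOn_const).norm).sub (continuous_const.mul continuous_id).continuousOn)
        isClosed_Icc isClosed_Iic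
    have hEsub : E ⊆ Icc 0 b := fun s hs => hs.1
    have hEcomp : IsCompact E := isCompact_Icc.of_isClosed_subset hEc hEsub
    have hEne : E.Nonempty := ⟨0, ⟨le_refl _, hb.le⟩, by simp⟩
    have hcmem : sSup E ∈ E := hEcomp.sSup_mem hEne
    set c := sSup E with hc
    rcases eq_or_lt_of_le hcmem.1.2 with hcb | hcb
    · rw [← hcb]; exact hcmem.2
    · exfalso
      obtain ⟨τ, hτ0, hτb, hτest⟩ := hdini c hcmem.1.1 hcb ε hε
      have hmem : c + τ ∈ E := by
        refine ⟨⟨by linarith [hcmem.1.1], hτb⟩, ?_⟩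
        calc ‖φ (c + τ) - φ 0‖ ≤ ‖φ (c + τ) - φ c‖ + ‖φ c - φ 0‖ := by
              simpa using norm_add_le (φ (c + τ) - φ c) (φ c - φ 0)
          _ ≤ (K + ε) * τ + (K + ε) * c := add_le_add hτest hcmem.2
          _ = (K + ε) * (c + τ) := by ring
      have : c + τ ≤ c := le_csSup hEcomp.bddAbove hmem
      linarith
  refine le_of_forall_pos_le_add fun ε hε => ?_
  have := main (ε / b) (by positivity)
  calc ‖φ b - φ 0‖ ≤ (K + ε / b) * b := this
    _ = K * b + ε := by field_simp

lemma unif_bound (S : ℝ → X → X)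
    (hconv : ∀ t : ℝ, 0 ≤ t → ∀ u v : X, ∀ a : ℝ, 0 ≤ a → a ≤ 1 →
      S t (a • u + (1 - a) • v) ≤ a • S t u + (1 - a) • S t v)
    (hcont : ∀ t : ℝ, 0 ≤ t → Continuous (S t))
    (hid : ∀ u : X, S 0 u = u)
    (hc0 : ∀ u : X, Tendsto (fun t : ℝ => S t u) (𝓝[>] (0 : ℝ)) (𝓝 u))
    (x : X) :
    ∃ δ > 0, ∃ ρ > 0, ∃ C : ℝ, ∀ t, 0 ≤ t → t ≤ δ → ∀ u : X, ‖u - x‖ ≤ ρ → ‖S t u‖ ≤ C := by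
  haveI : Nonempty X := ⟨x⟩
  -- pointwise bound near 0
  have ptbd : ∀ v : X, ∃ δ > 0, ∀ t, 0 ≤ t → t ≤ δ → ‖S t v‖ ≤ ‖v‖ + 1 := by
    intro v
    obtain ⟨δ0, hδ0, hv⟩ := tendsto_aux (hc0 v) 1 one_pos
    refine ⟨δ0 / 2, by positivity, fun t ht0 htδ => ?_⟩
    rcases eq_or_lt_of_le ht0 with h | h
    · rw [← h, hid]; linarith
    · have := hv t h (by linarith)
      calc ‖S t v‖ ≤ ‖S t v - v‖ + ‖v‖ := by simpa using norm_add_le (S t v - v) v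
        _ ≤ ‖v‖ + 1 := by linarith
  set H : ℕ → Set X := fun m => ⋂ t ∈ Icc (0:ℝ) (1 / (m + 1)), {u : X | ‖S t u‖ ≤ m} with hH
  have hHc : ∀ m, IsClosed (H m) := by
    intro m
    exact isClosed_biInter fun t ht => isClosed_le ((hcont t ht.1).norm) continuous_const
  have hHuniv : ⋃ m, H m = univ := by
    rw [eq_univ_iff_forall]
    intro v
    obtain ⟨δv, hδv, hv⟩ := ptbd v
    obtain ⟨m, hm⟩ := exists_nat_gt (max (‖v‖ + 1) (1 / δv))
    have hm1 : ‖v‖ + 1 ≤ m := le_trans (le_max_left _ _) hm.le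
    have hm2 : 1 / δv ≤ m := le_trans (le_max_right _ _) hm.le
    refine mem_iUnion.mpr ⟨m, ?_⟩
    rw [hH]
    refine mem_iInter₂.mpr fun t ht => ?_
    have htδ : t ≤ δv := by
      rcases ht with ⟨ht0, ht1⟩
      have h1 : 1 / ((m:ℝ) + 1) ≤ δv := by
        rw [div_le_iff₀ (by positivity)]
        rw [div_le_iff₀ hδv] at hm2
        nlinarith
      linarith
    exact le_trans (hv t ht.1 htδ) (by linarith)
  obtain ⟨m₀, u₀, hu₀⟩ := nonempty_interior_of_iUnion_of_closed hHc hHuniv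
  obtain ⟨ρ₀, hρ₀, hball⟩ := Metric.isOpen_iff.mp isOpen_interior u₀ hu₀
  have hball' : Metric.ball u₀ ρ₀ ⊆ H m₀ := le_trans hball interior_subset
  have hballmem : ∀ w : X, ‖w - u₀‖ < ρ₀ → ∀ t, 0 ≤ t → t ≤ 1 / ((m₀:ℝ) + 1) → ‖S t w‖ ≤ m₀ := by
    intro w hw t ht0 ht1
    have : w ∈ H m₀ := hball' (by rwa [Metric.mem_ball, dist_eq_norm])
    rw [hH] at this
    exact mem_iInter₂.mp this t ⟨ht0, ht1⟩
  set v' : X := x + (x - u₀) with hv'def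
  set v'' : X := u₀ + (u₀ - x) with hv''def
  obtain ⟨δ', hδ'pos, hv'⟩ := ptbd v'
  obtain ⟨δ'', hδ''pos, hv''⟩ := ptbd v''
  refine ⟨min (1 / ((m₀:ℝ) + 1)) (min δ' δ''), by positivity, ρ₀ / 4, by positivity,
    (2 * m₀ + (‖v''‖ + 1)) + ((m₀ + (‖v'‖ + 1)) / 2), fun t ht0 htδ u hu => ?_⟩
  have htm : t ≤ 1 / ((m₀:ℝ) + 1) := le_trans htδ (min_le_left _ _)
  have htδ' : t ≤ δ' := le_trans htδ (le_trans (min_le_right _ _) (min_le_left _ _))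
  have htδ'' : t ≤ δ'' := le_trans htδ (le_trans (min_le_right _ _) (min_le_right _ _))
  -- upper bound
  set bpt : X := u + (u - v') with hbpt
  have hbmem : ‖bpt - u₀‖ < ρ₀ := by
    have : bpt - u₀ = (u - x) + (u - x) := by rw [hbpt, hv'def]; abel
    rw [this]
    calc ‖(u - x) + (u - x)‖ ≤ ‖u - x‖ + ‖u - x‖ := norm_add_le _ _
      _ ≤ ρ₀ / 4 + ρ₀ / 4 := add_le_add hu hu
      _ < ρ₀ := by linarith
  have key1 : (1/2 : ℝ) • bpt + (1 - 1/2 : ℝ) • v' = u := by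
    rw [hbpt]
    have h12 : (1 - 1/2 : ℝ) = 1/2 := by norm_num
    rw [h12]; module
  have hup : S t u ≤ (1/2 : ℝ) • S t bpt + (1 - 1/2 : ℝ) • S t v' := by
    have := hconv t ht0 bpt v' (1/2) (by norm_num) (by norm_num)
    rwa [key1] at this
  have hupnorm : ‖(1/2 : ℝ) • S t bpt + (1 - 1/2 : ℝ) • S t v'‖ ≤ (m₀ + (‖v'‖ + 1)) / 2 := by
    have h12 : (1 - 1/2 : ℝ) = 1/2 := by norm_num
    rw [h12]
    calc ‖(1/2 : ℝ) • S t bpt + (1/2 : ℝ) • S t v'‖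
        ≤ ‖(1/2 : ℝ) • S t bpt‖ + ‖(1/2 : ℝ) • S t v'‖ := norm_add_le _ _
      _ = (1/2) * ‖S t bpt‖ + (1/2) * ‖S t v'‖ := by
          rw [norm_smul, norm_smul]; norm_num
      _ ≤ (1/2) * m₀ + (1/2) * (‖v'‖ + 1) := by
          have h1 := hballmem bpt hbmem t ht0 htm
          have h2 := hv' t ht0 htδ'
          have : (0:ℝ) ≤ 1/2 := by norm_num
          exact add_le_add (mul_le_mul_of_nonneg_left h1 this)
            (mul_le_mul_of_nonneg_left h2 this)
      _ = (m₀ + (‖v'‖ + 1)) / 2 := by ring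
  -- lower bound
  set cpt : X := (1/2 : ℝ) • (u + v'') with hcpt
  have hcmem : ‖cpt - u₀‖ < ρ₀ := by
    have : cpt - u₀ = (1/2 : ℝ) • (u - x) := by rw [hcpt, hv''def]; module
    rw [this, norm_smul]
    have : ‖u - x‖ ≤ ρ₀ / 4 := hu
    rw [Real.norm_eq_abs]
    rw [abs_of_pos (by norm_num : (0:ℝ) < 1/2)]
    linarith
  have key2 : (1/2 : ℝ) • u + (1 - 1/2 : ℝ) • v'' = cpt := by
    rw [hcpt]
    have h12 : (1 - 1/2 : ℝ) = 1/2 := by norm_num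
    rw [h12]; module
  have hlo0 : S t cpt ≤ (1/2 : ℝ) • S t u + (1 - 1/2 : ℝ) • S t v'' := by
    have := hconv t ht0 u v'' (1/2) (by norm_num) (by norm_num)
    rwa [key2] at this
  have hlo : (2:ℝ) • S t cpt - S t v'' ≤ S t u := by
    have h2 := smul_le_smul_of_nonneg_left hlo0 (by norm_num : (0:ℝ) ≤ 2)
    have heq : (2:ℝ) • ((1/2 : ℝ) • S t u + (1 - 1/2 : ℝ) • S t v'') = S t u + S t v'' := by
      have h12 : (1 - 1/2 : ℝ) = 1/2 := by norm_num
      rw [h12]; module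
    rw [heq] at h2
    exact sub_le_iff_le_add.mpr h2
  have hlonorm : ‖(2:ℝ) • S t cpt - S t v''‖ ≤ 2 * m₀ + (‖v''‖ + 1) := by
    calc ‖(2:ℝ) • S t cpt - S t v''‖ ≤ ‖(2:ℝ) • S t cpt‖ + ‖S t v''‖ := norm_sub_le _ _
      _ = 2 * ‖S t cpt‖ + ‖S t v''‖ := by rw [norm_smul]; norm_num
      _ ≤ 2 * m₀ + (‖v''‖ + 1) := by
          have h1 := hballmem cpt hcmem t ht0 htm
          have h2 := hv'' t ht0 htδ''
          nlinarith [norm_nonneg (S t cpt)]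
  calc ‖S t u‖ ≤ ‖(2:ℝ) • S t cpt - S t v''‖ + ‖(1/2 : ℝ) • S t bpt + (1 - 1/2 : ℝ) • S t v'‖ :=
        norm_le_of_sandwich hlo hup
    _ ≤ (2 * m₀ + (‖v''‖ + 1)) + ((m₀ + (‖v'‖ + 1)) / 2) := add_le_add hlonorm hupnorm

end Aux

/-- The generator of a convex C₀-semigroup on a Banach lattice with order
continuous norm is closed: if `xₙ ∈ D(A)`, `xₙ → x` and `Axₙ → y` in norm, then
`x ∈ D(A)` and `Ax = y`. -/
theorem generator_closed
    [PosSMulStrictMono ℝ X] [PosSMulReflectLT ℝ X]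
    (hDed : ∀ f : ℕ → X, BddAbove (Set.range f) → ∃ s : X, IsLUB (Set.range f) s)
    (hoc : ∀ f : ℕ → X, Antitone f → IsGLB (Set.range f) 0 →
      Tendsto (fun n => ‖f n‖) atTop (𝓝 (0 : ℝ)))
    (S : ℝ → X → X)
    (hconv : ∀ t : ℝ, 0 ≤ t → ∀ x y : X, ∀ a : ℝ, 0 ≤ a → a ≤ 1 →
      S t (a • x + (1 - a) • y) ≤ a • S t x + (1 - a) • S t y)
    (hbdd : ∀ t : ℝ, 0 ≤ t → ∀ r : ℝ, 0 < r → ∃ M : ℝ, ∀ x : X, ‖x‖ ≤ r → ‖S t x‖ ≤ M)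
    (hid : ∀ x : X, S 0 x = x)
    (hsg : ∀ s t : ℝ, 0 ≤ s → 0 ≤ t → ∀ x : X, S (t + s) x = S t (S s x))
    (hc0 : ∀ x : X, Tendsto (fun t : ℝ => S t x) (𝓝[>] (0 : ℝ)) (𝓝 x))
    (A : X → X)
    (hA : ∀ x ∈ genDom S, Tendsto (fun h : ℝ => h⁻¹ • (S h x - x)) (𝓝[>] (0 : ℝ)) (𝓝 (A x)))
    (xs : ℕ → X) (hxs : ∀ n, xs n ∈ genDom S)
    (x y : X) (hx : Tendsto xs atTop (𝓝 x)) (hy : Tendsto (fun n => A (xs n)) atTop (𝓝 y)) :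
    x ∈ genDom S ∧ A x = y := by
  have hcontS : ∀ t : ℝ, 0 ≤ t → Continuous (S t) := fun t ht =>
    cont_of_conv (S t) (fun u v a ha0 ha1 => hconv t ht u v a ha0 ha1)
      (fun r hr => hbdd t ht r hr)
  obtain ⟨δ, hδpos, ρ, hρpos, C, hC⟩ :=
    unif_bound S hconv hcontS hid hc0 x
  set r : ℝ := ρ / 2 with hrdef
  have hrpos : 0 < r := by positivity
  have hC0 : 0 ≤ C :=
    le_trans (norm_nonneg _) (hC 0 le_rfl hδpos.le x (by simp [hρpos.le]))
  set L : ℝ := 4 * C / r with hLdef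
  have hL0 : 0 ≤ L := by positivity
  have hLip : ∀ t, 0 ≤ t → t ≤ δ → ∀ u v : X, ‖u - x‖ ≤ r → ‖v - x‖ ≤ r →
      ‖S t u - S t v‖ ≤ L * ‖u - v‖ := by
    intro t ht0 htδ
    exact lip_of_bound (S t) (fun u v a h0 h1 => hconv t ht0 u v a h0 h1) x r C hrpos
      (fun u hu => hC t ht0 htδ u (by rw [hrdef] at hu; linarith))
  -- the key quantitative estimate
  have key : ∀ ε > 0, ∃ h₁ > 0, ∀ h : ℝ, 0 < h → h ≤ h₁ →
      ‖h⁻¹ • (S h x - x) - y‖ ≤ 2 * ε := by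
    intro ε hε
    set lam : ℝ := r / (4 * (‖y‖ + 1)) with hlamdef
    have hlam : 0 < lam := by positivity
    have hlamy : lam * (‖y‖ + 1) = r / 4 := by
      rw [hlamdef]; field_simp
    have hlamr : lam ≤ r / 4 := by nlinarith [norm_nonneg y]
    -- choose N
    have e1pos : 0 < min (r/4) (ε * lam / (8 * (L + 1))) := by positivity
    have e2pos : 0 < min 1 (ε / (4 * (L + 1))) := by positivity
    obtain ⟨N₁, hN₁⟩ := Metric.tendsto_atTop.mp hx _ e1pos
    obtain ⟨N₂, hN₂⟩ := Metric.tendsto_atTop.mp hy _ e2pos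
    set N := max N₁ N₂ with hNdef
    have hxn : ∀ n, N ≤ n → ‖xs n - x‖ ≤ r/4 ∧ ‖xs n - x‖ ≤ ε * lam / (8 * (L + 1)) := by
      intro n hn
      have := hN₁ n (le_trans (le_max_left _ _) hn)
      rw [dist_eq_norm] at this
      exact ⟨le_of_lt (lt_of_lt_of_le this (min_le_left _ _)),
        le_of_lt (lt_of_lt_of_le this (min_le_right _ _))⟩
    have hAn : ∀ n, N ≤ n → ‖A (xs n) - y‖ ≤ 1 ∧ ‖A (xs n) - y‖ ≤ ε / (4 * (L + 1)) := by
      intro n hn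
      have := hN₂ n (le_trans (le_max_right _ _) hn)
      rw [dist_eq_norm] at this
      exact ⟨le_of_lt (lt_of_lt_of_le this (min_le_left _ _)),
        le_of_lt (lt_of_lt_of_le this (min_le_right _ _))⟩
    -- choose h₁
    obtain ⟨δ₁, hδ₁, hb1⟩ := tendsto_aux (hc0 (x + lam • y)) (ε * lam / 8) (by positivity)
    obtain ⟨δ₂, hδ₂, hb2⟩ := tendsto_aux (hc0 (x - lam • y)) (ε * lam / 8) (by positivity)
    obtain ⟨δ₃, hδ₃, hb3⟩ := tendsto_aux (hc0 x) (ε * lam / 8) (by positivity)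
    set h₁ : ℝ := min δ (min δ₁ (min δ₂ δ₃) / 2) with hh₁def
    have hh₁pos : 0 < h₁ := lt_min hδpos (by positivity)
    have hh₁δ : h₁ ≤ δ := min_le_left _ _
    have hsmall : ∀ s : ℝ, 0 < s → s ≤ h₁ → s < δ₁ ∧ s < δ₂ ∧ s < δ₃ := by
      intro s hs0 hs1
      have h2 : s ≤ min δ₁ (min δ₂ δ₃) / 2 := le_trans hs1 (min_le_right _ _)
      have l1 : min δ₁ (min δ₂ δ₃) ≤ δ₁ := min_le_left _ _
      have l2 : min δ₁ (min δ₂ δ₃) ≤ δ₂ := le_trans (min_le_right _ _) (min_le_left _ _)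
      have l3 : min δ₁ (min δ₂ δ₃) ≤ δ₃ := le_trans (min_le_right _ _) (min_le_right _ _)
      have hpos : 0 < min δ₁ (min δ₂ δ₃) := lt_min hδ₁ (lt_min hδ₂ hδ₃)
      exact ⟨by linarith, by linarith, by linarith⟩
    -- reference bounds
    have hUinf : ∀ s : ℝ, 0 ≤ s → s ≤ h₁ →
        ‖lam⁻¹ • (S s (x + lam • y) - S s x) - y‖ ≤ ε / 4 := by
      intro s hs0 hs1
      rcases eq_or_lt_of_le hs0 with h | h
      · rw [← h, hid, hid]
        have hz : lam⁻¹ • (x + lam • y - x) - y = 0 := by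
          rw [add_sub_cancel_left, inv_smul_smul₀ hlam.ne', sub_self]
        rw [hz, norm_zero]; positivity
      · obtain ⟨hs1', hs2', hs3'⟩ := hsmall s h hs1
        have e1 := hb1 s h hs1'
        have e3 := hb3 s h hs3'
        have hsplit : S s (x + lam • y) - S s x
            = (S s (x + lam • y) - (x + lam • y)) - (S s x - x) + lam • y := by abel
        have hre : lam⁻¹ • (S s (x + lam • y) - S s x) - y
            = lam⁻¹ • ((S s (x + lam • y) - (x + lam • y)) - (S s x - x)) := by
          rw [hsplit, smul_add, inv_smul_smul₀ hlam.ne', add_sub_cancel_right]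
        rw [hre, norm_smul, Real.norm_eq_abs, abs_of_pos (inv_pos.mpr hlam)]
        have hnb : ‖(S s (x + lam • y) - (x + lam • y)) - (S s x - x)‖ ≤ ε * lam / 4 := by
          calc ‖(S s (x + lam • y) - (x + lam • y)) - (S s x - x)‖
              ≤ ‖S s (x + lam • y) - (x + lam • y)‖ + ‖S s x - x‖ := norm_sub_le _ _
            _ ≤ ε * lam / 8 + ε * lam / 8 := add_le_add e1.le e3.le
            _ = ε * lam / 4 := by ring
        calc lam⁻¹ * ‖(S s (x + lam • y) - (x + lam • y)) - (S s x - x)‖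
            ≤ lam⁻¹ * (ε * lam / 4) := mul_le_mul_of_nonneg_left hnb (by positivity)
          _ = ε / 4 := by field_simp
    have hLinf : ∀ s : ℝ, 0 ≤ s → s ≤ h₁ →
        ‖lam⁻¹ • (S s x - S s (x - lam • y)) - y‖ ≤ ε / 4 := by
      intro s hs0 hs1
      rcases eq_or_lt_of_le hs0 with h | h
      · rw [← h, hid, hid]
        have hz : lam⁻¹ • (x - (x - lam • y)) - y = 0 := by
          rw [sub_sub_cancel, inv_smul_smul₀ hlam.ne', sub_self]
        rw [hz, norm_zero]; positivity
      · obtain ⟨hs1', hs2', hs3'⟩ := hsmall s h hs1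
        have e2 := hb2 s h hs2'
        have e3 := hb3 s h hs3'
        have hsplit : S s x - S s (x - lam • y)
            = (S s x - x) - (S s (x - lam • y) - (x - lam • y)) + lam • y := by abel
        have hre : lam⁻¹ • (S s x - S s (x - lam • y)) - y
            = lam⁻¹ • ((S s x - x) - (S s (x - lam • y) - (x - lam • y))) := by
          rw [hsplit, smul_add, inv_smul_smul₀ hlam.ne', add_sub_cancel_right]
        rw [hre, norm_smul, Real.norm_eq_abs, abs_of_pos (inv_pos.mpr hlam)]
        have hnb : ‖(S s x - x) - (S s (x - lam • y) - (x - lam • y))‖ ≤ ε * lam / 4 := by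
          calc ‖(S s x - x) - (S s (x - lam • y) - (x - lam • y))‖
              ≤ ‖S s x - x‖ + ‖S s (x - lam • y) - (x - lam • y)‖ := norm_sub_le _ _
            _ ≤ ε * lam / 8 + ε * lam / 8 := add_le_add e3.le e2.le
            _ = ε * lam / 4 := by ring
        calc lam⁻¹ * ‖(S s x - x) - (S s (x - lam • y) - (x - lam • y))‖
            ≤ lam⁻¹ * (ε * lam / 4) := mul_le_mul_of_nonneg_left hnb (by positivity)
          _ = ε / 4 := by field_simp
    -- memberships of reference points
    have hmem_x : ‖x - x‖ ≤ r := by simp [hrpos.le]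
    have hmem_xy1 : ‖(x + lam • y) - x‖ ≤ r := by
      rw [add_sub_cancel_left, norm_smul, Real.norm_eq_abs, abs_of_pos hlam]
      nlinarith [norm_nonneg y]
    have hmem_xy2 : ‖(x - lam • y) - x‖ ≤ r := by
      rw [sub_sub_cancel_left, norm_neg, norm_smul, Real.norm_eq_abs, abs_of_pos hlam]
      nlinarith [norm_nonneg y]
    -- main per-n estimate
    have Hn : ∀ n, N ≤ n → ∀ h : ℝ, 0 < h → h ≤ h₁ →
        ‖S h (xs n) - xs n - h • y‖ ≤ 2 * ε * h := by
      intro n hn h hpos hh1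
      obtain ⟨hxn1, hxn2⟩ := hxn n hn
      obtain ⟨hAn1, hAn2⟩ := hAn n hn
      have hAnn : ‖A (xs n)‖ ≤ ‖y‖ + 1 := by
        calc ‖A (xs n)‖ ≤ ‖A (xs n) - y‖ + ‖y‖ := by
              simpa using norm_add_le (A (xs n) - y) y
          _ ≤ ‖y‖ + 1 := by linarith
      have hmem_n : ‖xs n - x‖ ≤ r := le_trans hxn1 (by linarith)
      have hmem_np : ‖(xs n + lam • A (xs n)) - x‖ ≤ 3 * r / 4 := by
        calc ‖(xs n + lam • A (xs n)) - x‖ ≤ ‖xs n - x‖ + ‖lam • A (xs n)‖ := by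
              rw [add_sub_right_comm]; exact norm_add_le _ _
          _ ≤ r/4 + lam * (‖y‖ + 1) := by
              rw [norm_smul, Real.norm_eq_abs, abs_of_pos hlam]
              exact add_le_add hxn1 (mul_le_mul_of_nonneg_left hAnn hlam.le)
          _ ≤ 3 * r / 4 := by rw [hlamy]; linarith
      have hmem_nm : ‖(xs n - lam • A (xs n)) - x‖ ≤ 3 * r / 4 := by
        calc ‖(xs n - lam • A (xs n)) - x‖ ≤ ‖xs n - x‖ + ‖lam • A (xs n)‖ := by
              rw [sub_right_comm]; exact norm_sub_le _ _
          _ ≤ r/4 + lam * (‖y‖ + 1) := by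
              rw [norm_smul, Real.norm_eq_abs, abs_of_pos hlam]
              exact add_le_add hxn1 (mul_le_mul_of_nonneg_left hAnn hlam.le)
          _ ≤ 3 * r / 4 := by rw [hlamy]; linarith
      have hmem_np' : ‖(xs n + lam • A (xs n)) - x‖ ≤ r := le_trans hmem_np (by linarith)
      have hmem_nm' : ‖(xs n - lam • A (xs n)) - x‖ ≤ r := le_trans hmem_nm (by linarith)
      set φ : ℝ → X := fun s => S s (xs n) - xs n - s • y with hφdef
      have hφ0 : φ 0 = 0 := by simp [hφdef, hid]
      -- a Lipschitz-type step along the trajectory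
      have step : ∀ a b : ℝ, 0 ≤ a → a ≤ b → b ≤ h₁ →
          ‖S (b - a) (xs n) - xs n‖ ≤ r / 2 →
          ‖S b (xs n) - S a (xs n)‖ ≤ L * ‖S (b - a) (xs n) - xs n‖ := by
        intro a b ha0 hab hbh hsm
        have hmemσ : ‖S (b - a) (xs n) - x‖ ≤ r := by
          calc ‖S (b - a) (xs n) - x‖ ≤ ‖S (b - a) (xs n) - xs n‖ + ‖xs n - x‖ := by
                simpa using norm_add_le (S (b - a) (xs n) - xs n) (xs n - x)
            _ ≤ r/2 + r/4 := add_le_add hsm hxn1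
            _ ≤ r := by linarith
        have hbeq : S b (xs n) = S a (S (b - a) (xs n)) := by
          have := hsg (b - a) a (by linarith) ha0 (xs n)
          rwa [show a + (b - a) = b by ring] at this
        rw [hbeq]
        exact hLip a ha0 (le_trans (le_trans hab hbh) hh₁δ) _ _ hmemσ hmem_n
      -- continuity of trajectory
      have hgcont : ContinuousOn (fun s => S s (xs n)) (Icc 0 h) := by
        rw [Metric.continuousOn_iff]
        intro s₀ hs₀ ε'' hε''
        obtain ⟨δ₄, hδ₄, hb4⟩ := tendsto_aux (hc0 (xs n))
          (min (ε'' / (2 * (L + 1))) (r / 2)) (by positivity)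
        have core : ∀ a b : ℝ, a ∈ Icc (0:ℝ) h → b ∈ Icc (0:ℝ) h → a ≤ b → b - a < δ₄ →
            ‖S b (xs n) - S a (xs n)‖ < ε'' := by
          intro a b ha hb hab habδ
          rcases eq_or_lt_of_le hab with rfl | hlt
          · simpa using hε''
          · have hσ := hb4 (b - a) (by linarith) habδ
            have hσ2 : ‖S (b - a) (xs n) - xs n‖ ≤ r / 2 :=
              le_of_lt (lt_of_lt_of_le hσ (min_le_right _ _))
            have hσ1 : ‖S (b - a) (xs n) - xs n‖ < ε'' / (2 * (L + 1)) :=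
              lt_of_lt_of_le hσ (min_le_left _ _)
            calc ‖S b (xs n) - S a (xs n)‖ ≤ L * ‖S (b - a) (xs n) - xs n‖ :=
                  step a b ha.1 hab (le_trans hb.2 hh1) hσ2
              _ ≤ L * (ε'' / (2 * (L + 1))) :=
                  mul_le_mul_of_nonneg_left hσ1.le hL0
              _ < ε'' := by
                  rw [mul_div_assoc']
                  rw [div_lt_iff₀ (by positivity)]
                  nlinarith
        refine ⟨δ₄, hδ₄, fun s' hs' hd => ?_⟩
        rw [Real.dist_eq] at hd
        rcases le_total s' s₀ with hle | hle
        · rw [dist_eq_norm, norm_sub_rev]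
          refine core s' s₀ hs' hs₀ hle ?_
          have : s₀ - s' ≤ |s' - s₀| := by rw [abs_sub_comm]; exact le_abs_self _
          linarith
        · rw [dist_eq_norm]
          refine core s₀ s' hs₀ hs' hle ?_
          have : s' - s₀ ≤ |s' - s₀| := le_abs_self _
          linarith
      have hφcont : ContinuousOn φ (Icc 0 h) := by
        apply ContinuousOn.sub
        · exact hgcont.sub continuousOn_const
        · exact (continuous_id.smul continuous_const).continuousOn
      have hdini : ∀ s, 0 ≤ s → s < h → ∀ ε' > 0, ∃ τ, 0 < τ ∧ s + τ ≤ h ∧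
          ‖φ (s + τ) - φ s‖ ≤ (2 * ε + ε') * τ := by
        intro s hs0 hsh ε' hε'
        have hsh₁ : s ≤ h₁ := le_trans hsh.le hh1
        have hsδ : s ≤ δ := le_trans hsh₁ hh₁δ
        obtain ⟨τ₀, hτ₀, hbv⟩ := tendsto_aux (hA (xs n) (hxs n))
          (min 1 (ε' / (2 * L + 1))) (by positivity)
        set τ := min (min lam (h - s)) (τ₀ / 2) with hτdef
        have hτpos : 0 < τ := lt_min (lt_min hlam (by linarith)) (by positivity)
        have hτlam : τ ≤ lam := le_trans (min_le_left _ _) (min_le_left _ _)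
        have hτhs : s + τ ≤ h := by
          have h9 : τ ≤ h - s := le_trans (min_le_left (min lam (h - s)) (τ₀ / 2))
            (min_le_right lam (h - s))
          linarith
        have hττ₀ : τ < τ₀ := lt_of_le_of_lt (min_le_right _ _) (by linarith)
        set v := τ⁻¹ • (S τ (xs n) - xs n) with hvdef
        have hvb := hbv τ hτpos hττ₀
        have hv1 : ‖v - A (xs n)‖ ≤ 1 := le_of_lt (lt_of_lt_of_le hvb (min_le_left _ _))
        have hv2 : ‖v - A (xs n)‖ ≤ ε' / (2 * L + 1) :=
          le_of_lt (lt_of_lt_of_le hvb (min_le_right _ _))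
        have hSτ : S τ (xs n) = xs n + τ • v := by
          rw [hvdef, smul_inv_smul₀ hτpos.ne']
          abel
        -- memberships
        have hmem_vp : ‖(xs n + lam • v) - x‖ ≤ r := by
          have hrw : (xs n + lam • v) - x = ((xs n + lam • A (xs n)) - x) + lam • (v - A (xs n)) := by
            rw [smul_sub]; abel
          rw [hrw]
          calc ‖((xs n + lam • A (xs n)) - x) + lam • (v - A (xs n))‖
              ≤ ‖(xs n + lam • A (xs n)) - x‖ + ‖lam • (v - A (xs n))‖ := norm_add_le _ _
            _ ≤ 3 * r / 4 + lam * 1 := by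
                refine add_le_add hmem_np ?_
                rw [norm_smul, Real.norm_eq_abs, abs_of_pos hlam]
                exact mul_le_mul_of_nonneg_left hv1 hlam.le
            _ ≤ r := by linarith
        have hmem_vm : ‖(xs n - lam • v) - x‖ ≤ r := by
          have hrw : (xs n - lam • v) - x = ((xs n - lam • A (xs n)) - x) - lam • (v - A (xs n)) := by
            rw [smul_sub]; abel
          rw [hrw]
          calc ‖((xs n - lam • A (xs n)) - x) - lam • (v - A (xs n))‖
              ≤ ‖(xs n - lam • A (xs n)) - x‖ + ‖lam • (v - A (xs n))‖ := norm_sub_le _ _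
            _ ≤ 3 * r / 4 + lam * 1 := by
                refine add_le_add hmem_nm ?_
                rw [norm_smul, Real.norm_eq_abs, abs_of_pos hlam]
                exact mul_le_mul_of_nonneg_left hv1 hlam.le
            _ ≤ r := by linarith
        -- increment formula
        have hφinc : φ (s + τ) - φ s = S s (S τ (xs n)) - S s (xs n) - τ • y := by
          have hS : S (s + τ) (xs n) = S s (S τ (xs n)) := hsg τ s hτpos.le hs0 (xs n)
          show (S (s + τ) (xs n) - xs n - (s + τ) • y) - (S s (xs n) - xs n - s • y)
              = S s (S τ (xs n)) - S s (xs n) - τ • y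
          rw [hS, add_smul]
          abel
        -- upper estimate
        set U := lam⁻¹ • (S s (xs n + lam • v) - S s (xs n)) with hUdef
        have hup : φ (s + τ) - φ s ≤ τ • (U - y) := by
          have hkey : (τ / lam) • (xs n + lam • v) + (1 - τ / lam) • (xs n) = xs n + τ • v := by
            match_scalars
            · field_simp
              ring
            · field_simp
          have h1 := hconv s hs0 (xs n + lam • v) (xs n) (τ / lam) (by positivity)
            (by rw [div_le_one hlam]; exact hτlam)
          rw [hkey, ← hSτ] at h1
          have h3 := sub_le_sub_right h1 (S s (xs n))
          have h4 : (τ / lam) • S s (xs n + lam • v) + (1 - τ / lam) • S s (xs n) - S s (xs n)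
              = (τ / lam) • (S s (xs n + lam • v) - S s (xs n)) := by module
          rw [h4] at h3
          have h5 : (τ / lam) • (S s (xs n + lam • v) - S s (xs n)) = τ • U := by
            rw [hUdef, smul_smul τ lam⁻¹, div_eq_mul_inv]
          rw [h5] at h3
          rw [hφinc, smul_sub]
          exact sub_le_sub_right h3 (τ • y)
        -- lower estimate
        set LL := lam⁻¹ • (S s (xs n) - S s (xs n - lam • v)) with hLLdef
        have hlo : τ • (LL - y) ≤ φ (s + τ) - φ s := by
          have hkey : (lam / (lam + τ)) • (xs n + τ • v)
              + (1 - lam / (lam + τ)) • (xs n - lam • v) = xs n := by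
            have hlt : lam + τ ≠ 0 := by positivity
            match_scalars
            · field_simp
              ring
            · field_simp
              ring
          have h1 := hconv s hs0 (xs n + τ • v) (xs n - lam • v) (lam / (lam + τ))
            (by positivity) (by rw [div_le_one (by positivity)]; linarith)
          rw [hkey, ← hSτ] at h1
          have h2 := smul_le_smul_of_nonneg_left h1
            (le_of_lt (by positivity : (0:ℝ) < (lam + τ) / lam))
          have h3 : ((lam + τ) / lam) • ((lam / (lam + τ)) • S s (S τ (xs n))
              + (1 - lam / (lam + τ)) • S s (xs n - lam • v))
              = S s (S τ (xs n)) + (τ / lam) • S s (xs n - lam • v) := by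
            have hlt : lam + τ ≠ 0 := by positivity
            match_scalars
            · field_simp
            · field_simp
              ring
          rw [h3] at h2
          have h6 := sub_le_sub_right h2 ((τ / lam) • S s (xs n - lam • v))
          rw [add_sub_cancel_right] at h6
          have h7 := sub_le_sub_right h6 (S s (xs n))
          have h8 : ((lam + τ) / lam) • S s (xs n) - (τ / lam) • S s (xs n - lam • v) - S s (xs n)
              = τ • LL := by
            rw [hLLdef]
            match_scalars
            field_simp
            ring
            ring
          rw [h8] at h7
          rw [hφinc, smul_sub]
          exact sub_le_sub_right h7 (τ • y)
        -- sandwich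
        have hsand := norm_le_of_sandwich hlo hup
        have hτn : ∀ z : X, ‖τ • z‖ = τ * ‖z‖ := fun z => by
          rw [norm_smul, Real.norm_eq_abs, abs_of_pos hτpos]
        rw [hτn, hτn] at hsand
        -- bound ‖U - y‖
        have hUb : ‖U - y‖ ≤ 3 * ε / 4 + L * ‖v - A (xs n)‖ := by
          set Un := lam⁻¹ • (S s (xs n + lam • A (xs n)) - S s (xs n)) with hUndef
          set Uinf := lam⁻¹ • (S s (x + lam • y) - S s x) with hUinfdef
          have d1 : ‖U - Un‖ ≤ L * ‖v - A (xs n)‖ := by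
            have hrw : U - Un = lam⁻¹ • (S s (xs n + lam • v) - S s (xs n + lam • A (xs n))) := by
              rw [hUdef, hUndef, ← smul_sub]
              congr 1
              abel
            rw [hrw, norm_smul, Real.norm_eq_abs, abs_of_pos (inv_pos.mpr hlam)]
            have harg : ‖(xs n + lam • v) - (xs n + lam • A (xs n))‖ = lam * ‖v - A (xs n)‖ := by
              rw [show (xs n + lam • v) - (xs n + lam • A (xs n)) = lam • (v - A (xs n)) by
                rw [smul_sub]; abel, norm_smul, Real.norm_eq_abs, abs_of_pos hlam]
            have hl := hLip s hs0 hsδ _ _ hmem_vp hmem_np'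
            rw [harg] at hl
            calc lam⁻¹ * ‖S s (xs n + lam • v) - S s (xs n + lam • A (xs n))‖
                ≤ lam⁻¹ * (L * (lam * ‖v - A (xs n)‖)) :=
                  mul_le_mul_of_nonneg_left hl (by positivity)
              _ = L * ‖v - A (xs n)‖ := by field_simp
          have d2 : ‖Un - Uinf‖ ≤ ε / 2 := by
            have hrw : Un - Uinf = lam⁻¹ • ((S s (xs n + lam • A (xs n)) - S s (x + lam • y))
                - (S s (xs n) - S s x)) := by
              rw [hUndef, hUinfdef, ← smul_sub]
              congr 1
              abel
            rw [hrw, norm_smul, Real.norm_eq_abs, abs_of_pos (inv_pos.mpr hlam)]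
            have n1 : ‖S s (xs n + lam • A (xs n)) - S s (x + lam • y)‖
                ≤ L * (‖xs n - x‖ + lam * ‖A (xs n) - y‖) := by
              have hl := hLip s hs0 hsδ _ _ hmem_np' hmem_xy1
              refine le_trans hl (mul_le_mul_of_nonneg_left ?_ hL0)
              calc ‖(xs n + lam • A (xs n)) - (x + lam • y)‖
                  = ‖(xs n - x) + lam • (A (xs n) - y)‖ := by
                    congr 1
                    rw [smul_sub]; abel
                _ ≤ ‖xs n - x‖ + lam * ‖A (xs n) - y‖ := by
                    refine le_trans (norm_add_le _ _) ?_
                    rw [norm_smul, Real.norm_eq_abs, abs_of_pos hlam]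
            have n2 : ‖S s (xs n) - S s x‖ ≤ L * ‖xs n - x‖ :=
              hLip s hs0 hsδ _ _ hmem_n hmem_x
            have n3 : ‖(S s (xs n + lam • A (xs n)) - S s (x + lam • y)) - (S s (xs n) - S s x)‖
                ≤ L * (‖xs n - x‖ + lam * ‖A (xs n) - y‖) + L * ‖xs n - x‖ :=
              le_trans (norm_sub_le _ _) (add_le_add n1 n2)
            have hfin : lam⁻¹ * (L * (‖xs n - x‖ + lam * ‖A (xs n) - y‖) + L * ‖xs n - x‖)
                ≤ ε / 2 := by
              rw [inv_mul_le_iff₀ hlam]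
              have t1 : ‖xs n - x‖ + lam * ‖A (xs n) - y‖
                  ≤ ε * lam / (8 * (L + 1)) + lam * (ε / (4 * (L + 1))) :=
                add_le_add hxn2 (mul_le_mul_of_nonneg_left hAn2 hlam.le)
              have m1 : L * (‖xs n - x‖ + lam * ‖A (xs n) - y‖) + L * ‖xs n - x‖
                  ≤ L * (ε * lam / (8 * (L + 1)) + lam * (ε / (4 * (L + 1))))
                    + L * (ε * lam / (8 * (L + 1))) :=
                add_le_add (mul_le_mul_of_nonneg_left t1 hL0)
                  (mul_le_mul_of_nonneg_left hxn2 hL0)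
              have m2 : L * (ε * lam / (8 * (L + 1)) + lam * (ε / (4 * (L + 1))))
                  + L * (ε * lam / (8 * (L + 1))) = (L / (L + 1)) * (ε * lam / 2) := by
                field_simp
                ring
              have m3 : (L / (L + 1)) * (ε * lam / 2) ≤ 1 * (ε * lam / 2) :=
                mul_le_mul_of_nonneg_right
                  (by rw [div_le_one (by positivity)]; linarith) (by positivity)
              have m4 : (1:ℝ) * (ε * lam / 2) = lam * (ε / 2) := by ring
              linarith [m1, m2.le, m3, m4.le]
            exact le_trans (mul_le_mul_of_nonneg_left n3 (by positivity)) hfin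
          have d3 : ‖Uinf - y‖ ≤ ε / 4 := hUinf s hs0 hsh₁
          calc ‖U - y‖ = ‖(U - Un) + (Un - Uinf) + (Uinf - y)‖ := by
                congr 1; abel
            _ ≤ ‖U - Un‖ + ‖Un - Uinf‖ + ‖Uinf - y‖ := norm_add₃_le
            _ ≤ L * ‖v - A (xs n)‖ + ε / 2 + ε / 4 := add_le_add (add_le_add d1 d2) d3
            _ = 3 * ε / 4 + L * ‖v - A (xs n)‖ := by ring
        -- bound ‖LL - y‖
        have hLb : ‖LL - y‖ ≤ 3 * ε / 4 + L * ‖v - A (xs n)‖ := by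
          set Ln := lam⁻¹ • (S s (xs n) - S s (xs n - lam • A (xs n))) with hLndef
          set Linf := lam⁻¹ • (S s x - S s (x - lam • y)) with hLinfdef
          have d1 : ‖LL - Ln‖ ≤ L * ‖v - A (xs n)‖ := by
            have hrw : LL - Ln = lam⁻¹ • (S s (xs n - lam • A (xs n)) - S s (xs n - lam • v)) := by
              rw [hLLdef, hLndef, ← smul_sub]
              congr 1
              abel
            rw [hrw, norm_smul, Real.norm_eq_abs, abs_of_pos (inv_pos.mpr hlam)]
            have harg : ‖(xs n - lam • A (xs n)) - (xs n - lam • v)‖ = lam * ‖v - A (xs n)‖ := by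
              rw [show (xs n - lam • A (xs n)) - (xs n - lam • v) = lam • (v - A (xs n)) by
                rw [smul_sub]; abel, norm_smul, Real.norm_eq_abs, abs_of_pos hlam]
            have hl := hLip s hs0 hsδ _ _ hmem_nm' hmem_vm
            rw [harg] at hl
            calc lam⁻¹ * ‖S s (xs n - lam • A (xs n)) - S s (xs n - lam • v)‖
                ≤ lam⁻¹ * (L * (lam * ‖v - A (xs n)‖)) :=
                  mul_le_mul_of_nonneg_left hl (by positivity)
              _ = L * ‖v - A (xs n)‖ := by field_simp
          have d2 : ‖Ln - Linf‖ ≤ ε / 2 := by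
            have hrw : Ln - Linf = lam⁻¹ • ((S s (xs n) - S s x)
                - (S s (xs n - lam • A (xs n)) - S s (x - lam • y))) := by
              rw [hLndef, hLinfdef, ← smul_sub]
              congr 1
              abel
            rw [hrw, norm_smul, Real.norm_eq_abs, abs_of_pos (inv_pos.mpr hlam)]
            have n1 : ‖S s (xs n - lam • A (xs n)) - S s (x - lam • y)‖
                ≤ L * (‖xs n - x‖ + lam * ‖A (xs n) - y‖) := by
              have hl := hLip s hs0 hsδ _ _ hmem_nm' hmem_xy2
              refine le_trans hl (mul_le_mul_of_nonneg_left ?_ hL0)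
              calc ‖(xs n - lam • A (xs n)) - (x - lam • y)‖
                  = ‖(xs n - x) - lam • (A (xs n) - y)‖ := by
                    congr 1
                    rw [smul_sub]; abel
                _ ≤ ‖xs n - x‖ + lam * ‖A (xs n) - y‖ := by
                    refine le_trans (norm_sub_le _ _) ?_
                    rw [norm_smul, Real.norm_eq_abs, abs_of_pos hlam]
            have n2 : ‖S s (xs n) - S s x‖ ≤ L * ‖xs n - x‖ :=
              hLip s hs0 hsδ _ _ hmem_n hmem_x
            have n3 : ‖(S s (xs n) - S s x) - (S s (xs n - lam • A (xs n)) - S s (x - lam • y))‖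
                ≤ L * ‖xs n - x‖ + L * (‖xs n - x‖ + lam * ‖A (xs n) - y‖) :=
              le_trans (norm_sub_le _ _) (add_le_add n2 n1)
            have hfin : lam⁻¹ * (L * ‖xs n - x‖ + L * (‖xs n - x‖ + lam * ‖A (xs n) - y‖))
                ≤ ε / 2 := by
              rw [inv_mul_le_iff₀ hlam]
              have t1 : ‖xs n - x‖ + lam * ‖A (xs n) - y‖
                  ≤ ε * lam / (8 * (L + 1)) + lam * (ε / (4 * (L + 1))) :=
                add_le_add hxn2 (mul_le_mul_of_nonneg_left hAn2 hlam.le)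
              have m1 : L * ‖xs n - x‖ + L * (‖xs n - x‖ + lam * ‖A (xs n) - y‖)
                  ≤ L * (ε * lam / (8 * (L + 1)))
                    + L * (ε * lam / (8 * (L + 1)) + lam * (ε / (4 * (L + 1)))) :=
                add_le_add (mul_le_mul_of_nonneg_left hxn2 hL0)
                  (mul_le_mul_of_nonneg_left t1 hL0)
              have m2 : L * (ε * lam / (8 * (L + 1)))
                  + L * (ε * lam / (8 * (L + 1)) + lam * (ε / (4 * (L + 1))))
                  = (L / (L + 1)) * (ε * lam / 2) := by
                field_simp
                ring
              have m3 : (L / (L + 1)) * (ε * lam / 2) ≤ 1 * (ε * lam / 2) :=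
                mul_le_mul_of_nonneg_right
                  (by rw [div_le_one (by positivity)]; linarith) (by positivity)
              have m4 : (1:ℝ) * (ε * lam / 2) = lam * (ε / 2) := by ring
              linarith [m1, m2.le, m3, m4.le]
            exact le_trans (mul_le_mul_of_nonneg_left n3 (by positivity)) hfin
          have d3 : ‖Linf - y‖ ≤ ε / 4 := hLinf s hs0 hsh₁
          calc ‖LL - y‖ = ‖(LL - Ln) + (Ln - Linf) + (Linf - y)‖ := by
                congr 1; abel
            _ ≤ ‖LL - Ln‖ + ‖Ln - Linf‖ + ‖Linf - y‖ := norm_add₃_le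
            _ ≤ L * ‖v - A (xs n)‖ + ε / 2 + ε / 4 := add_le_add (add_le_add d1 d2) d3
            _ = 3 * ε / 4 + L * ‖v - A (xs n)‖ := by ring
        refine ⟨τ, hτpos, hτhs, ?_⟩
        have hLv : 2 * L * ‖v - A (xs n)‖ ≤ ε' := by
          have : 2 * L * ‖v - A (xs n)‖ ≤ 2 * L * (ε' / (2 * L + 1)) :=
            mul_le_mul_of_nonneg_left hv2 (by positivity)
          refine le_trans this ?_
          rw [mul_div_assoc']
          rw [div_le_iff₀ (by positivity)]
          nlinarith
        calc ‖φ (s + τ) - φ s‖ ≤ τ * ‖LL - y‖ + τ * ‖U - y‖ := hsand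
          _ ≤ τ * (3 * ε / 4 + L * ‖v - A (xs n)‖) + τ * (3 * ε / 4 + L * ‖v - A (xs n)‖) :=
              add_le_add (mul_le_mul_of_nonneg_left hLb hτpos.le)
                (mul_le_mul_of_nonneg_left hUb hτpos.le)
          _ = (3 * ε / 2 + 2 * L * ‖v - A (xs n)‖) * τ := by ring
          _ ≤ (2 * ε + ε') * τ :=
              mul_le_mul_of_nonneg_right (by linarith) hτpos.le
      have hmvi := mvi φ h (2 * ε) hpos (by positivity) hφcont hdini
      rw [hφ0, sub_zero] at hmvi
      exact hmvi
    -- conclusion of `key`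
    refine ⟨h₁, hh₁pos, fun h hpos hh1 => ?_⟩
    have hub : ∀ n, N ≤ n → ‖S h x - x - h • y‖ ≤ (L + 1) * ‖xs n - x‖ + 2 * ε * h := by
      intro n hn
      obtain ⟨hxn1, _⟩ := hxn n hn
      have hmem_n : ‖xs n - x‖ ≤ r := le_trans hxn1 (by linarith)
      have hd : S h x - x - h • y
          = (S h x - S h (xs n)) + (xs n - x) + (S h (xs n) - xs n - h • y) := by abel
      rw [hd]
      have hl := hLip h hpos.le (le_trans hh1 hh₁δ) x (xs n) (by simp [hrpos.le]) hmem_n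
      calc ‖(S h x - S h (xs n)) + (xs n - x) + (S h (xs n) - xs n - h • y)‖
          ≤ ‖S h x - S h (xs n)‖ + ‖xs n - x‖ + ‖S h (xs n) - xs n - h • y‖ := norm_add₃_le
        _ ≤ L * ‖x - xs n‖ + ‖xs n - x‖ + 2 * ε * h :=
            add_le_add (add_le_add hl le_rfl) (Hn n hn h hpos hh1)
        _ = (L + 1) * ‖xs n - x‖ + 2 * ε * h := by rw [norm_sub_rev x (xs n)]; ring
    have hlim : ‖S h x - x - h • y‖ ≤ 2 * ε * h := by
      have h1 : Tendsto (fun n => ‖xs n - x‖) atTop (𝓝 0) := by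
        have := (hx.sub (tendsto_const_nhds (x := x))).norm
        simpa using this
      have htd : Tendsto (fun n => (L + 1) * ‖xs n - x‖ + 2 * ε * h) atTop (𝓝 (2 * ε * h)) := by
        have := (h1.const_mul (L + 1)).add_const (2 * ε * h)
        simpa using this
      exact ge_of_tendsto htd (eventually_atTop.mpr ⟨N, hub⟩)
    have hre : h⁻¹ • (S h x - x) - y = h⁻¹ • (S h x - x - h • y) := by
      rw [smul_sub h⁻¹ (S h x - x) (h • y), inv_smul_smul₀ hpos.ne']
    rw [hre, norm_smul, Real.norm_eq_abs, abs_of_pos (inv_pos.mpr hpos)]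
    calc h⁻¹ * ‖S h x - x - h • y‖ ≤ h⁻¹ * (2 * ε * h) :=
          mul_le_mul_of_nonneg_left hlim (by positivity)
      _ = 2 * ε := by field_simp
  -- conclude
  have htend : Tendsto (fun h : ℝ => h⁻¹ • (S h x - x)) (𝓝[>] (0 : ℝ)) (𝓝 y) := by
    rw [Metric.tendsto_nhdsWithin_nhds]
    intro ε hε
    obtain ⟨h₁, hh₁, hkey⟩ := key (ε / 3) (by positivity)
    refine ⟨h₁, hh₁, fun h hmem hdist => ?_⟩
    rw [Real.dist_eq, sub_zero] at hdist
    have h0 : 0 < h := hmem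
    rw [dist_eq_norm]
    calc ‖h⁻¹ • (S h x - x) - y‖ ≤ 2 * (ε / 3) :=
          hkey h h0 (by rw [abs_of_pos h0] at hdist; linarith)
      _ < ε := by linarith
  have hxmem : x ∈ genDom S := ⟨y, htend⟩
  refine ⟨hxmem, ?_⟩
  exact tendsto_nhds_unique (hA x hxmem) htend
end

section
/- Let X be a Banach lattice with order continuous norm, and let S and T be convex C₀-semigroups on X with generators A and B, respectively. Suppose B ⊂ A, i.e., D(B) ⊆ D(A) and Ax = Bx for all x ∈ D(B), and suppose D(B) is dense in X. Then S(t)x = T(t)x for all t ≥ 0 and all x ∈ X. -/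
open Filter Topology Set

variable {X : Type*} [NormedAddCommGroup X] [Lattice X] [HasSolidNorm X]
    [IsOrderedAddMonoid X] [NormedSpace ℝ X] [CompleteSpace X]

section AuxSG
set_option linter.unusedSectionVars false

variable {X : Type*} [NormedAddCommGroup X] [Lattice X] [HasSolidNorm X]
    [IsOrderedAddMonoid X] [NormedSpace ℝ X] [CompleteSpace X]

lemma aux_norm_le_add_of_le_of_neg_le {a u v : X} (h1 : a ≤ u) (h2 : -a ≤ v) :
    ‖a‖ ≤ ‖u‖ + ‖v‖ := by
  have hu : u ≤ |u| + |v| := (le_abs_self u).trans (le_add_of_nonneg_right (abs_nonneg v))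
  have hv : v ≤ |u| + |v| := (le_abs_self v).trans (le_add_of_nonneg_left (abs_nonneg u))
  have habs : |a| ≤ |u| + |v| := abs_le'.2 ⟨h1.trans hu, h2.trans hv⟩
  calc ‖a‖ = ‖|a|‖ := (norm_abs_eq_norm a).symm
    _ ≤ ‖|u| + |v|‖ := by
        refine norm_le_norm_of_abs_le_abs ?_
        rwa [abs_abs, abs_of_nonneg (add_nonneg (abs_nonneg u) (abs_nonneg v))]
    _ ≤ ‖|u|‖ + ‖|v|‖ := norm_add_le _ _
    _ = ‖u‖ + ‖v‖ := by rw [norm_abs_eq_norm, norm_abs_eq_norm]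

lemma aux_norm_le_of_nonneg_le {a b : X} (h0 : 0 ≤ a) (h : a ≤ b) : ‖a‖ ≤ ‖b‖ := by
  refine norm_le_norm_of_abs_le_abs ?_
  rwa [abs_of_nonneg h0, abs_of_nonneg (h0.trans h)]

/-- Bundled hypotheses of a convex C₀-semigroup. -/
structure SG (S : ℝ → X → X) : Prop where
  conv : ∀ t : ℝ, 0 ≤ t → ∀ x y : X, ∀ a : ℝ, 0 ≤ a → a ≤ 1 →
    S t (a • x + (1 - a) • y) ≤ a • S t x + (1 - a) • S t y
  bdd : ∀ t : ℝ, 0 ≤ t → ∀ r : ℝ, 0 < r → ∃ M : ℝ, ∀ x : X, ‖x‖ ≤ r → ‖S t x‖ ≤ M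
  idm : ∀ x : X, S 0 x = x
  sg : ∀ s t : ℝ, 0 ≤ s → 0 ≤ t → ∀ x : X, S (t + s) x = S t (S s x)
  c0 : ∀ x : X, Tendsto (fun t : ℝ => S t x) (𝓝[>] (0 : ℝ)) (𝓝 x)

variable [PosSMulStrictMono ℝ X] [PosSMulReflectLT ℝ X] {S : ℝ → X → X}

/-- Convexity rearranged as a difference estimate. -/
lemma SG.conv_diff (hS : SG S) {t a : ℝ} (ht : 0 ≤ t) (ha0 : 0 ≤ a) (ha1 : a ≤ 1) (p y : X) :
    S t (a • p + (1 - a) • y) - S t y ≤ a • (S t p - S t y) := by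
  have h := hS.conv t ht p y a ha0 ha1
  have : a • S t p + (1 - a) • S t y - S t y = a • (S t p - S t y) := by
    rw [sub_smul, one_smul, smul_sub]; abel
  calc S t (a • p + (1 - a) • y) - S t y ≤ a • S t p + (1-a) • S t y - S t y :=
        sub_le_sub_right h _
    _ = a • (S t p - S t y) := this

/-- One-sided order estimate for a convex operator bounded on a ball. -/
lemma SG.one_sided (hS : SG S) {t ρ M : ℝ} (ht : 0 ≤ t) (hρ : 0 < ρ) {c : X}
    (hM : ∀ w : X, ‖w - c‖ ≤ ρ → ‖S t w‖ ≤ M)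
    {x y : X} (hx : ‖x - c‖ ≤ ρ/4) (hy : ‖y - c‖ ≤ ρ/4) (hne : x ≠ y) :
    ∃ q : X, S t x - S t y ≤ q ∧ ‖q‖ ≤ (4*M/ρ) * ‖x - y‖ := by
  have hM0 : 0 ≤ M := le_trans (norm_nonneg _) (hM c (by simp [le_of_lt hρ]))
  have hxy : (0:ℝ) < ‖x - y‖ := by rw [norm_pos_iff]; exact sub_ne_zero_of_ne hne
  have hxyle : ‖x - y‖ ≤ ρ/2 := by
    have hd : x - y = (x - c) - (y - c) := by abel
    have := norm_sub_le (x - c) (y - c)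
    rw [← hd] at this; linarith
  set u : X := ‖x - y‖⁻¹ • (x - y) with hu
  have hun : ‖u‖ = 1 := by
    rw [hu, norm_smul, norm_inv, norm_norm, inv_mul_cancel₀ hxy.ne']
  set p : X := y + (ρ/2) • u with hp
  set l : ℝ := ‖x - y‖ / (ρ/2) with hl
  have hl0 : 0 ≤ l := le_of_lt (div_pos hxy (by linarith))
  have hl1 : l ≤ 1 := by rw [hl, div_le_one (by linarith : (0:ℝ) < ρ/2)]; exact hxyle
  have hcomb : l • p + (1 - l) • y = x := by
    have h1 : l * (ρ/2) = ‖x - y‖ := by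
      rw [hl]; field_simp
    have h2 : (‖x - y‖ : ℝ) • u = x - y := by
      rw [hu, smul_smul, mul_inv_cancel₀ hxy.ne', one_smul]
    rw [hp, smul_add, smul_smul, h1, h2, sub_smul, one_smul]
    abel
  refine ⟨l • (S t p - S t y), ?_, ?_⟩
  · have := hS.conv_diff ht hl0 hl1 p y
    rwa [hcomb] at this
  · have hpc : ‖p - c‖ ≤ ρ := by
      have : p - c = (y - c) + (ρ/2) • u := by rw [hp]; abel
      rw [this]
      calc ‖(y - c) + (ρ/2) • u‖ ≤ ‖y - c‖ + ‖(ρ/2) • u‖ := norm_add_le _ _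
        _ ≤ ρ/4 + ρ/2 := by
            rw [norm_smul, hun, mul_one, Real.norm_eq_abs, abs_of_pos (by linarith : (0:ℝ) < ρ/2)]
            linarith
        _ ≤ ρ := by linarith
    have hyc : ‖y - c‖ ≤ ρ := by linarith
    calc ‖l • (S t p - S t y)‖ = l * ‖S t p - S t y‖ := by
          rw [norm_smul, Real.norm_eq_abs, abs_of_nonneg hl0]
      _ ≤ l * (2*M) := by
          refine mul_le_mul_of_nonneg_left ?_ hl0
          calc ‖S t p - S t y‖ ≤ ‖S t p‖ + ‖S t y‖ := norm_sub_le _ _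
            _ ≤ 2*M := by have := hM p hpc; have := hM y hyc; linarith
      _ = (4*M/ρ) * ‖x - y‖ := by rw [hl]; field_simp; ring

/-- A convex operator bounded on a ball is Lipschitz on the quarter ball. -/
lemma SG.lip_of_bound (hS : SG S) {t ρ M : ℝ} (ht : 0 ≤ t) (hρ : 0 < ρ) {c : X}
    (hM : ∀ w : X, ‖w - c‖ ≤ ρ → ‖S t w‖ ≤ M)
    {x y : X} (hx : ‖x - c‖ ≤ ρ/4) (hy : ‖y - c‖ ≤ ρ/4) :
    ‖S t x - S t y‖ ≤ (8*M/ρ) * ‖x - y‖ := by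
  rcases eq_or_ne x y with rfl | hne
  · simp
  obtain ⟨q, hq1, hq2⟩ := hS.one_sided ht hρ hM hx hy hne
  obtain ⟨q', hq1', hq2'⟩ := hS.one_sided ht hρ hM hy hx (Ne.symm hne)
  have h2 : -(S t x - S t y) ≤ q' := by rw [neg_sub]; exact hq1'
  have := aux_norm_le_add_of_le_of_neg_le hq1 h2
  rw [norm_sub_rev y x] at hq2'
  calc ‖S t x - S t y‖ ≤ ‖q‖ + ‖q'‖ := this
    _ ≤ (4*M/ρ) * ‖x - y‖ + (4*M/ρ) * ‖x - y‖ := by linarith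
    _ = (8*M/ρ) * ‖x - y‖ := by ring

/-- Each `S t` is Lipschitz on every ball around the origin. -/
lemma SG.lip_ball (hS : SG S) {t : ℝ} (ht : 0 ≤ t) {r : ℝ} (hr : 0 < r) :
    ∃ L : ℝ, 0 < L ∧ ∀ x y : X, ‖x‖ ≤ r → ‖y‖ ≤ r → ‖S t x - S t y‖ ≤ L * ‖x - y‖ := by
  obtain ⟨M, hM⟩ := hS.bdd t ht (4*r) (by linarith)
  refine ⟨max (8*M/(4*r)) 1, lt_of_lt_of_le one_pos (le_max_right _ _), fun x y hx hy => ?_⟩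
  have hb : ∀ w : X, ‖w - 0‖ ≤ 4*r → ‖S t w‖ ≤ M := by
    intro w hw; exact hM w (by simpa using hw)
  have := hS.lip_of_bound ht (by linarith : (0:ℝ) < 4*r) hb
    (by simpa using hx.trans (by linarith : r ≤ 4*r/4))
    (by simpa using hy.trans (by linarith : r ≤ 4*r/4))
  exact this.trans (mul_le_mul_of_nonneg_right (le_max_left _ _) (norm_nonneg _))

/-- Each `S t` is continuous. -/
lemma SG.cont (hS : SG S) {t : ℝ} (ht : 0 ≤ t) : Continuous (S t) := by
  rw [continuous_iff_continuousAt]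
  intro x0
  obtain ⟨L, hL0, hL⟩ := hS.lip_ball ht (show (0:ℝ) < ‖x0‖ + 1 by positivity)
  refine continuousAt_of_locally_lipschitz one_pos L (fun y hy => ?_)
  rw [dist_eq_norm, dist_eq_norm] at *
  refine hL y x0 ?_ (by linarith [norm_nonneg x0])
  have h1 : ‖y‖ ≤ ‖y - x0‖ + ‖x0‖ := by
    have := norm_add_le (y - x0) x0
    simpa using this
  linarith

lemma SG.small_time (hS : SG S) (x : X) {ε : ℝ} (hε : 0 < ε) :
    ∃ δ : ℝ, 0 < δ ∧ ∀ t : ℝ, 0 ≤ t → t ≤ δ → ‖S t x - x‖ ≤ ε := by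
  obtain ⟨δ, hδ0, hδ⟩ := Metric.tendsto_nhdsWithin_nhds.mp (hS.c0 x) ε hε
  refine ⟨δ/2, by linarith, fun t ht0 htδ => ?_⟩
  rcases ht0.eq_or_lt with rfl | ht0'
  · rw [hS.idm]; simp [le_of_lt hε]
  · have := hδ (mem_Ioi.mpr ht0')
      (show dist t 0 < δ by rw [Real.dist_eq, sub_zero, abs_of_pos ht0']; linarith)
    rw [dist_eq_norm] at this
    exact this.le

lemma SG.goodBall (hS : SG S) (z : X) {ρ : ℝ} (hρ : 0 < ρ) :
    ∃ (x1 : X) (ε δ : ℝ), 0 < ε ∧ 0 < δ ∧ ‖x1 - z‖ ≤ ρ ∧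
      ∀ t : ℝ, 0 ≤ t → t ≤ δ → ∀ w : X, ‖w - x1‖ ≤ ε → ‖S t w - w‖ ≤ 1 := by
  classical
  set K : Set X := Metric.closedBall z ρ with hK
  haveI : CompleteSpace K := (Metric.isClosed_closedBall (x := z) (ε := ρ)).completeSpace_coe
  haveI : Nonempty K := ⟨⟨z, Metric.mem_closedBall_self (le_of_lt hρ)⟩⟩
  set F : ℕ → Set K :=
    fun n => {w : K | ∀ t : ℝ, 0 ≤ t → t ≤ 1/(n+1) → ‖S t (w:X) - (w:X)‖ ≤ 1} with hF
  have hFc : ∀ n, IsClosed (F n) := by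
    intro n
    have hrw : F n = ⋂ t ∈ {t : ℝ | 0 ≤ t ∧ t ≤ 1/(n+1)}, {w : K | ‖S t (w:X) - (w:X)‖ ≤ 1} := by
      ext w
      simp only [hF, mem_setOf_eq, mem_iInter]
      constructor
      · intro h t ht; exact h t ht.1 ht.2
      · intro h t ht1 ht2; exact h t ⟨ht1, ht2⟩
    rw [hrw]
    refine isClosed_biInter (fun t ht => ?_)
    have hc : Continuous fun w : K => ‖S t (w:X) - (w:X)‖ :=
      (((hS.cont ht.1).comp continuous_subtype_val).sub continuous_subtype_val).norm
    exact isClosed_le hc continuous_const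
  have hFu : ⋃ n, F n = univ := by
    rw [eq_univ_iff_forall]
    intro w
    obtain ⟨δ, hδ0, hδ⟩ := hS.small_time (w : X) one_pos
    obtain ⟨n, hn⟩ := exists_nat_one_div_lt hδ0
    exact mem_iUnion.mpr ⟨n, fun t ht0 htn => hδ t ht0 (le_trans htn (le_of_lt hn))⟩
  obtain ⟨n, w0, hw0⟩ := nonempty_interior_of_iUnion_of_closed hFc hFu
  obtain ⟨ε0, hε00, hb⟩ := Metric.isOpen_iff.mp isOpen_interior w0 hw0
  have hbF : Metric.ball w0 ε0 ⊆ F n := hb.trans interior_subset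
  set θ : ℝ := min 1 (ε0/(2*ρ)) with hθ
  have hθ0 : 0 < θ := lt_min one_pos (by positivity)
  have hθ1 : θ ≤ 1 := min_le_left _ _
  have hθρ : θ * ρ ≤ ε0/2 := by
    calc θ * ρ ≤ (ε0/(2*ρ)) * ρ := mul_le_mul_of_nonneg_right (min_le_right _ _) (le_of_lt hρ)
      _ = ε0/2 := by field_simp
  set x1 : X := (w0:X) + θ • (z - (w0:X)) with hx1
  set ε1 : ℝ := min (θ*ρ) (ε0/4) with hε1
  have hε10 : 0 < ε1 := lt_min (by positivity) (by positivity)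
  set c : ℝ := ‖(w0:X) - z‖ with hc
  have hcρ : c ≤ ρ := by
    have h2 := w0.2
    simp only [hK, Metric.mem_closedBall, dist_eq_norm] at h2
    exact h2
  have hx1z : ‖x1 - z‖ = (1-θ)*c := by
    have h1 : x1 - z = (1-θ) • ((w0:X) - z) := by
      rw [hx1]; module
    rw [h1, norm_smul, Real.norm_eq_abs, abs_of_nonneg (by linarith : (0:ℝ) ≤ 1-θ), hc]
  have hx1w0 : ‖x1 - (w0:X)‖ = θ*c := by
    have h1 : x1 - (w0:X) = θ • (z - (w0:X)) := by rw [hx1]; exact add_sub_cancel_left _ _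
    rw [h1, norm_smul, Real.norm_eq_abs, abs_of_pos hθ0, norm_sub_rev, hc]
  refine ⟨x1, ε1, 1/(n+1), hε10, by positivity, ?_, ?_⟩
  · rw [hx1z]
    calc (1-θ)*c ≤ 1*ρ := by nlinarith [hθ0, norm_nonneg ((w0:X) - z)]
      _ = ρ := one_mul ρ
  · intro t ht0 htδ w hw
    have hwK : w ∈ K := by
      simp only [hK, Metric.mem_closedBall, dist_eq_norm]
      have : ‖w - z‖ ≤ ‖w - x1‖ + ‖x1 - z‖ := by
        have hd : w - z = (w - x1) + (x1 - z) := by abel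
        rw [hd]; exact norm_add_le _ _
      rw [hx1z] at this
      have he1 : ε1 ≤ θ*ρ := min_le_left _ _
      nlinarith [norm_nonneg ((w0:X) - z)]
    have hww0 : dist (⟨w, hwK⟩ : K) w0 < ε0 := by
      rw [Subtype.dist_eq, dist_eq_norm]
      have : ‖w - (w0:X)‖ ≤ ‖w - x1‖ + ‖x1 - (w0:X)‖ := by
        have hd : w - (w0:X) = (w - x1) + (x1 - (w0:X)) := by abel
        rw [hd]; exact norm_add_le _ _
      rw [hx1w0] at this
      have he1 : ε1 ≤ ε0/4 := min_le_right _ _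
      have hθc : θ*c ≤ ε0/2 := le_trans (by nlinarith [norm_nonneg ((w0:X) - z)]) hθρ
      linarith
    exact hbF (Metric.mem_ball.mpr hww0) t ht0 htδ

/-- Local uniform boundedness near every point, for small times. -/
lemma SG.locBound (hS : SG S) (z : X) :
    ∃ ε δ C : ℝ, 0 < ε ∧ 0 < δ ∧ 0 < C ∧
      ∀ t : ℝ, 0 ≤ t → t ≤ δ → ∀ w : X, ‖w - z‖ ≤ ε → ‖S t w‖ ≤ C := by
  obtain ⟨x1, ε1, δ1, hε1, hδ1, hx1z, hgood1⟩ := hS.goodBall z one_pos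
  obtain ⟨x2, ε2', δ2, hε2', hδ2, hx2z, hgood2⟩ :=
    hS.goodBall (z + (z - x1)) (show (0:ℝ) < ε1/2 by linarith)
  obtain ⟨δ3, hδ3, hz3⟩ := hS.small_time z one_pos
  set δ : ℝ := min δ1 (min δ2 δ3) with hδdef
  have hδ0 : 0 < δ := lt_min hδ1 (lt_min hδ2 hδ3)
  set ε : ℝ := ε1/4 with hεdef
  set C1 : ℝ := (‖x1‖ + ε1 + ‖x2‖ + 2)/2 with hC1def
  have hC10 : 0 < C1 := by
    have := norm_nonneg x1; have := norm_nonneg x2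
    rw [hC1def]; linarith
  have hup : ∀ t : ℝ, 0 ≤ t → t ≤ δ → ∀ w : X, ‖w - z‖ ≤ ε →
      ∃ u : X, S t w ≤ u ∧ ‖u‖ ≤ C1 := by
    intro t ht0 htδ w hw
    set x : X := w + (w - x2) with hxdef
    have hcomb : (1/2 : ℝ) • x + (1 - 1/2 : ℝ) • x2 = w := by
      rw [hxdef]; norm_num; module
    have hxx1 : ‖x - x1‖ ≤ ε1 := by
      have hd : x - x1 = ((w - z) + (w - z)) + ((z + (z - x1)) - x2) := by rw [hxdef]; abel
      rw [hd]
      have h1 : ‖(z + (z - x1)) - x2‖ ≤ ε1/2 := by rw [norm_sub_rev]; exact hx2z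
      calc ‖((w - z) + (w - z)) + ((z + (z - x1)) - x2)‖
          ≤ ‖(w - z) + (w - z)‖ + ‖(z + (z - x1)) - x2‖ := norm_add_le _ _
        _ ≤ (‖w - z‖ + ‖w - z‖) + ε1/2 := add_le_add (norm_add_le _ _) h1
        _ ≤ ε1 := by rw [hεdef] at hw; linarith
    have hSx : ‖S t x‖ ≤ ‖x1‖ + ε1 + 1 := by
      have h1 := hgood1 t ht0 (le_trans htδ (min_le_left _ _)) x hxx1
      have h2 : ‖x‖ ≤ ‖x1‖ + ε1 := by
        have hd : x = (x - x1) + x1 := by abel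
        rw [hd]
        exact (norm_add_le _ _).trans (by linarith)
      have h3 : ‖S t x‖ ≤ ‖x‖ + ‖S t x - x‖ := norm_le_norm_add_norm_sub' (S t x) x
      linarith
    have hSx2 : ‖S t x2‖ ≤ ‖x2‖ + 1 := by
      have h1 := hgood2 t ht0 (le_trans htδ ((min_le_right _ _).trans (min_le_left _ _))) x2
        (by simp [le_of_lt hε2'])
      have h3 : ‖S t x2‖ ≤ ‖x2‖ + ‖S t x2 - x2‖ := norm_le_norm_add_norm_sub' (S t x2) x2
      linarith
    refine ⟨(1/2 : ℝ) • S t x + (1 - 1/2 : ℝ) • S t x2, ?_, ?_⟩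
    · have := hS.conv t ht0 x x2 (1/2) (by norm_num) (by norm_num)
      rwa [hcomb] at this
    · calc ‖(1/2 : ℝ) • S t x + (1 - 1/2 : ℝ) • S t x2‖
          ≤ ‖(1/2 : ℝ) • S t x‖ + ‖(1 - 1/2 : ℝ) • S t x2‖ := norm_add_le _ _
        _ = (1/2) * ‖S t x‖ + (1/2) * ‖S t x2‖ := by
            rw [norm_smul, norm_smul]; norm_num
        _ ≤ C1 := by rw [hC1def]; linarith
  refine ⟨ε, δ, C1 + (C1 + 2*(‖z‖+1)), by rw [hεdef]; linarith, hδ0, by positivity, ?_⟩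
  intro t ht0 htδ w hw
  obtain ⟨u, hu1, hu2⟩ := hup t ht0 htδ w hw
  have hw' : ‖(z + (z - w)) - z‖ ≤ ε := by
    have hd : (z + (z - w)) - z = -(w - z) := by abel
    rw [hd, norm_neg]; exact hw
  obtain ⟨u', hu'1, hu'2⟩ := hup t ht0 htδ (z + (z - w)) hw'
  have hmid : (1/2 : ℝ) • w + (1 - 1/2 : ℝ) • (z + (z - w)) = z := by norm_num; module
  have hconv := hS.conv t ht0 w (z + (z - w)) (1/2) (by norm_num) (by norm_num)
  rw [hmid] at hconv
  have h2 : -(S t w) ≤ u' - (2:ℝ) • S t z := by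
    have h3 : (2:ℝ) • S t z ≤ (2:ℝ) • ((1/2 : ℝ) • S t w + (1 - 1/2 : ℝ) • S t (z + (z - w))) :=
      smul_le_smul_of_nonneg_left hconv (by norm_num)
    have h4 : (2:ℝ) • ((1/2 : ℝ) • S t w + (1 - 1/2 : ℝ) • S t (z + (z - w)))
        = S t w + S t (z + (z - w)) := by module
    rw [h4] at h3
    have h6 : (2:ℝ) • S t z - S t w ≤ S t (z + (z - w)) := by
      have h7 := sub_le_sub_right h3 (S t w)
      rwa [add_sub_cancel_left] at h7
    have h5 : -(S t w) ≤ S t (z + (z - w)) - (2:ℝ) • S t z := by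
      have h8 := sub_le_sub_right h6 ((2:ℝ) • S t z)
      calc -(S t w) = (2:ℝ) • S t z - S t w - (2:ℝ) • S t z := by abel
        _ ≤ _ := h8
    exact h5.trans (sub_le_sub_right hu'1 _)
  have hSz : ‖S t z‖ ≤ ‖z‖ + 1 := by
    have h1 := hz3 t ht0 (le_trans htδ ((min_le_right _ _).trans (min_le_right _ _)))
    have h3 : ‖S t z‖ ≤ ‖z‖ + ‖S t z - z‖ := norm_le_norm_add_norm_sub' (S t z) z
    linarith
  have hnv : ‖u' - (2:ℝ) • S t z‖ ≤ C1 + 2*(‖z‖+1) := by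
    calc ‖u' - (2:ℝ) • S t z‖ ≤ ‖u'‖ + ‖(2:ℝ) • S t z‖ := norm_sub_le _ _
      _ ≤ C1 + 2*(‖z‖+1) := by
          rw [norm_smul]
          have : |(2:ℝ)| = 2 := by norm_num
          rw [Real.norm_eq_abs, this]
          linarith
  have := aux_norm_le_add_of_le_of_neg_le hu1 h2
  linarith

/-- Small-time locally uniform Lipschitz estimate. -/
lemma SG.locLip (hS : SG S) (z : X) :
    ∃ ε δ L : ℝ, 0 < ε ∧ 0 < δ ∧ 0 < L ∧
      ∀ t : ℝ, 0 ≤ t → t ≤ δ → ∀ u v : X, ‖u - z‖ ≤ ε → ‖v - z‖ ≤ ε →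
        ‖S t u - S t v‖ ≤ L * ‖u - v‖ := by
  obtain ⟨ε, δ, C, hε, hδ, hC, hB⟩ := hS.locBound z
  refine ⟨ε/4, δ, max (8*C/ε) 1, by linarith, hδ,
    lt_of_lt_of_le one_pos (le_max_right _ _), ?_⟩
  intro t ht0 htδ u v hu hv
  have := hS.lip_of_bound ht0 hε (fun w hw => hB t ht0 htδ w hw) hu hv
  exact this.trans (mul_le_mul_of_nonneg_right (le_max_left _ _) (norm_nonneg _))

/-- Lipschitz estimate, uniform over a left window of times, near a point. -/
lemma SG.windowLip (hS : SG S) (z : X) {r0 : ℝ} (hr0 : 0 < r0) :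
    ∃ δ ε L : ℝ, 0 < δ ∧ δ ≤ r0 ∧ 0 < ε ∧ 0 < L ∧
      ∀ r : ℝ, r0 - δ ≤ r → r ≤ r0 → ∀ u v : X, ‖u - z‖ ≤ ε → ‖v - z‖ ≤ ε →
        ‖S r u - S r v‖ ≤ L * ‖u - v‖ := by
  obtain ⟨ε5, δ5, L5, hε5, hδ5, hL5, hLip⟩ := hS.locLip z
  obtain ⟨εb, δb, Cb, hεb, hδb, hCb, hBnd⟩ := hS.locBound z
  set δ : ℝ := min (min δ5 δb) r0 with hδdef
  have hδ0 : 0 < δ := lt_min (lt_min hδ5 hδb) hr0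
  set ε : ℝ := min ε5 εb with hεdef
  have hε0 : 0 < ε := lt_min hε5 hεb
  obtain ⟨L6, hL60, hL6⟩ := hS.lip_ball (show (0:ℝ) ≤ r0 - δ by
    have : δ ≤ r0 := min_le_right _ _; linarith) hCb
  refine ⟨δ, ε, L6*L5, hδ0, min_le_right _ _, hε0, mul_pos hL60 hL5, ?_⟩
  intro r hr1 hr2 u v hu hv
  have hτ0 : 0 ≤ r - (r0 - δ) := by linarith
  have hτδ : r - (r0 - δ) ≤ δ := by linarith
  have hτ5 : r - (r0 - δ) ≤ δ5 := hτδ.trans ((min_le_left _ _).trans (min_le_left _ _))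
  have hτb : r - (r0 - δ) ≤ δb := hτδ.trans ((min_le_left _ _).trans (min_le_right _ _))
  have hrw : ∀ w : X, S r w = S (r0 - δ) (S (r - (r0 - δ)) w) := by
    intro w
    have h1 := hS.sg (r - (r0 - δ)) (r0 - δ) hτ0 (by have : δ ≤ r0 := min_le_right _ _; linarith) w
    have h2 : (r0 - δ) + (r - (r0 - δ)) = r := by ring
    rw [h2] at h1
    exact h1
  rw [hrw u, hrw v]
  have hbu : ‖S (r - (r0 - δ)) u‖ ≤ Cb :=
    hBnd _ hτ0 hτb u (hu.trans (min_le_right _ _))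
  have hbv : ‖S (r - (r0 - δ)) v‖ ≤ Cb :=
    hBnd _ hτ0 hτb v (hv.trans (min_le_right _ _))
  calc ‖S (r0-δ) (S (r - (r0 - δ)) u) - S (r0-δ) (S (r - (r0 - δ)) v)‖
      ≤ L6 * ‖S (r - (r0 - δ)) u - S (r - (r0 - δ)) v‖ := hL6 _ _ hbu hbv
    _ ≤ L6 * (L5 * ‖u - v‖) := by
        refine mul_le_mul_of_nonneg_left ?_ (le_of_lt hL60)
        exact hLip _ hτ0 hτ5 u v (hu.trans (min_le_left _ _)) (hv.trans (min_le_left _ _))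
    _ = (L6*L5) * ‖u - v‖ := by ring

/-- Strong continuity at `0` from the right, closed version. -/
lemma SG.c0' (hS : SG S) (y : X) : Tendsto (fun h : ℝ => S h y) (𝓝[≥] (0:ℝ)) (𝓝 y) := by
  have h1 : Set.Ici (0:ℝ) = insert 0 (Set.Ioi 0) := Set.Ioi_insert.symm
  rw [h1, nhdsWithin_insert, tendsto_sup]
  constructor
  · have := tendsto_pure_nhds (fun h : ℝ => S h y) 0
    rwa [hS.idm] at this
  · exact hS.c0 y

/-- Right continuity of orbits. -/
lemma SG.orbit_rc (hS : SG S) (x : X) {s : ℝ} (hs : 0 ≤ s) :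
    Tendsto (fun h : ℝ => S (s + h) x) (𝓝[≥] (0:ℝ)) (𝓝 (S s x)) := by
  refine Tendsto.congr' ?_ (hS.c0' (S s x))
  filter_upwards [self_mem_nhdsWithin] with h hh
  rw [add_comm]
  exact (hS.sg s h hs hh x).symm

/-- Left continuity of orbits. -/
lemma SG.orbit_lc (hS : SG S) (x : X) {s : ℝ} (hs : 0 < s) :
    Tendsto (fun h : ℝ => S (s - h) x) (𝓝[≥] (0:ℝ)) (𝓝 (S s x)) := by
  obtain ⟨δ, ε, L, hδ0, hδs, hε, hL, hW⟩ := hS.windowLip x hs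
  obtain ⟨δ2, hδ2, hsm⟩ := hS.small_time x hε
  have key : ∀ᶠ h in 𝓝[≥] (0:ℝ), ‖S (s - h) x - S s x‖ ≤ L * ‖S h x - x‖ := by
    have hmem : Set.Ico (0:ℝ) (min δ δ2) ∈ 𝓝[≥] (0:ℝ) :=
      Ico_mem_nhdsGE_of_mem ⟨le_refl 0, lt_min hδ0 hδ2⟩
    filter_upwards [hmem] with h hh
    obtain ⟨hh0, hhlt⟩ := hh
    have hδh : h ≤ δ := le_of_lt (lt_of_lt_of_le hhlt (min_le_left _ _))
    have hδ2h : h ≤ δ2 := le_of_lt (lt_of_lt_of_le hhlt (min_le_right _ _))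
    have heq : S s x = S (s - h) (S h x) := by
      have h1 := hS.sg h (s - h) hh0 (by linarith) x
      have h2 : (s - h) + h = s := by ring
      rw [h2] at h1
      exact h1
    rw [heq, norm_sub_rev]
    exact hW (s - h) (by linarith) (by linarith) (S h x) x (hsm h hh0 hδ2h)
      (by simp [le_of_lt hε])
  have hg : Tendsto (fun h : ℝ => L * ‖S h x - x‖) (𝓝[≥] (0:ℝ)) (𝓝 0) := by
    have h2 : Tendsto (fun h : ℝ => ‖S h x - x‖) (𝓝[≥] (0:ℝ)) (𝓝 0) := by
      have := (hS.c0' x).sub (tendsto_const_nhds (x := x))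
      rw [sub_self] at this
      exact (tendsto_zero_iff_norm_tendsto_zero.mp this)
    simpa using h2.const_mul L
  have := squeeze_zero_norm' key hg
  rwa [tendsto_sub_nhds_zero_iff] at this

/-- Directional derivatives of a convex bounded operator exist (order continuity). -/
lemma SG.dirDeriv (hS : SG S)
    (hDed : ∀ f : ℕ → X, BddAbove (Set.range f) → ∃ s : X, IsLUB (Set.range f) s)
    (hoc : ∀ f : ℕ → X, Antitone f → IsGLB (Set.range f) 0 →
      Tendsto (fun n => ‖f n‖) atTop (𝓝 (0 : ℝ)))
    {s : ℝ} (hs : 0 ≤ s) (x b : X) :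
    ∃ d : X, Tendsto (fun h : ℝ => h⁻¹ • (S s (x + h • b) - S s x)) (𝓝[>] (0:ℝ)) (𝓝 d) := by
  set q : ℝ → X := fun h => h⁻¹ • (S s (x + h • b) - S s x) with hq
  have mono : ∀ h h' : ℝ, 0 < h → h ≤ h' → q h ≤ q h' := by
    intro h h' hh hhh'
    have hh' : 0 < h' := lt_of_lt_of_le hh hhh'
    set a : ℝ := h / h' with hadef
    have ha0 : 0 ≤ a := by positivity
    have ha1 : a ≤ 1 := by rw [hadef, div_le_one hh']; exact hhh'
    have hpt : a • (x + h' • b) + (1 - a) • x = x + h • b := by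
      rw [smul_add, smul_smul, sub_smul, one_smul]
      have hah : a * h' = h := by rw [hadef]; field_simp
      rw [hah]; abel
    have hcd := hS.conv_diff hs ha0 ha1 (x + h' • b) x
    rw [hpt] at hcd
    have h2 := smul_le_smul_of_nonneg_left hcd (le_of_lt (inv_pos.mpr hh))
    rw [smul_smul] at h2
    have h3 : h⁻¹ * a = h'⁻¹ := by rw [hadef]; field_simp
    rw [h3] at h2
    exact h2
  have lower : ∀ h : ℝ, 0 < h → S s x - S s (x - b) ≤ q h := by
    intro h hh
    set a : ℝ := 1/(1+h) with hadef
    have h1h : (0:ℝ) < 1 + h := by linarith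
    have ha0 : 0 ≤ a := by positivity
    have ha1 : a ≤ 1 := by rw [hadef, div_le_one h1h]; linarith
    have e2 : (1 + h) * a = 1 := by rw [hadef]; field_simp
    have e4 : (1 + h) * (1 - a) = h := by
      have : (1+h) * (1-a) = (1+h) - (1+h)*a := by ring
      rw [this, e2]; ring
    have hpt : a • (x + h • b) + (1 - a) • (x - b) = x := by
      have e5 : a * h - (1 - a) = 0 := by
        have h6 : (1+h) * (a * h - (1 - a)) = 0 := by
          have : (1+h) * (a * h - (1-a)) = ((1+h)*a) * h - ((1+h)*(1-a)) := by ring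
          rw [this, e2, e4]; ring
        have := mul_eq_zero.mp h6
        rcases this with h7 | h7
        · exact absurd h7 (by positivity)
        · exact h7
      have e6 : a + (1 - a) = 1 := by ring
      calc a • (x + h • b) + (1 - a) • (x - b)
          = (a + (1-a)) • x + (a * h - (1-a)) • b := by module
        _ = x := by rw [e5, e6, one_smul, zero_smul, add_zero]
    have hcv := hS.conv s hs (x + h • b) (x - b) a ha0 ha1
    rw [hpt] at hcv
    have h3 := smul_le_smul_of_nonneg_left hcv (le_of_lt h1h)
    have h4 : (1+h) • (a • S s (x + h • b) + (1 - a) • S s (x - b))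
        = S s (x + h • b) + h • S s (x - b) := by
      rw [smul_add, smul_smul, smul_smul, e2, e4, one_smul]
    rw [h4] at h3
    have h6 : h • (S s x - S s (x - b)) ≤ S s (x + h • b) - S s x := by
      have h7 := sub_le_sub_right h3 (S s x + h • S s (x - b))
      calc h • (S s x - S s (x - b))
          = (1+h) • S s x - (S s x + h • S s (x - b)) := by module
        _ ≤ S s (x + h • b) + h • S s (x - b) - (S s x + h • S s (x - b)) := h7
        _ = S s (x + h • b) - S s x := by abel
    have h8 := smul_le_smul_of_nonneg_left h6 (le_of_lt (inv_pos.mpr hh))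
    rwa [inv_smul_smul₀ (ne_of_gt hh)] at h8
  -- monotone sequence along (1/2)^n
  have hpow : ∀ n : ℕ, (0:ℝ) < (1/2)^n := fun n => by positivity
  have hpowle : ∀ n : ℕ, ((1:ℝ)/2)^n ≤ 1 := fun n =>
    pow_le_one₀ (by norm_num) (by norm_num)
  set f : ℕ → X := fun n => -(q ((1/2)^n)) with hf
  have hfmono : Monotone f := by
    intro m n hmn
    simp only [hf, neg_le_neg_iff]
    exact mono _ _ (hpow n) (pow_le_pow_of_le_one (by norm_num) (by norm_num) hmn)
  have hbdd : BddAbove (Set.range f) := by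
    refine ⟨-(S s x - S s (x - b)), ?_⟩
    rintro y ⟨n, rfl⟩
    exact neg_le_neg (lower _ (hpow n))
  obtain ⟨sup, hsup⟩ := hDed f hbdd
  set d : X := -sup with hd
  have hdlow : ∀ n : ℕ, d ≤ q ((1/2)^n) := by
    intro n
    have := hsup.1 (Set.mem_range_self n)
    rw [hf] at this
    simpa [hd] using neg_le_neg this
  set g : ℕ → X := fun n => q ((1/2)^n) - d with hg
  have hganti : Antitone g := by
    intro m n hmn
    simp only [hg]
    exact sub_le_sub_right (mono _ _ (hpow n) (pow_le_pow_of_le_one (by norm_num) (by norm_num) hmn)) d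
  have hgglb : IsGLB (Set.range g) 0 := by
    constructor
    · rintro y ⟨n, rfl⟩
      simp only [hg]
      exact sub_nonneg.mpr (hdlow n)
    · intro w hw
      have hub : sup ≤ -(w + d) := by
        refine hsup.2 ?_
        rintro y ⟨n, rfl⟩
        have := hw (Set.mem_range_self n)
        simp only [hg] at this
        -- w ≤ q − d ⇒ −q ≤ −(w+d)
        rw [hf]
        have h9 : w + d ≤ q ((1/2)^n) := by
          have := add_le_add_right this d
          rwa [add_comm d w, add_sub_cancel] at this
        simpa using neg_le_neg h9
      -- sup = −d: d = −sup
      have : -(-(w+d)) ≤ -sup := neg_le_neg hub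
      rw [neg_neg] at this
      rw [← hd] at this
      -- w + d ≤ d
      have := sub_le_sub_right this d
      simpa using this
  have hnorm := hoc g hganti hgglb
  refine ⟨d, Metric.tendsto_nhdsWithin_nhds.mpr ?_⟩
  intro ε hε
  obtain ⟨n, hn⟩ := (hnorm.eventually (gt_mem_nhds hε)).exists
  refine ⟨(1/2)^n, hpow n, ?_⟩
  intro h hmem hdist
  have hh0 : 0 < h := hmem
  have hhn : h ≤ (1/2)^n := by
    rw [Real.dist_eq, sub_zero, abs_of_pos hh0] at hdist
    exact le_of_lt hdist
  have hql : d ≤ q h := by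
    obtain ⟨m, hm⟩ := exists_pow_lt_of_lt_one hh0 (show (1:ℝ)/2 < 1 by norm_num)
    exact (hdlow m).trans (mono _ _ (hpow m) (le_of_lt hm))
  have hqu : q h ≤ q ((1/2)^n) := mono _ _ hh0 hhn
  have h0le : (0:X) ≤ q h - d := sub_nonneg.mpr hql
  have hle : q h - d ≤ g n := by
    simp only [hg]
    exact sub_le_sub_right hqu d
  rw [dist_eq_norm]
  exact lt_of_le_of_lt (aux_norm_le_of_nonneg_le h0le hle) hn

/-- The generator domain is invariant under the semigroup. -/
lemma SG.orbit_mem_genDom (hS : SG S)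
    (hDed : ∀ f : ℕ → X, BddAbove (Set.range f) → ∃ s : X, IsLUB (Set.range f) s)
    (hoc : ∀ f : ℕ → X, Antitone f → IsGLB (Set.range f) 0 →
      Tendsto (fun n => ‖f n‖) atTop (𝓝 (0 : ℝ)))
    {x : X} (hx : x ∈ genDom S) {s : ℝ} (hs : 0 ≤ s) : S s x ∈ genDom S := by
  obtain ⟨bb, hbb⟩ := hx
  obtain ⟨d, hd⟩ := hS.dirDeriv hDed hoc hs x bb
  obtain ⟨L, hL0, hL⟩ := hS.lip_ball hs (show (0:ℝ) < ‖x‖ + ‖bb‖ + 1 by positivity)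
  obtain ⟨δ1, hδ10, h1⟩ := hS.small_time x one_pos
  set e : ℝ → X := fun h => h⁻¹ • (S h x - x) with he
  have heS : ∀ h : ℝ, 0 < h → S h x = x + h • e h := by
    intro h hh
    simp only [he]
    rw [smul_inv_smul₀ (ne_of_gt hh)]
    abel
  have hbound : ∀ᶠ h in 𝓝[>] (0:ℝ),
      ‖h⁻¹ • (S s (S h x) - S s x) - h⁻¹ • (S s (x + h • bb) - S s x)‖ ≤ L * ‖e h - bb‖ := by
    have hmem : Set.Ioc (0:ℝ) (min δ1 1) ∈ 𝓝[>] (0:ℝ) :=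
      Ioc_mem_nhdsGT_of_mem ⟨le_refl 0, lt_min hδ10 one_pos⟩
    filter_upwards [hmem] with h hh
    obtain ⟨hh0, hhle⟩ := hh
    have hhδ1 : h ≤ δ1 := hhle.trans (min_le_left _ _)
    have hh1 : h ≤ 1 := hhle.trans (min_le_right _ _)
    have hx1 : ‖S h x‖ ≤ ‖x‖ + ‖bb‖ + 1 := by
      have h2 := h1 h (le_of_lt hh0) hhδ1
      have h3 : ‖S h x‖ ≤ ‖x‖ + ‖S h x - x‖ := norm_le_norm_add_norm_sub' _ _
      have := norm_nonneg bb
      linarith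
    have hx2 : ‖x + h • bb‖ ≤ ‖x‖ + ‖bb‖ + 1 := by
      calc ‖x + h • bb‖ ≤ ‖x‖ + ‖h • bb‖ := norm_add_le _ _
        _ ≤ ‖x‖ + ‖bb‖ + 1 := by
            rw [norm_smul, Real.norm_eq_abs, abs_of_pos hh0]
            nlinarith [norm_nonneg bb]
    have hdiff : h⁻¹ • (S s (S h x) - S s x) - h⁻¹ • (S s (x + h • bb) - S s x)
        = h⁻¹ • (S s (S h x) - S s (x + h • bb)) := by
      rw [← smul_sub]
      congr 1
      abel
    rw [hdiff, norm_smul, Real.norm_eq_abs, abs_of_pos (inv_pos.mpr hh0)]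
    have hlip := hL (S h x) (x + h • bb) hx1 hx2
    have harg : ‖S h x - (x + h • bb)‖ = h * ‖e h - bb‖ := by
      rw [heS h hh0]
      have h5 : x + h • e h - (x + h • bb) = h • (e h - bb) := by
        rw [smul_sub]; abel
      rw [h5, norm_smul, Real.norm_eq_abs, abs_of_pos hh0]
    calc h⁻¹ * ‖S s (S h x) - S s (x + h • bb)‖
        ≤ h⁻¹ * (L * ‖S h x - (x + h • bb)‖) :=
          mul_le_mul_of_nonneg_left hlip (by positivity)
      _ = L * ‖e h - bb‖ := by rw [harg]; field_simp
  have hzero : Tendsto (fun h : ℝ =>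
      h⁻¹ • (S s (S h x) - S s x) - h⁻¹ • (S s (x + h • bb) - S s x)) (𝓝[>] (0:ℝ)) (𝓝 0) := by
    refine squeeze_zero_norm' hbound ?_
    have h6 : Tendsto (fun h : ℝ => e h - bb) (𝓝[>] (0:ℝ)) (𝓝 0) := by
      have := hbb.sub (tendsto_const_nhds (x := bb))
      rwa [sub_self] at this
    simpa using (tendsto_zero_iff_norm_tendsto_zero.mp h6).const_mul L
  have htot : Tendsto (fun h : ℝ => h⁻¹ • (S s (S h x) - S s x)) (𝓝[>] (0:ℝ)) (𝓝 d) := by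
    have h7 := hzero.add hd
    rw [zero_add] at h7
    refine Tendsto.congr ?_ h7
    intro h
    abel
  refine ⟨d, ?_⟩
  refine Tendsto.congr' ?_ htot
  filter_upwards [self_mem_nhdsWithin] with h hh
  have h1' := hS.sg s h hs (le_of_lt hh) x
  have h2' := hS.sg h s (le_of_lt hh) hs x
  rw [add_comm] at h2'
  rw [h1'] at h2'
  rw [h2']

section TwoSemigroups

variable {T : ℝ → X → X}

/-- Key local estimate for the interpolation function to the right of `s`. -/
lemma FR_bound (hS : SG S) (hT : SG T) {t s : ℝ} (hs0 : 0 ≤ s) (hst : s < t) (x : X) :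
    ∃ η L : ℝ, 0 < η ∧ 0 < L ∧ ∀ y : ℝ, s ≤ y → y ≤ s + η →
      ‖S (t - y) (T y x) - S (t - s) (T s x)‖ ≤
        L * ‖T (y - s) (T s x) - S (y - s) (T s x)‖ := by
  set z := T s x with hz
  obtain ⟨δ, ε, L, hδ0, hδr, hε, hL, hW⟩ := hS.windowLip z (show 0 < t - s by linarith)
  obtain ⟨δT, hδT, hsmT⟩ := hT.small_time z hε
  obtain ⟨δS, hδS, hsmS⟩ := hS.small_time z hε
  refine ⟨min δ (min δT δS), L, lt_min hδ0 (lt_min hδT hδS), hL, ?_⟩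
  intro y hy1 hy2
  have hh0 : 0 ≤ y - s := by linarith
  have hmin1 : min δ (min δT δS) ≤ δ := min_le_left _ _
  have hmin2 : min δ (min δT δS) ≤ δT := (min_le_right _ _).trans (min_le_left _ _)
  have hmin3 : min δ (min δT δS) ≤ δS := (min_le_right _ _).trans (min_le_right _ _)
  have hhδ : y - s ≤ δ := by linarith
  have hhT : y - s ≤ δT := by linarith
  have hhS : y - s ≤ δS := by linarith
  have hyt : y ≤ t := by linarith
  have hTy : T y x = T (y - s) z := by
    have h1 := hT.sg s (y - s) hs0 hh0 x
    have h2 : (y - s) + s = y := by ring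
    rw [h2] at h1
    exact h1
  have hFs : S (t - s) z = S (t - y) (S (y - s) z) := by
    have h1 := hS.sg (y - s) (t - y) hh0 (by linarith) z
    have h2 : (t - y) + (y - s) = t - s := by ring
    rw [h2] at h1
    exact h1
  rw [hTy, hFs]
  exact hW (t - y) (by linarith) (by linarith) _ _ (hsmT _ hh0 hhT) (hsmS _ hh0 hhS)

lemma sub_map_right {s : ℝ} (I : Set ℝ) (hIs : ∀ y ∈ I, s ≤ y) :
    Tendsto (fun y : ℝ => y - s) (𝓝[I] s) (𝓝[≥] (0:ℝ)) := by
  rw [tendsto_nhdsWithin_iff]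
  constructor
  · have h1 : Tendsto (fun y : ℝ => y - s) (𝓝 s) (𝓝 (s - s)) :=
      ((continuous_id.sub continuous_const).tendsto s)
    rw [sub_self] at h1
    exact h1.mono_left nhdsWithin_le_nhds
  · filter_upwards [self_mem_nhdsWithin] with y hy
    exact sub_nonneg.mpr (hIs y hy)

lemma sub_map_left {s : ℝ} (I : Set ℝ) (hIs : ∀ y ∈ I, y ≤ s) :
    Tendsto (fun y : ℝ => s - y) (𝓝[I] s) (𝓝[≥] (0:ℝ)) := by
  rw [tendsto_nhdsWithin_iff]
  constructor
  · have h1 : Tendsto (fun y : ℝ => s - y) (𝓝 s) (𝓝 (s - s)) :=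
      ((continuous_const.sub continuous_id).tendsto s)
    rw [sub_self] at h1
    exact h1.mono_left nhdsWithin_le_nhds
  · filter_upwards [self_mem_nhdsWithin] with y hy
    exact sub_nonneg.mpr (hIs y hy)

/-- Right continuity of the interpolation function. -/
lemma FR_cont (hS : SG S) (hT : SG T) {t s : ℝ} (hs0 : 0 ≤ s) (hst : s < t) (x : X) :
    ContinuousWithinAt (fun s' => S (t - s') (T s' x)) (Icc s t) s := by
  obtain ⟨η, L, hη, hL, hbd⟩ := FR_bound hS hT hs0 hst x
  set z := T s x with hz
  have hmap : Tendsto (fun y : ℝ => y - s) (𝓝[Icc s t] s) (𝓝[≥] (0:ℝ)) :=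
    sub_map_right _ (fun y hy => hy.1)
  have hTz : Tendsto (fun y : ℝ => T (y - s) z) (𝓝[Icc s t] s) (𝓝 z) := (hT.c0' z).comp hmap
  have hSz : Tendsto (fun y : ℝ => S (y - s) z) (𝓝[Icc s t] s) (𝓝 z) := (hS.c0' z).comp hmap
  have hg : Tendsto (fun y : ℝ => L * ‖T (y-s) z - S (y-s) z‖) (𝓝[Icc s t] s) (𝓝 0) := by
    have h1 := hTz.sub hSz
    rw [sub_self] at h1
    simpa using (tendsto_zero_iff_norm_tendsto_zero.mp h1).const_mul L
  have hev : ∀ᶠ y in 𝓝[Icc s t] s,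
      ‖S (t - y) (T y x) - S (t - s) (T s x)‖ ≤ L * ‖T (y-s) z - S (y-s) z‖ := by
    have h1 : Ico s (s + η) ∈ 𝓝[≥] s := Ico_mem_nhdsGE_of_mem ⟨le_refl s, by linarith⟩
    have h2 : 𝓝[Icc s t] s ≤ 𝓝[Ici s] s := nhdsWithin_mono s Icc_subset_Ici_self
    filter_upwards [h2 h1] with y hy
    exact hbd y hy.1 (le_of_lt hy.2)
  have h3 := squeeze_zero_norm' hev hg
  have h4 : Tendsto (fun y => S (t - y) (T y x)) (𝓝[Icc s t] s) (𝓝 (S (t - s) (T s x))) := by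
    rwa [tendsto_sub_nhds_zero_iff] at h3
  exact h4

/-- Left continuity of the interpolation function. -/
lemma FL_cont (hS : SG S) (hT : SG T) {t s : ℝ} (hs0 : 0 < s) (hst : s ≤ t) (x : X) :
    ContinuousWithinAt (fun s' => S (t - s') (T s' x)) (Icc 0 s) s := by
  set z := T s x with hz
  obtain ⟨ε5, δ5, L5, hε5, hδ5, hL5, hlip5⟩ := hS.locLip z
  obtain ⟨δ2, hδ20, hsm2⟩ := hS.small_time z hε5
  set R : ℝ := ‖z‖ + L5*ε5 + ε5 + 1 with hR
  have hR0 : 0 < R := by have := norm_nonneg z; positivity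
  obtain ⟨L6, hL60, hlip6⟩ := hS.lip_ball (show (0:ℝ) ≤ t - s by linarith) hR0
  have hmap : Tendsto (fun y : ℝ => s - y) (𝓝[Icc 0 s] s) (𝓝[≥] (0:ℝ)) :=
    sub_map_left _ (fun y hy => hy.2)
  have horbit : Tendsto (fun y : ℝ => T y x) (𝓝[Icc 0 s] s) (𝓝 z) := by
    have h1 := (hT.orbit_lc x hs0).comp hmap
    refine h1.congr (fun y => ?_)
    simp only [Function.comp]
    congr 1
    ring
  have hSzy : Tendsto (fun y : ℝ => S (s - y) z) (𝓝[Icc 0 s] s) (𝓝 z) := (hS.c0' z).comp hmap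
  have hg : Tendsto (fun y : ℝ => L6 * (L5 * ‖T y x - z‖ + ‖S (s - y) z - z‖))
      (𝓝[Icc 0 s] s) (𝓝 0) := by
    have h1 : Tendsto (fun y : ℝ => ‖T y x - z‖) (𝓝[Icc 0 s] s) (𝓝 0) := by
      have := horbit.sub (tendsto_const_nhds (x := z))
      rw [sub_self] at this
      exact tendsto_zero_iff_norm_tendsto_zero.mp this
    have h2 : Tendsto (fun y : ℝ => ‖S (s - y) z - z‖) (𝓝[Icc 0 s] s) (𝓝 0) := by
      have := hSzy.sub (tendsto_const_nhds (x := z))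
      rw [sub_self] at this
      exact tendsto_zero_iff_norm_tendsto_zero.mp this
    have h3 := ((h1.const_mul L5).add h2).const_mul L6
    simpa using h3
  have hev : ∀ᶠ y in 𝓝[Icc 0 s] s,
      ‖S (t - y) (T y x) - S (t - s) (T s x)‖ ≤
        L6 * (L5 * ‖T y x - z‖ + ‖S (s - y) z - z‖) := by
    have hball : ∀ᶠ y in 𝓝[Icc 0 s] s, dist (T y x) z < min ε5 1 :=
      Metric.tendsto_nhds.mp horbit (min ε5 1) (lt_min hε5 one_pos)
    have hnear : Ioc (s - min δ5 δ2) s ∈ 𝓝[Icc 0 s] s := by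
      have h1 : Ioc (s - min δ5 δ2) s ∈ 𝓝[≤] s :=
        Ioc_mem_nhdsLE_of_mem ⟨by simp [lt_min hδ5 hδ20], le_refl s⟩
      exact (nhdsWithin_mono s Icc_subset_Iic_self) h1
    filter_upwards [hball, hnear, self_mem_nhdsWithin] with y hball' hnear' hmem'
    set w : X := T y x with hw
    have hh0 : 0 ≤ s - y := by linarith [hmem'.2]
    have hhδ5 : s - y ≤ δ5 := by
      have := hnear'.1
      have h6 : min δ5 δ2 ≤ δ5 := min_le_left _ _
      linarith
    have hhδ2 : s - y ≤ δ2 := by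
      have := hnear'.1
      have h6 : min δ5 δ2 ≤ δ2 := min_le_right _ _
      linarith
    have hwz : ‖w - z‖ ≤ ε5 := by
      rw [hw, ← dist_eq_norm]
      exact (le_of_lt hball').trans (min_le_left _ _)
    have hFy : S (t - y) w = S (t - s) (S (s - y) w) := by
      have h1 := hS.sg (s - y) (t - s) hh0 (by linarith) w
      have h2 : (t - s) + (s - y) = t - y := by ring
      rw [h2] at h1
      exact h1
    have hkey1 : ‖S (s - y) w - z‖ ≤ L5 * ‖w - z‖ + ‖S (s - y) z - z‖ := by
      have h1 : ‖S (s-y) w - S (s-y) z‖ ≤ L5 * ‖w - z‖ :=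
        hlip5 (s - y) hh0 hhδ5 w z hwz (by simp [le_of_lt hε5])
      calc ‖S (s - y) w - z‖ ≤ ‖S (s-y) w - S (s-y) z‖ + ‖S (s-y) z - z‖ := by
            have hd : S (s - y) w - z = (S (s-y) w - S (s-y) z) + (S (s-y) z - z) := by abel
            rw [hd]; exact norm_add_le _ _
        _ ≤ L5 * ‖w - z‖ + ‖S (s - y) z - z‖ := by linarith
    have hbndw : ‖S (s - y) w‖ ≤ R := by
      have h1 : ‖S (s - y) w‖ ≤ ‖z‖ + ‖S (s - y) w - z‖ := norm_le_norm_add_norm_sub' _ _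
      have h2 : L5 * ‖w - z‖ ≤ L5 * ε5 := mul_le_mul_of_nonneg_left hwz (le_of_lt hL5)
      have h3 := hsm2 (s - y) hh0 hhδ2
      rw [hR]
      linarith [hkey1]
    have hbndz : ‖z‖ ≤ R := by
      rw [hR]
      have h2 : 0 ≤ L5 * ε5 := by positivity
      linarith [le_of_lt hε5]
    have hlips := hlip6 (S (s - y) w) z hbndw hbndz
    rw [hFy]
    calc ‖S (t-s) (S (s-y) w) - S (t-s) z‖ ≤ L6 * ‖S (s-y) w - z‖ := hlips
      _ ≤ L6 * (L5 * ‖w - z‖ + ‖S (s - y) z - z‖) :=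
          mul_le_mul_of_nonneg_left hkey1 (le_of_lt hL60)
  have h3 := squeeze_zero_norm' hev hg
  have h4 : Tendsto (fun y => S (t - y) (T y x)) (𝓝[Icc 0 s] s) (𝓝 (S (t - s) (T s x))) := by
    rwa [tendsto_sub_nhds_zero_iff] at h3
  exact h4

end TwoSemigroups

end AuxSG

/-- Let `S` and `T` be convex C₀-semigroups on a Banach lattice with order
continuous norm, with generators `A` and `B`. If `B ⊂ A` (i.e. `D(B) ⊆ D(A)` and
`Ax = Bx` on `D(B)`) and `D(B)` is dense in `X`, then `S(t)x = T(t)x` for all `t ≥ 0`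
and `x ∈ X`. -/
theorem semigroup_determined_by_generator
    [PosSMulStrictMono ℝ X] [PosSMulReflectLT ℝ X]
    (hDed : ∀ f : ℕ → X, BddAbove (Set.range f) → ∃ s : X, IsLUB (Set.range f) s)
    (hoc : ∀ f : ℕ → X, Antitone f → IsGLB (Set.range f) 0 →
      Tendsto (fun n => ‖f n‖) atTop (𝓝 (0 : ℝ)))
    (S T : ℝ → X → X)
    (hSconv : ∀ t : ℝ, 0 ≤ t → ∀ x y : X, ∀ a : ℝ, 0 ≤ a → a ≤ 1 →
      S t (a • x + (1 - a) • y) ≤ a • S t x + (1 - a) • S t y)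
    (hSbdd : ∀ t : ℝ, 0 ≤ t → ∀ r : ℝ, 0 < r → ∃ M : ℝ, ∀ x : X, ‖x‖ ≤ r → ‖S t x‖ ≤ M)
    (hSid : ∀ x : X, S 0 x = x)
    (hSsg : ∀ s t : ℝ, 0 ≤ s → 0 ≤ t → ∀ x : X, S (t + s) x = S t (S s x))
    (hSc0 : ∀ x : X, Tendsto (fun t : ℝ => S t x) (𝓝[>] (0 : ℝ)) (𝓝 x))
    (hTconv : ∀ t : ℝ, 0 ≤ t → ∀ x y : X, ∀ a : ℝ, 0 ≤ a → a ≤ 1 →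
      T t (a • x + (1 - a) • y) ≤ a • T t x + (1 - a) • T t y)
    (hTbdd : ∀ t : ℝ, 0 ≤ t → ∀ r : ℝ, 0 < r → ∃ M : ℝ, ∀ x : X, ‖x‖ ≤ r → ‖T t x‖ ≤ M)
    (hTid : ∀ x : X, T 0 x = x)
    (hTsg : ∀ s t : ℝ, 0 ≤ s → 0 ≤ t → ∀ x : X, T (t + s) x = T t (T s x))
    (hTc0 : ∀ x : X, Tendsto (fun t : ℝ => T t x) (𝓝[>] (0 : ℝ)) (𝓝 x))
    (A B : X → X)
    (hA : ∀ x ∈ genDom S, Tendsto (fun h : ℝ => h⁻¹ • (S h x - x)) (𝓝[>] (0 : ℝ)) (𝓝 (A x)))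
    (hB : ∀ x ∈ genDom T, Tendsto (fun h : ℝ => h⁻¹ • (T h x - x)) (𝓝[>] (0 : ℝ)) (𝓝 (B x)))
    (hsub : genDom T ⊆ genDom S)
    (hagree : ∀ x ∈ genDom T, A x = B x)
    (hdense : Dense (genDom T)) :
    ∀ t : ℝ, 0 ≤ t → ∀ x : X, S t x = T t x := by
  have hS : SG S := ⟨hSconv, hSbdd, hSid, hSsg, hSc0⟩
  have hT : SG T := ⟨hTconv, hTbdd, hTid, hTsg, hTc0⟩
  intro t ht
  rcases ht.eq_or_lt with rfl | ht0
  · intro x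
    rw [hSid, hTid]
  · have key : ∀ x ∈ genDom T, S t x = T t x := by
      intro x hx
      set F : ℝ → X := fun s' => S (t - s') (T s' x) with hF
      have hcont : ContinuousOn F (Icc 0 t) := by
        intro s hs
        rcases hs.1.eq_or_lt with h0 | hs0pos
        · have h1 := FR_cont hS hT (le_refl (0:ℝ)) ht0 x
          rw [← h0]
          exact h1
        · rcases hs.2.eq_or_lt with hst | hst
          · subst hst
            exact FL_cont hS hT hs0pos (le_refl s) x
          · have h1 := FL_cont hS hT hs0pos (le_of_lt hst) x
            have h2 := FR_cont hS hT hs.1 hst x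
            have hsplit : Icc (0:ℝ) t = Icc 0 s ∪ Icc s t :=
              (Icc_union_Icc_eq_Icc hs.1 hs.2).symm
            rw [hsplit]
            exact h1.union h2
      have hderiv : ∀ s ∈ Ico 0 t, HasDerivWithinAt F ((fun _ => (0:X)) s) (Ici s) s := by
        intro s hs
        obtain ⟨hs0, hst⟩ := hs
        set z : X := T s x with hz
        have hzT : z ∈ genDom T := hT.orbit_mem_genDom hDed hoc hx hs0
        have hzS : z ∈ genDom S := hsub hzT
        have hφ : Tendsto (fun h : ℝ => h⁻¹ • (T h z - S h z)) (𝓝[>] (0:ℝ)) (𝓝 0) := by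
          have h1 := (hB z hzT).sub (hA z hzS)
          rw [hagree z hzT, sub_self] at h1
          refine Tendsto.congr (fun h => ?_) h1
          rw [← smul_sub]
          congr 1
          abel
        obtain ⟨η, L, hη, hL, hbd⟩ := FR_bound hS hT hs0 hst x
        rw [hasDerivWithinAt_iff_tendsto_slope, Set.Ici_sdiff_left]
        have hmap : Tendsto (fun y : ℝ => y - s) (𝓝[>] s) (𝓝[>] (0:ℝ)) := by
          rw [tendsto_nhdsWithin_iff]
          constructor
          · have h1 : Tendsto (fun y : ℝ => y - s) (𝓝 s) (𝓝 (s - s)) :=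
              ((continuous_id.sub continuous_const).tendsto s)
            rw [sub_self] at h1
            exact h1.mono_left nhdsWithin_le_nhds
          · filter_upwards [self_mem_nhdsWithin] with y hy
            exact sub_pos.mpr (show s < y from hy)
        have hg : Tendsto (fun y : ℝ => L * ‖(y - s)⁻¹ • (T (y-s) z - S (y-s) z)‖)
            (𝓝[>] s) (𝓝 0) := by
          have h1 := hφ.comp hmap
          simpa using (tendsto_zero_iff_norm_tendsto_zero.mp h1).const_mul L
        have hev : ∀ᶠ y in 𝓝[>] s,
            ‖slope F s y‖ ≤ L * ‖(y - s)⁻¹ • (T (y-s) z - S (y-s) z)‖ := by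
          have h1 : Ioc s (s + η) ∈ 𝓝[>] s := Ioc_mem_nhdsGT_of_mem ⟨le_refl s, by linarith⟩
          filter_upwards [h1] with y hy
          have hys : s < y := hy.1
          have hpos : (0:ℝ) < y - s := by linarith
          have hbd' := hbd y (le_of_lt hys) hy.2
          have hslope : slope F s y = (y - s)⁻¹ • (F y - F s) := by
            rw [slope, vsub_eq_sub]
          rw [hslope, norm_smul, Real.norm_eq_abs, abs_of_pos (inv_pos.mpr hpos)]
          calc (y-s)⁻¹ * ‖F y - F s‖ ≤ (y-s)⁻¹ * (L * ‖T (y-s) z - S (y-s) z‖) :=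
                mul_le_mul_of_nonneg_left hbd' (le_of_lt (inv_pos.mpr hpos))
            _ = L * ((y-s)⁻¹ * ‖T (y-s) z - S (y-s) z‖) := by ring
            _ = L * ‖(y - s)⁻¹ • (T (y-s) z - S (y-s) z)‖ := by
                rw [norm_smul, Real.norm_eq_abs, abs_of_pos (inv_pos.mpr hpos)]
        exact squeeze_zero_norm' hev hg
      have hle := norm_image_sub_le_of_norm_deriv_right_le_segment (C := 0) hcont hderiv
          (fun s _ => by simp) t (right_mem_Icc.mpr (le_of_lt ht0))
      have hFt : F t = T t x := by
        simp only [hF, sub_self, hSid]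
      have hF0 : F 0 = S t x := by
        simp only [hF, sub_zero, hTid]
      have hEq : F t = F 0 := by
        have h0 : ‖F t - F 0‖ ≤ 0 := by simpa using hle
        rw [← sub_eq_zero]
        exact norm_le_zero_iff.mp h0
      rw [← hF0, ← hFt]
      exact hEq.symm
    intro x
    have hcS : Continuous (S t) := hS.cont (le_of_lt ht0)
    have hcT : Continuous (T t) := hT.cont (le_of_lt ht0)
    have hfun : S t = T t := Continuous.ext_on hdense hcS hcT key
    rw [hfun]
end
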